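/- arXiv:2203.10801 — 5 statements merged into one kernel-verified Lean document; each statement's English description precedes it below -/
import Mathlib

section
/- Let G be a finite group and D ⊆ G a set of involutions of G that is stable under conjugation by G, generates G, and satisfies that the order of d*e is at most 3 for all d, e ∈ D (i.e., (G,D) is a 3-transposition group). Let S = {p*q : p, q ∈ D, p ≠ q, p*q = q*p}. Then every element of S has order 2, and for all s, t ∈ S the order of s*t is at most 6 (so the subgroup generated by S, together with S, is a 6-transposition group). -/
namespace CertAux

variable {G : Type*} [Group G]

def eval (f : ℕ → G) (w : List ℕ) : G := (w.map f).prod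

def step (rule : List ℕ × List ℕ) (k : ℕ) (w : List ℕ) : Option (List ℕ) :=
  if (w.drop k).take rule.1.length = rule.1 then
    some (w.take k ++ rule.2 ++ w.drop (k + rule.1.length))
  else none

theorem eval_append (f : ℕ → G) (a b : List ℕ) :
    eval f (a ++ b) = eval f a * eval f b := by
  simp [eval]

theorem eval_step {f : ℕ → G} {rule : List ℕ × List ℕ}
    (hr : eval f rule.1 = eval f rule.2) {k : ℕ} {w w' : List ℕ}
    (h : step rule k w = some w') : eval f w = eval f w' := by
  unfold step at h
  split at h
  · rename_i hc
    injection h with h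
    subst h
    have hw : w = w.take k ++ rule.1 ++ w.drop (k + rule.1.length) := by
      conv_lhs => rw [← List.take_append_drop k w]
      rw [← hc]
      rw [← List.take_append_drop rule.1.length (w.drop k), hc]
      simp [List.drop_drop, Nat.add_comm]
    conv_lhs => rw [hw]
    rw [eval_append, eval_append, eval_append, eval_append, hr]
  · exact absurd h (by simp)

def run (rules : List (List ℕ × List ℕ)) : List (ℕ × ℕ) → List ℕ → Option (List ℕ)
  | [], w => some w
  | (i, k) :: c, w =>
    match rules[i]? with
    | none => none
    | some rule =>
      match step rule k w with
      | none => none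
      | some w' => run rules c w'

theorem eval_run {f : ℕ → G} {rules : List (List ℕ × List ℕ)}
    (hrules : ∀ r ∈ rules, eval f r.1 = eval f r.2) :
    ∀ (cert : List (ℕ × ℕ)) (w w' : List ℕ), run rules cert w = some w' →
      eval f w = eval f w'
  | [], w, w', h => by
    simp only [run] at h
    injection h with h
    rw [h]
  | (i, k) :: c, w, w', h => by
    simp only [run] at h
    cases hg : rules[i]? with
    | none => rw [hg] at h; exact absurd h (by simp)
    | some rule =>
      rw [hg] at h
      dsimp only at h
      cases hs : step rule k w with
      | none => rw [hs] at h; exact absurd h (by simp)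
      | some w1 =>
        rw [hs] at h
        dsimp only at h
        exact (eval_step (hrules rule (List.mem_of_getElem? hg)) hs).trans
          (eval_run hrules c w1 w' h)

theorem eval_nil (f : ℕ → G) : eval f [] = 1 := rfl

theorem eval_eq_one {f : ℕ → G} {rules : List (List ℕ × List ℕ)}
    (hrules : ∀ r ∈ rules, eval f r.1 = eval f r.2)
    (cert : List (ℕ × ℕ)) (w : List ℕ)
    (h : run rules cert w = some []) : eval f w = 1 :=
  (eval_run hrules cert w [] h).trans (eval_nil f)

theorem eval_reverse_mul {f : ℕ → G} {w : List ℕ}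
    (hsq : ∀ i ∈ w, f i * f i = 1) : eval f w.reverse * eval f w = 1 := by
  induction w with
  | nil => simp [eval]
  | cons i t ih =>
    have hi := hsq i (by simp)
    have ih' := ih (fun j hj => hsq j (by simp [hj]))
    rw [List.reverse_cons, eval_append]
    show eval f t.reverse * eval f [i] * eval f (i :: t) = 1
    have h2 : eval f (i :: t) = f i * eval f t := by simp [eval]
    rw [h2]
    have h1 : eval f [i] = f i := by simp [eval]
    rw [h1, mul_assoc, ← mul_assoc (f i), hi, one_mul, ih']

theorem eval_eq {f : ℕ → G} {rules : List (List ℕ × List ℕ)}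
    (hrules : ∀ r ∈ rules, eval f r.1 = eval f r.2)
    (cert : List (ℕ × ℕ)) (w1 w2 : List ℕ)
    (hsq : ∀ i ∈ w2, f i * f i = 1)
    (h : run rules cert (w1 ++ w2.reverse) = some []) : eval f w1 = eval f w2 := by
  have h1 : eval f w1 * eval f w2.reverse = 1 := by
    rw [← eval_append]; exact eval_eq_one hrules cert _ h
  have h2 : eval f w2.reverse * eval f w2 = 1 := eval_reverse_mul hsq
  calc eval f w1 = eval f w1 * (eval f w2.reverse * eval f w2) := by rw [h2, mul_one]
    _ = (eval f w1 * eval f w2.reverse) * eval f w2 := by rw [mul_assoc]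
    _ = eval f w2 := by rw [h1, one_mul]

theorem tri {G : Type*} [Group G] [Finite G] {a b : G} (ha : a * a = 1) (hb : b * b = 1)
    (h : orderOf (a * b) ≤ 3) : a = b ∨ a * b = b * a ∨ a * b * a = b * a * b := by
  have hpos : 0 < orderOf (a * b) := orderOf_pos _
  have hia : a⁻¹ = a := inv_eq_of_mul_eq_one_right ha
  have hib : b⁻¹ = b := inv_eq_of_mul_eq_one_right hb
  obtain h1 | h2 | h3 : orderOf (a*b) = 1 ∨ orderOf (a*b) = 2 ∨ orderOf (a*b) = 3 := by omega
  · left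
    have hab : a * b = 1 := orderOf_eq_one_iff.mp h1
    have h2 : a⁻¹ = b := inv_eq_of_mul_eq_one_right hab
    rw [← hia]; exact h2
  · right; left
    have h2' : (a*b) * (a*b) = 1 := by
      have := pow_orderOf_eq_one (a*b); rw [h2, pow_two] at this; exact this
    have hx : (a*b)⁻¹ = a*b := inv_eq_of_mul_eq_one_right h2'
    calc a*b = (a*b)⁻¹ := hx.symm
      _ = b⁻¹ * a⁻¹ := mul_inv_rev _ _
      _ = b * a := by rw [hia, hib]
  · right; right
    have h3' : (a*b) * (a*b) * (a*b) = 1 := by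
      have := pow_orderOf_eq_one (a*b)
      rw [h3] at this
      rw [show (3:ℕ) = 2 + 1 from rfl, pow_succ, pow_two] at this
      exact this
    have key : (a*b*a) * (b*a*b) = 1 := by
      have h := h3'
      simp only [mul_assoc] at h ⊢
      exact h
    have hk : (a*b*a)⁻¹ = b*a*b := inv_eq_of_mul_eq_one_right key
    rw [mul_inv_rev, mul_inv_rev, hia, hib] at hk
    rw [mul_assoc]
    exact hk


theorem case2222 {G : Type*} [Group G] (p q r u : G)
    (s0 : p*p = 1) (s1 : q*q = 1) (s2 : r*r = 1) (s3 : u*u = 1)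
    (hpq : p*q = q*p) (hru : r*u = u*r)
    (c1 : p*r = r*p) (c2 : p*u = u*p) (c3 : q*r = r*q) (c4 : q*u = u*q) :
    ((p*q)*(r*u))^2 = 1 := by
  have key := eval_eq_one (f := (fun i => match i with | 0 => p | 1 => q | 2 => r | _ => u))
    (rules := [([0, 0], []), ([1, 1], []), ([2, 2], []), ([3, 3], []), ([0, 1], [1, 0]), ([1, 0], [0, 1]), ([2, 3], [3, 2]), ([3, 2], [2, 3]), ([0, 2], [2, 0]), ([2, 0], [0, 2]), ([0, 3], [3, 0]), ([3, 0], [0, 3]), ([1, 2], [2, 1]), ([2, 1], [1, 2]), ([1, 3], [3, 1]), ([3, 1], [1, 3])])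
    (by
      intro rr hrr
      fin_cases hrr <;>
        simp only [eval, List.map_cons, List.map_nil, List.prod_cons, List.prod_nil, mul_one, ← mul_assoc] <;>
        first
          | assumption
          | (apply Eq.symm; assumption))
    [(4, 0), (8, 1), (10, 2), (0, 3), (6, 1), (12, 3), (2, 2), (14, 0), (1, 1), (3, 0)]
    [0, 1, 2, 3, 0, 1, 2, 3]
    (by decide)
  have conv1 : ((p*q)*(r*u))^2 = eval (fun i => match i with | 0 => p | 1 => q | 2 => r | _ => u) [0, 1, 2, 3, 0, 1, 2, 3] := by
    simp only [eval, List.map_cons, List.map_nil, List.prod_cons, List.prod_nil, mul_one, pow_succ, pow_zero, one_mul, mul_assoc]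
  rw [conv1]; exact key


theorem case2223 {G : Type*} [Group G] (p q r u : G)
    (s0 : p*p = 1) (s1 : q*q = 1) (s2 : r*r = 1) (s3 : u*u = 1)
    (hpq : p*q = q*p) (hru : r*u = u*r)
    (c1 : p*r = r*p) (c2 : p*u = u*p) (c3 : q*r = r*q) (c4 : q*u*q = u*q*u) :
    ((p*q)*(r*u))^6 = 1 := by
  have key := eval_eq_one (f := (fun i => match i with | 0 => p | 1 => q | 2 => r | _ => u))
    (rules := [([0, 0], []), ([1, 1], []), ([2, 2], []), ([3, 3], []), ([0, 1], [1, 0]), ([1, 0], [0, 1]), ([2, 3], [3, 2]), ([3, 2], [2, 3]), ([0, 2], [2, 0]), ([2, 0], [0, 2]), ([0, 3], [3, 0]), ([3, 0], [0, 3]), ([1, 2], [2, 1]), ([2, 1], [1, 2]), ([1, 3, 1], [3, 1, 3]), ([3, 1, 3], [1, 3, 1])])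
    (by
      intro rr hrr
      fin_cases hrr <;>
        simp only [eval, List.map_cons, List.map_nil, List.prod_cons, List.prod_nil, mul_one, ← mul_assoc] <;>
        first
          | assumption
          | (apply Eq.symm; assumption))
    [(4, 0), (8, 1), (10, 2), (0, 3), (6, 1), (12, 3), (2, 2), (14, 0), (3, 2), (4, 2), (1, 1), (6, 2), (10, 1), (3, 0), (8, 0), (0, 1), (12, 1), (2, 0), (4, 2), (8, 3), (10, 4), (0, 5), (6, 3), (12, 5), (2, 4), (14, 0), (3, 2), (1, 1), (3, 0)]
    [0, 1, 2, 3, 0, 1, 2, 3, 0, 1, 2, 3, 0, 1, 2, 3, 0, 1, 2, 3, 0, 1, 2, 3]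
    (by decide)
  have conv1 : ((p*q)*(r*u))^6 = eval (fun i => match i with | 0 => p | 1 => q | 2 => r | _ => u) [0, 1, 2, 3, 0, 1, 2, 3, 0, 1, 2, 3, 0, 1, 2, 3, 0, 1, 2, 3, 0, 1, 2, 3] := by
    simp only [eval, List.map_cons, List.map_nil, List.prod_cons, List.prod_nil, mul_one, pow_succ, pow_zero, one_mul, mul_assoc]
  rw [conv1]; exact key


theorem case2232 {G : Type*} [Group G] (p q r u : G)
    (s0 : p*p = 1) (s1 : q*q = 1) (s2 : r*r = 1) (s3 : u*u = 1)
    (hpq : p*q = q*p) (hru : r*u = u*r)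
    (c1 : p*r = r*p) (c2 : p*u = u*p) (c3 : q*r*q = r*q*r) (c4 : q*u = u*q) :
    ((p*q)*(r*u))^6 = 1 := by
  have key := eval_eq_one (f := (fun i => match i with | 0 => p | 1 => q | 2 => r | _ => u))
    (rules := [([0, 0], []), ([1, 1], []), ([2, 2], []), ([3, 3], []), ([0, 1], [1, 0]), ([1, 0], [0, 1]), ([2, 3], [3, 2]), ([3, 2], [2, 3]), ([0, 2], [2, 0]), ([2, 0], [0, 2]), ([0, 3], [3, 0]), ([3, 0], [0, 3]), ([1, 3], [3, 1]), ([3, 1], [1, 3]), ([1, 2, 1], [2, 1, 2]), ([2, 1, 2], [1, 2, 1])])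
    (by
      intro rr hrr
      fin_cases hrr <;>
        simp only [eval, List.map_cons, List.map_nil, List.prod_cons, List.prod_nil, mul_one, ← mul_assoc] <;>
        first
          | assumption
          | (apply Eq.symm; assumption))
    [(4, 0), (8, 1), (10, 2), (0, 3), (6, 4), (12, 3), (3, 2), (14, 0), (2, 2), (4, 2), (1, 1), (8, 1), (2, 0), (10, 0), (0, 1), (6, 2), (12, 1), (3, 0), (4, 2), (8, 3), (10, 4), (0, 5), (14, 0), (2, 2), (12, 1), (1, 2), (6, 0), (2, 1), (3, 0)]
    [0, 1, 2, 3, 0, 1, 2, 3, 0, 1, 2, 3, 0, 1, 2, 3, 0, 1, 2, 3, 0, 1, 2, 3]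
    (by decide)
  have conv1 : ((p*q)*(r*u))^6 = eval (fun i => match i with | 0 => p | 1 => q | 2 => r | _ => u) [0, 1, 2, 3, 0, 1, 2, 3, 0, 1, 2, 3, 0, 1, 2, 3, 0, 1, 2, 3, 0, 1, 2, 3] := by
    simp only [eval, List.map_cons, List.map_nil, List.prod_cons, List.prod_nil, mul_one, pow_succ, pow_zero, one_mul, mul_assoc]
  rw [conv1]; exact key


theorem case2233 {G : Type*} [Group G] (p q r u : G)
    (s0 : p*p = 1) (s1 : q*q = 1) (s2 : r*r = 1) (s3 : u*u = 1)
    (hpq : p*q = q*p) (hru : r*u = u*r)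
    (c1 : p*r = r*p) (c2 : p*u = u*p) (c3 : q*r*q = r*q*r) (c4 : q*u*q = u*q*u) :
    ((p*q)*(r*u))^4 = 1 := by
  have key := eval_eq_one (f := (fun i => match i with | 0 => p | 1 => q | 2 => r | _ => u))
    (rules := [([0, 0], []), ([1, 1], []), ([2, 2], []), ([3, 3], []), ([0, 1], [1, 0]), ([1, 0], [0, 1]), ([2, 3], [3, 2]), ([3, 2], [2, 3]), ([0, 2], [2, 0]), ([2, 0], [0, 2]), ([0, 3], [3, 0]), ([3, 0], [0, 3]), ([1, 2, 1], [2, 1, 2]), ([2, 1, 2], [1, 2, 1]), ([1, 3, 1], [3, 1, 3]), ([3, 1, 3], [1, 3, 1])])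
    (by
      intro rr hrr
      fin_cases hrr <;>
        simp only [eval, List.map_cons, List.map_nil, List.prod_cons, List.prod_nil, mul_one, ← mul_assoc] <;>
        first
          | assumption
          | (apply Eq.symm; assumption))
    [(4, 0), (8, 1), (10, 2), (0, 3), (4, 6), (8, 7), (10, 8), (0, 9), (6, 4), (13, 5), (14, 3), (3, 2), (6, 8), (14, 5), (3, 7), (6, 4), (3, 3), (12, 0), (2, 2), (1, 1), (2, 0)]
    [0, 1, 2, 3, 0, 1, 2, 3, 0, 1, 2, 3, 0, 1, 2, 3]
    (by decide)
  have conv1 : ((p*q)*(r*u))^4 = eval (fun i => match i with | 0 => p | 1 => q | 2 => r | _ => u) [0, 1, 2, 3, 0, 1, 2, 3, 0, 1, 2, 3, 0, 1, 2, 3] := by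
    simp only [eval, List.map_cons, List.map_nil, List.prod_cons, List.prod_nil, mul_one, pow_succ, pow_zero, one_mul, mul_assoc]
  rw [conv1]; exact key


theorem case2322 {G : Type*} [Group G] (p q r u : G)
    (s0 : p*p = 1) (s1 : q*q = 1) (s2 : r*r = 1) (s3 : u*u = 1)
    (hpq : p*q = q*p) (hru : r*u = u*r)
    (c1 : p*r = r*p) (c2 : p*u*p = u*p*u) (c3 : q*r = r*q) (c4 : q*u = u*q) :
    ((p*q)*(r*u))^6 = 1 := by
  have key := eval_eq_one (f := (fun i => match i with | 0 => p | 1 => q | 2 => r | _ => u))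
    (rules := [([0, 0], []), ([1, 1], []), ([2, 2], []), ([3, 3], []), ([0, 1], [1, 0]), ([1, 0], [0, 1]), ([2, 3], [3, 2]), ([3, 2], [2, 3]), ([0, 2], [2, 0]), ([2, 0], [0, 2]), ([1, 2], [2, 1]), ([2, 1], [1, 2]), ([1, 3], [3, 1]), ([3, 1], [1, 3]), ([0, 3, 0], [3, 0, 3]), ([3, 0, 3], [0, 3, 0])])
    (by
      intro rr hrr
      fin_cases hrr <;>
        simp only [eval, List.map_cons, List.map_nil, List.prod_cons, List.prod_nil, mul_one, ← mul_assoc] <;>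
        first
          | assumption
          | (apply Eq.symm; assumption))
    [(4, 4), (10, 1), (12, 2), (1, 3), (6, 1), (8, 3), (2, 2), (14, 0), (3, 2), (0, 1), (6, 2), (12, 1), (3, 0), (4, 2), (10, 0), (1, 1), (8, 1), (2, 0), (4, 6), (10, 3), (12, 4), (1, 5), (6, 3), (8, 5), (2, 4), (14, 0), (3, 2), (0, 1), (3, 0)]
    [0, 1, 2, 3, 0, 1, 2, 3, 0, 1, 2, 3, 0, 1, 2, 3, 0, 1, 2, 3, 0, 1, 2, 3]
    (by decide)
  have conv1 : ((p*q)*(r*u))^6 = eval (fun i => match i with | 0 => p | 1 => q | 2 => r | _ => u) [0, 1, 2, 3, 0, 1, 2, 3, 0, 1, 2, 3, 0, 1, 2, 3, 0, 1, 2, 3, 0, 1, 2, 3] := by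
    simp only [eval, List.map_cons, List.map_nil, List.prod_cons, List.prod_nil, mul_one, pow_succ, pow_zero, one_mul, mul_assoc]
  rw [conv1]; exact key


theorem case2323 {G : Type*} [Group G] (p q r u : G)
    (s0 : p*p = 1) (s1 : q*q = 1) (s2 : r*r = 1) (s3 : u*u = 1)
    (hpq : p*q = q*p) (hru : r*u = u*r)
    (c1 : p*r = r*p) (c2 : p*u*p = u*p*u) (c3 : q*r = r*q) (c4 : q*u*q = u*q*u) :
    ((p*q)*(r*u))^4 = 1 := by
  have key := eval_eq_one (f := (fun i => match i with | 0 => p | 1 => q | 2 => r | _ => u))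
    (rules := [([0, 0], []), ([1, 1], []), ([2, 2], []), ([3, 3], []), ([0, 1], [1, 0]), ([1, 0], [0, 1]), ([2, 3], [3, 2]), ([3, 2], [2, 3]), ([0, 2], [2, 0]), ([2, 0], [0, 2]), ([1, 2], [2, 1]), ([2, 1], [1, 2]), ([0, 3, 0], [3, 0, 3]), ([3, 0, 3], [0, 3, 0]), ([1, 3, 1], [3, 1, 3]), ([3, 1, 3], [1, 3, 1])])
    (by
      intro rr hrr
      fin_cases hrr <;>
        simp only [eval, List.map_cons, List.map_nil, List.prod_cons, List.prod_nil, mul_one, ← mul_assoc] <;>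
        first
          | assumption
          | (apply Eq.symm; assumption))
    [(6, 2), (9, 3), (10, 5), (2, 4), (4, 3), (12, 4), (14, 1), (3, 3), (5, 2), (6, 6), (14, 3), (3, 5), (12, 0), (3, 2), (4, 1), (8, 2), (0, 3), (10, 1), (1, 2), (2, 1), (3, 0)]
    [0, 1, 2, 3, 0, 1, 2, 3, 0, 1, 2, 3, 0, 1, 2, 3]
    (by decide)
  have conv1 : ((p*q)*(r*u))^4 = eval (fun i => match i with | 0 => p | 1 => q | 2 => r | _ => u) [0, 1, 2, 3, 0, 1, 2, 3, 0, 1, 2, 3, 0, 1, 2, 3] := by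
    simp only [eval, List.map_cons, List.map_nil, List.prod_cons, List.prod_nil, mul_one, pow_succ, pow_zero, one_mul, mul_assoc]
  rw [conv1]; exact key


theorem case2332 {G : Type*} [Group G] (p q r u : G)
    (s0 : p*p = 1) (s1 : q*q = 1) (s2 : r*r = 1) (s3 : u*u = 1)
    (hpq : p*q = q*p) (hru : r*u = u*r)
    (c1 : p*r = r*p) (c2 : p*u*p = u*p*u) (c3 : q*r*q = r*q*r) (c4 : q*u = u*q) :
    ((p*q)*(r*u))^3 = 1 := by
  have key := eval_eq_one (f := (fun i => match i with | 0 => p | 1 => q | 2 => r | _ => u))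
    (rules := [([0, 0], []), ([1, 1], []), ([2, 2], []), ([3, 3], []), ([0, 1], [1, 0]), ([1, 0], [0, 1]), ([2, 3], [3, 2]), ([3, 2], [2, 3]), ([0, 2], [2, 0]), ([2, 0], [0, 2]), ([1, 3], [3, 1]), ([3, 1], [1, 3]), ([0, 3, 0], [3, 0, 3]), ([3, 0, 3], [0, 3, 0]), ([1, 2, 1], [2, 1, 2]), ([2, 1, 2], [1, 2, 1])])
    (by
      intro rr hrr
      fin_cases hrr <;>
        simp only [eval, List.map_cons, List.map_nil, List.prod_cons, List.prod_nil, mul_one, ← mul_assoc] <;>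
        first
          | assumption
          | (apply Eq.symm; assumption))
    [(4, 0), (6, 6), (8, 1), (10, 5), (12, 2), (3, 4), (4, 3), (8, 4), (0, 5), (14, 3), (2, 5), (6, 1), (2, 2), (10, 0), (1, 1), (3, 0)]
    [0, 1, 2, 3, 0, 1, 2, 3, 0, 1, 2, 3]
    (by decide)
  have conv1 : ((p*q)*(r*u))^3 = eval (fun i => match i with | 0 => p | 1 => q | 2 => r | _ => u) [0, 1, 2, 3, 0, 1, 2, 3, 0, 1, 2, 3] := by
    simp only [eval, List.map_cons, List.map_nil, List.prod_cons, List.prod_nil, mul_one, pow_succ, pow_zero, one_mul, mul_assoc]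
  rw [conv1]; exact key


theorem case2333 {G : Type*} [Group G] (p q r u : G)
    (s0 : p*p = 1) (s1 : q*q = 1) (s2 : r*r = 1) (s3 : u*u = 1)
    (hpq : p*q = q*p) (hru : r*u = u*r)
    (c1 : p*r = r*p) (c2 : p*u*p = u*p*u) (c3 : q*r*q = r*q*r) (c4 : q*u*q = u*q*u) :
    ((p*q)*(r*u))^5 = 1 := by
  have key := eval_eq_one (f := (fun i => match i with | 0 => p | 1 => q | 2 => r | _ => u))
    (rules := [([0, 0], []), ([1, 1], []), ([2, 2], []), ([3, 3], []), ([0, 1], [1, 0]), ([1, 0], [0, 1]), ([2, 3], [3, 2]), ([3, 2], [2, 3]), ([0, 2], [2, 0]), ([2, 0], [0, 2]), ([0, 3, 0], [3, 0, 3]), ([3, 0, 3], [0, 3, 0]), ([1, 2, 1], [2, 1, 2]), ([2, 1, 2], [1, 2, 1]), ([1, 3, 1], [3, 1, 3]), ([3, 1, 3], [1, 3, 1])])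
    (by
      intro rr hrr
      fin_cases hrr <;>
        simp only [eval, List.map_cons, List.map_nil, List.prod_cons, List.prod_nil, mul_one, ← mul_assoc] <;>
        first
          | assumption
          | (apply Eq.symm; assumption))
    [(4, 0), (4, 8), (6, 6), (8, 1), (8, 9), (10, 2), (13, 7), (14, 5), (3, 4), (4, 10), (5, 7), (6, 12), (9, 13), (10, 11), (14, 8), (3, 10), (5, 9), (7, 5), (10, 7), (3, 6), (4, 3), (8, 4), (0, 5), (13, 8), (14, 6), (3, 5), (6, 1), (12, 3), (2, 2), (6, 3), (2, 4), (14, 0), (3, 2), (1, 1), (3, 0)]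
    [0, 1, 2, 3, 0, 1, 2, 3, 0, 1, 2, 3, 0, 1, 2, 3, 0, 1, 2, 3]
    (by decide)
  have conv1 : ((p*q)*(r*u))^5 = eval (fun i => match i with | 0 => p | 1 => q | 2 => r | _ => u) [0, 1, 2, 3, 0, 1, 2, 3, 0, 1, 2, 3, 0, 1, 2, 3, 0, 1, 2, 3] := by
    simp only [eval, List.map_cons, List.map_nil, List.prod_cons, List.prod_nil, mul_one, pow_succ, pow_zero, one_mul, mul_assoc]
  rw [conv1]; exact key


theorem case3222 {G : Type*} [Group G] (p q r u : G)
    (s0 : p*p = 1) (s1 : q*q = 1) (s2 : r*r = 1) (s3 : u*u = 1)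
    (hpq : p*q = q*p) (hru : r*u = u*r)
    (c1 : p*r*p = r*p*r) (c2 : p*u = u*p) (c3 : q*r = r*q) (c4 : q*u = u*q) :
    ((p*q)*(r*u))^6 = 1 := by
  have key := eval_eq_one (f := (fun i => match i with | 0 => p | 1 => q | 2 => r | _ => u))
    (rules := [([0, 0], []), ([1, 1], []), ([2, 2], []), ([3, 3], []), ([0, 1], [1, 0]), ([1, 0], [0, 1]), ([2, 3], [3, 2]), ([3, 2], [2, 3]), ([0, 3], [3, 0]), ([3, 0], [0, 3]), ([1, 2], [2, 1]), ([2, 1], [1, 2]), ([1, 3], [3, 1]), ([3, 1], [1, 3]), ([0, 2, 0], [2, 0, 2]), ([2, 0, 2], [0, 2, 0])])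
    (by
      intro rr hrr
      fin_cases hrr <;>
        simp only [eval, List.map_cons, List.map_nil, List.prod_cons, List.prod_nil, mul_one, ← mul_assoc] <;>
        first
          | assumption
          | (apply Eq.symm; assumption))
    [(4, 4), (10, 1), (12, 2), (1, 3), (6, 4), (8, 3), (3, 2), (14, 0), (2, 2), (0, 1), (10, 1), (2, 0), (4, 2), (12, 0), (1, 1), (6, 2), (8, 1), (3, 0), (10, 3), (14, 0), (2, 2), (4, 1), (8, 2), (0, 3), (12, 1), (1, 2), (6, 0), (2, 1), (3, 0)]
    [0, 1, 2, 3, 0, 1, 2, 3, 0, 1, 2, 3, 0, 1, 2, 3, 0, 1, 2, 3, 0, 1, 2, 3]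
    (by decide)
  have conv1 : ((p*q)*(r*u))^6 = eval (fun i => match i with | 0 => p | 1 => q | 2 => r | _ => u) [0, 1, 2, 3, 0, 1, 2, 3, 0, 1, 2, 3, 0, 1, 2, 3, 0, 1, 2, 3, 0, 1, 2, 3] := by
    simp only [eval, List.map_cons, List.map_nil, List.prod_cons, List.prod_nil, mul_one, pow_succ, pow_zero, one_mul, mul_assoc]
  rw [conv1]; exact key


theorem case3223 {G : Type*} [Group G] (p q r u : G)
    (s0 : p*p = 1) (s1 : q*q = 1) (s2 : r*r = 1) (s3 : u*u = 1)
    (hpq : p*q = q*p) (hru : r*u = u*r)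
    (c1 : p*r*p = r*p*r) (c2 : p*u = u*p) (c3 : q*r = r*q) (c4 : q*u*q = u*q*u) :
    ((p*q)*(r*u))^3 = 1 := by
  have key := eval_eq_one (f := (fun i => match i with | 0 => p | 1 => q | 2 => r | _ => u))
    (rules := [([0, 0], []), ([1, 1], []), ([2, 2], []), ([3, 3], []), ([0, 1], [1, 0]), ([1, 0], [0, 1]), ([2, 3], [3, 2]), ([3, 2], [2, 3]), ([0, 3], [3, 0]), ([3, 0], [0, 3]), ([1, 2], [2, 1]), ([2, 1], [1, 2]), ([0, 2, 0], [2, 0, 2]), ([2, 0, 2], [0, 2, 0]), ([1, 3, 1], [3, 1, 3]), ([3, 1, 3], [1, 3, 1])])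
    (by
      intro rr hrr
      fin_cases hrr <;>
        simp only [eval, List.map_cons, List.map_nil, List.prod_cons, List.prod_nil, mul_one, ← mul_assoc] <;>
        first
          | assumption
          | (apply Eq.symm; assumption))
    [(4, 0), (6, 2), (8, 1), (10, 5), (12, 2), (2, 4), (4, 3), (8, 4), (0, 5), (6, 6), (14, 3), (3, 5), (6, 2), (3, 1), (10, 0), (1, 1), (2, 0)]
    [0, 1, 2, 3, 0, 1, 2, 3, 0, 1, 2, 3]
    (by decide)
  have conv1 : ((p*q)*(r*u))^3 = eval (fun i => match i with | 0 => p | 1 => q | 2 => r | _ => u) [0, 1, 2, 3, 0, 1, 2, 3, 0, 1, 2, 3] := by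
    simp only [eval, List.map_cons, List.map_nil, List.prod_cons, List.prod_nil, mul_one, pow_succ, pow_zero, one_mul, mul_assoc]
  rw [conv1]; exact key


theorem case3232 {G : Type*} [Group G] (p q r u : G)
    (s0 : p*p = 1) (s1 : q*q = 1) (s2 : r*r = 1) (s3 : u*u = 1)
    (hpq : p*q = q*p) (hru : r*u = u*r)
    (c1 : p*r*p = r*p*r) (c2 : p*u = u*p) (c3 : q*r*q = r*q*r) (c4 : q*u = u*q) :
    ((p*q)*(r*u))^4 = 1 := by
  have key := eval_eq_one (f := (fun i => match i with | 0 => p | 1 => q | 2 => r | _ => u))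
    (rules := [([0, 0], []), ([1, 1], []), ([2, 2], []), ([3, 3], []), ([0, 1], [1, 0]), ([1, 0], [0, 1]), ([2, 3], [3, 2]), ([3, 2], [2, 3]), ([0, 3], [3, 0]), ([3, 0], [0, 3]), ([1, 3], [3, 1]), ([3, 1], [1, 3]), ([0, 2, 0], [2, 0, 2]), ([2, 0, 2], [0, 2, 0]), ([1, 2, 1], [2, 1, 2]), ([2, 1, 2], [1, 2, 1])])
    (by
      intro rr hrr
      fin_cases hrr <;>
        simp only [eval, List.map_cons, List.map_nil, List.prod_cons, List.prod_nil, mul_one, ← mul_assoc] <;>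
        first
          | assumption
          | (apply Eq.symm; assumption))
    [(6, 6), (9, 3), (10, 5), (3, 4), (4, 3), (12, 4), (14, 1), (2, 3), (5, 2), (14, 3), (2, 5), (12, 0), (2, 2), (4, 1), (8, 2), (0, 3), (10, 1), (1, 2), (6, 0), (2, 1), (3, 0)]
    [0, 1, 2, 3, 0, 1, 2, 3, 0, 1, 2, 3, 0, 1, 2, 3]
    (by decide)
  have conv1 : ((p*q)*(r*u))^4 = eval (fun i => match i with | 0 => p | 1 => q | 2 => r | _ => u) [0, 1, 2, 3, 0, 1, 2, 3, 0, 1, 2, 3, 0, 1, 2, 3] := by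
    simp only [eval, List.map_cons, List.map_nil, List.prod_cons, List.prod_nil, mul_one, pow_succ, pow_zero, one_mul, mul_assoc]
  rw [conv1]; exact key


theorem case3233 {G : Type*} [Group G] (p q r u : G)
    (s0 : p*p = 1) (s1 : q*q = 1) (s2 : r*r = 1) (s3 : u*u = 1)
    (hpq : p*q = q*p) (hru : r*u = u*r)
    (c1 : p*r*p = r*p*r) (c2 : p*u = u*p) (c3 : q*r*q = r*q*r) (c4 : q*u*q = u*q*u) :
    ((p*q)*(r*u))^5 = 1 := by
  have key := eval_eq_one (f := (fun i => match i with | 0 => p | 1 => q | 2 => r | _ => u))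
    (rules := [([0, 0], []), ([1, 1], []), ([2, 2], []), ([3, 3], []), ([0, 1], [1, 0]), ([1, 0], [0, 1]), ([2, 3], [3, 2]), ([3, 2], [2, 3]), ([0, 3], [3, 0]), ([3, 0], [0, 3]), ([0, 2, 0], [2, 0, 2]), ([2, 0, 2], [0, 2, 0]), ([1, 2, 1], [2, 1, 2]), ([2, 1, 2], [1, 2, 1]), ([1, 3, 1], [3, 1, 3]), ([3, 1, 3], [1, 3, 1])])
    (by
      intro rr hrr
      fin_cases hrr <;>
        simp only [eval, List.map_cons, List.map_nil, List.prod_cons, List.prod_nil, mul_one, ← mul_assoc] <;>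
        first
          | assumption
          | (apply Eq.symm; assumption))
    [(4, 8), (6, 6), (9, 3), (9, 11), (10, 9), (13, 7), (14, 5), (3, 4), (4, 3), (5, 7), (7, 5), (9, 6), (10, 4), (12, 1), (2, 3), (6, 7), (13, 8), (14, 6), (3, 5), (4, 10), (7, 6), (14, 8), (3, 7), (12, 5), (2, 4), (4, 3), (1, 2), (10, 0), (2, 2), (8, 1), (0, 2), (6, 0), (2, 1), (3, 0)]
    [0, 1, 2, 3, 0, 1, 2, 3, 0, 1, 2, 3, 0, 1, 2, 3, 0, 1, 2, 3]
    (by decide)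
  have conv1 : ((p*q)*(r*u))^5 = eval (fun i => match i with | 0 => p | 1 => q | 2 => r | _ => u) [0, 1, 2, 3, 0, 1, 2, 3, 0, 1, 2, 3, 0, 1, 2, 3, 0, 1, 2, 3] := by
    simp only [eval, List.map_cons, List.map_nil, List.prod_cons, List.prod_nil, mul_one, pow_succ, pow_zero, one_mul, mul_assoc]
  rw [conv1]; exact key


theorem case3322 {G : Type*} [Group G] (p q r u : G)
    (s0 : p*p = 1) (s1 : q*q = 1) (s2 : r*r = 1) (s3 : u*u = 1)
    (hpq : p*q = q*p) (hru : r*u = u*r)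
    (c1 : p*r*p = r*p*r) (c2 : p*u*p = u*p*u) (c3 : q*r = r*q) (c4 : q*u = u*q) :
    ((p*q)*(r*u))^4 = 1 := by
  have key := eval_eq_one (f := (fun i => match i with | 0 => p | 1 => q | 2 => r | _ => u))
    (rules := [([0, 0], []), ([1, 1], []), ([2, 2], []), ([3, 3], []), ([0, 1], [1, 0]), ([1, 0], [0, 1]), ([2, 3], [3, 2]), ([3, 2], [2, 3]), ([1, 2], [2, 1]), ([2, 1], [1, 2]), ([1, 3], [3, 1]), ([3, 1], [1, 3]), ([0, 2, 0], [2, 0, 2]), ([2, 0, 2], [0, 2, 0]), ([0, 3, 0], [3, 0, 3]), ([3, 0, 3], [0, 3, 0])])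
    (by
      intro rr hrr
      fin_cases hrr <;>
        simp only [eval, List.map_cons, List.map_nil, List.prod_cons, List.prod_nil, mul_one, ← mul_assoc] <;>
        first
          | assumption
          | (apply Eq.symm; assumption))
    [(4, 4), (8, 1), (10, 2), (1, 3), (4, 10), (8, 7), (10, 8), (1, 9), (6, 4), (13, 5), (14, 3), (3, 2), (6, 8), (14, 5), (3, 7), (6, 4), (3, 3), (12, 0), (2, 2), (0, 1), (2, 0)]
    [0, 1, 2, 3, 0, 1, 2, 3, 0, 1, 2, 3, 0, 1, 2, 3]
    (by decide)
  have conv1 : ((p*q)*(r*u))^4 = eval (fun i => match i with | 0 => p | 1 => q | 2 => r | _ => u) [0, 1, 2, 3, 0, 1, 2, 3, 0, 1, 2, 3, 0, 1, 2, 3] := by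
    simp only [eval, List.map_cons, List.map_nil, List.prod_cons, List.prod_nil, mul_one, pow_succ, pow_zero, one_mul, mul_assoc]
  rw [conv1]; exact key


theorem case3323 {G : Type*} [Group G] (p q r u : G)
    (s0 : p*p = 1) (s1 : q*q = 1) (s2 : r*r = 1) (s3 : u*u = 1)
    (hpq : p*q = q*p) (hru : r*u = u*r)
    (c1 : p*r*p = r*p*r) (c2 : p*u*p = u*p*u) (c3 : q*r = r*q) (c4 : q*u*q = u*q*u) :
    ((p*q)*(r*u))^5 = 1 := by
  have key := eval_eq_one (f := (fun i => match i with | 0 => p | 1 => q | 2 => r | _ => u))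
    (rules := [([0, 0], []), ([1, 1], []), ([2, 2], []), ([3, 3], []), ([0, 1], [1, 0]), ([1, 0], [0, 1]), ([2, 3], [3, 2]), ([3, 2], [2, 3]), ([1, 2], [2, 1]), ([2, 1], [1, 2]), ([0, 2, 0], [2, 0, 2]), ([2, 0, 2], [0, 2, 0]), ([0, 3, 0], [3, 0, 3]), ([3, 0, 3], [0, 3, 0]), ([1, 3, 1], [3, 1, 3]), ([3, 1, 3], [1, 3, 1])])
    (by
      intro rr hrr
      fin_cases hrr <;>
        simp only [eval, List.map_cons, List.map_nil, List.prod_cons, List.prod_nil, mul_one, ← mul_assoc] <;>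
        first
          | assumption
          | (apply Eq.symm; assumption))
    [(4, 4), (6, 6), (8, 1), (8, 9), (11, 7), (12, 5), (14, 2), (3, 4), (4, 7), (4, 14), (6, 12), (9, 13), (12, 8), (14, 11), (3, 10), (4, 9), (7, 5), (14, 7), (3, 6), (5, 3), (8, 4), (1, 5), (11, 8), (12, 6), (3, 5), (6, 1), (10, 3), (2, 2), (6, 3), (2, 4), (12, 0), (3, 2), (0, 1), (3, 0)]
    [0, 1, 2, 3, 0, 1, 2, 3, 0, 1, 2, 3, 0, 1, 2, 3, 0, 1, 2, 3]
    (by decide)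
  have conv1 : ((p*q)*(r*u))^5 = eval (fun i => match i with | 0 => p | 1 => q | 2 => r | _ => u) [0, 1, 2, 3, 0, 1, 2, 3, 0, 1, 2, 3, 0, 1, 2, 3, 0, 1, 2, 3] := by
    simp only [eval, List.map_cons, List.map_nil, List.prod_cons, List.prod_nil, mul_one, pow_succ, pow_zero, one_mul, mul_assoc]
  rw [conv1]; exact key


theorem case3332 {G : Type*} [Group G] (p q r u : G)
    (s0 : p*p = 1) (s1 : q*q = 1) (s2 : r*r = 1) (s3 : u*u = 1)
    (hpq : p*q = q*p) (hru : r*u = u*r)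
    (c1 : p*r*p = r*p*r) (c2 : p*u*p = u*p*u) (c3 : q*r*q = r*q*r) (c4 : q*u = u*q) :
    ((p*q)*(r*u))^5 = 1 := by
  have key := eval_eq_one (f := (fun i => match i with | 0 => p | 1 => q | 2 => r | _ => u))
    (rules := [([0, 0], []), ([1, 1], []), ([2, 2], []), ([3, 3], []), ([0, 1], [1, 0]), ([1, 0], [0, 1]), ([2, 3], [3, 2]), ([3, 2], [2, 3]), ([1, 3], [3, 1]), ([3, 1], [1, 3]), ([0, 2, 0], [2, 0, 2]), ([2, 0, 2], [0, 2, 0]), ([0, 3, 0], [3, 0, 3]), ([3, 0, 3], [0, 3, 0]), ([1, 2, 1], [2, 1, 2]), ([2, 1, 2], [1, 2, 1])])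
    (by
      intro rr hrr
      fin_cases hrr <;>
        simp only [eval, List.map_cons, List.map_nil, List.prod_cons, List.prod_nil, mul_one, ← mul_assoc] <;>
        first
          | assumption
          | (apply Eq.symm; assumption))
    [(4, 4), (4, 12), (6, 6), (9, 3), (9, 11), (13, 4), (10, 6), (14, 9), (2, 8), (6, 9), (6, 16), (8, 15), (11, 10), (12, 12), (3, 14), (4, 7), (6, 11), (12, 8), (3, 10), (7, 5), (8, 7), (3, 6), (5, 3), (10, 7), (14, 4), (2, 6), (4, 0), (10, 1), (2, 3), (4, 2), (0, 3), (14, 0), (2, 2), (1, 1), (2, 0)]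
    [0, 1, 2, 3, 0, 1, 2, 3, 0, 1, 2, 3, 0, 1, 2, 3, 0, 1, 2, 3]
    (by decide)
  have conv1 : ((p*q)*(r*u))^5 = eval (fun i => match i with | 0 => p | 1 => q | 2 => r | _ => u) [0, 1, 2, 3, 0, 1, 2, 3, 0, 1, 2, 3, 0, 1, 2, 3, 0, 1, 2, 3] := by
    simp only [eval, List.map_cons, List.map_nil, List.prod_cons, List.prod_nil, mul_one, pow_succ, pow_zero, one_mul, mul_assoc]
  rw [conv1]; exact key


theorem case3333 {G : Type*} [Group G] [Finite G] {D : Set G}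
    (hconj : ∀ d ∈ D, ∀ g : G, g * d * g⁻¹ ∈ D)
    (h3 : ∀ d ∈ D, ∀ e ∈ D, orderOf (d * e) ≤ 3)
    {p q r u : G} (hp : p ∈ D) (hq : q ∈ D) (hr : r ∈ D) (hu : u ∈ D)
    (s0 : p*p = 1) (s1 : q*q = 1) (s2 : r*r = 1) (s3 : u*u = 1)
    (hpq : p*q = q*p) (hru : r*u = u*r)
    (c1 : p*r*p = r*p*r) (c2 : p*u*p = u*p*u) (c3 : q*r*q = r*q*r) (c4 : q*u*q = u*q*u) :
    orderOf ((p*q)*(r*u)) ≤ 6 := by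
  have hqi : q⁻¹ = q := inv_eq_of_mul_eq_one_right s1
  have hri : r⁻¹ = r := inv_eq_of_mul_eq_one_right s2
  have hui : u⁻¹ = u := inv_eq_of_mul_eq_one_right s3
  have hrules : ∀ rr ∈ ([([0, 0], []), ([1, 1], []), ([2, 2], []), ([3, 3], []), ([0, 1], [1, 0]), ([1, 0], [0, 1]), ([2, 3], [3, 2]), ([3, 2], [2, 3]), ([0, 2, 0], [2, 0, 2]), ([2, 0, 2], [0, 2, 0]), ([0, 3, 0], [3, 0, 3]), ([3, 0, 3], [0, 3, 0]), ([1, 2, 1], [2, 1, 2]), ([2, 1, 2], [1, 2, 1]), ([1, 3, 1], [3, 1, 3]), ([3, 1, 3], [1, 3, 1])] : List (List ℕ × List ℕ)),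
      eval (fun i => match i with | 0 => p | 1 => q | 2 => r | _ => u) rr.1 = eval (fun i => match i with | 0 => p | 1 => q | 2 => r | _ => u) rr.2 := by
    intro rr hrr
    fin_cases hrr <;>
      simp only [eval, List.map_cons, List.map_nil, List.prod_cons, List.prod_nil, mul_one, ← mul_assoc] <;>
      first
        | assumption
        | (apply Eq.symm; assumption)
  have e1' := eval_eq hrules [(2, 15), (1, 14), (3, 7), (2, 6), (1, 5), (4, 10), (1, 9), (8, 4), (2, 6), (6, 2), (2, 3), (10, 3), (3, 2), (3, 3), (4, 0), (0, 1), (1, 0)] [0, 1, 2, 3, 0, 1, 2, 3] [1, 3, 1, 0, 1, 3, 1, 2, 2, 1, 2, 0, 2, 1, 2, 3]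
    (by intro i hi; fin_cases hi <;> first | exact s0 | exact s1 | exact s2 | exact s3)
    (by decide)
  have e2' := eval_eq hrules [(2, 7), (1, 6), (4, 3), (1, 2), (4, 14), (1, 13), (6, 8), (2, 9), (14, 7), (3, 9), (5, 8), (14, 9), (3, 11), (12, 10), (2, 12), (5, 11), (12, 12), (2, 14), (9, 4), (10, 2), (3, 1), (10, 4), (3, 6), (6, 3), (3, 2), (8, 1), (2, 3), (0, 2), (2, 1), (1, 0)] [1, 3, 1, 0, 1, 3, 1, 2, 2, 1, 2, 0, 2, 1, 2, 3] [2, 1, 2, 0, 2, 1, 2, 3, 1, 3, 1, 0, 1, 3, 1, 2]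
    (by intro i hi; fin_cases hi <;> first | exact s0 | exact s1 | exact s2 | exact s3)
    (by decide)
  have e3' := eval_eq hrules [(1, 5), (3, 4), (1, 3), (6, 13), (2, 14), (4, 3), (12, 1), (2, 0), (12, 4), (6, 6), (12, 8), (2, 7), (6, 8), (14, 5), (3, 7), (6, 4), (3, 3), (12, 4), (2, 3), (2, 4), (4, 2), (0, 3), (12, 0), (2, 2), (1, 1), (2, 0)] [2, 1, 2, 1, 3, 1, 1, 3, 1, 0, 1, 3, 1, 2, 1, 3, 1, 2, 1, 2] [2, 1, 2, 0, 2, 1, 2, 3]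
    (by intro i hi; fin_cases hi <;> first | exact s0 | exact s1 | exact s2 | exact s3)
    (by decide)
  have e1 : ((p*q)*(r*u))^2 = ((q*u*q) * p * (q*u*q)⁻¹ * r) * ((r*q*r) * p * (r*q*r)⁻¹ * u) := by
    simp only [eval, List.map_cons, List.map_nil, List.prod_cons, List.prod_nil, mul_one] at e1'
    simp only [mul_inv_rev, hqi, hri, hui, pow_succ, pow_zero, one_mul, mul_assoc]
    exact e1'
  have e2 : ((q*u*q) * p * (q*u*q)⁻¹ * r) * ((r*q*r) * p * (r*q*r)⁻¹ * u)
      = ((r*q*r) * p * (r*q*r)⁻¹ * u) * ((q*u*q) * p * (q*u*q)⁻¹ * r) := by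
    simp only [eval, List.map_cons, List.map_nil, List.prod_cons, List.prod_nil, mul_one] at e2'
    simp only [mul_inv_rev, hqi, hri, hui, mul_assoc]
    exact e2'
  have e3 : ((r*q*r) * p * (r*q*r)⁻¹ * u)
      = ((r*q*r) * (q*u*q)) * ((q*u*q) * p * (q*u*q)⁻¹ * r) * ((r*q*r) * (q*u*q))⁻¹ := by
    simp only [eval, List.map_cons, List.map_nil, List.prod_cons, List.prod_nil, mul_one] at e3'
    simp only [mul_inv_rev, hqi, hri, hui, mul_assoc]
    exact e3'.symm
  have hAD : ((q*u*q) * p * (q*u*q)⁻¹) ∈ D := hconj p hp (q*u*q)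
  have hA3 : orderOf ((q*u*q) * p * (q*u*q)⁻¹ * r) ≤ 3 := h3 _ hAD r hr
  have hApos : 0 < orderOf ((q*u*q) * p * (q*u*q)⁻¹ * r) := orderOf_pos _
  have hAm : ((q*u*q) * p * (q*u*q)⁻¹ * r) ^ orderOf ((q*u*q) * p * (q*u*q)⁻¹ * r) = 1 :=
    pow_orderOf_eq_one _
  have hBm : ((r*q*r) * p * (r*q*r)⁻¹ * u) ^ orderOf ((q*u*q) * p * (q*u*q)⁻¹ * r) = 1 := by
    rw [e3, conj_pow, hAm]; group
  have hcomm : Commute ((q*u*q) * p * (q*u*q)⁻¹ * r) ((r*q*r) * p * (r*q*r)⁻¹ * u) := e2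
  have hABm : (((q*u*q) * p * (q*u*q)⁻¹ * r) * ((r*q*r) * p * (r*q*r)⁻¹ * u))
      ^ orderOf ((q*u*q) * p * (q*u*q)⁻¹ * r) = 1 := by
    rw [hcomm.mul_pow, hAm, hBm, one_mul]
  have hpow : ((p*q)*(r*u)) ^ (2 * orderOf ((q*u*q) * p * (q*u*q)⁻¹ * r)) = 1 := by
    rw [pow_mul, e1, hABm]
  have hdvd := orderOf_dvd_of_pow_eq_one hpow
  have hle := Nat.le_of_dvd (by omega) hdvd
  omega

end CertAux


/-- If `(G, D)` is a finite 3-transposition group and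
`S = {p * q : p, q ∈ D, p ≠ q, p * q = q * p}`, then every element of `S` is an
involution and the order of the product of any two elements of `S` is at most `6`
(so `(⟨S⟩, S)` is a 6-transposition group). -/
theorem three_transposition_gives_six_transposition
    (G : Type*) [Group G] [Finite G] (D : Set G)
    (hinv : ∀ d ∈ D, orderOf d = 2)
    (hconj : ∀ d ∈ D, ∀ g : G, g * d * g⁻¹ ∈ D)
    (hgen : Subgroup.closure D = ⊤)
    (h3 : ∀ d ∈ D, ∀ e ∈ D, orderOf (d * e) ≤ 3)
    (S : Set G)
    (hS : S = {x : G | ∃ p ∈ D, ∃ q ∈ D, p ≠ q ∧ p * q = q * p ∧ x = p * q}) :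
    (∀ s ∈ S, orderOf s = 2) ∧ (∀ s ∈ S, ∀ t ∈ S, orderOf (s * t) ≤ 6) := by
  subst hS
  have hsq : ∀ d ∈ D, d * d = 1 := by
    intro d hd
    have h := pow_orderOf_eq_one d
    rw [hinv d hd, pow_two] at h
    exact h
  constructor
  · rintro s ⟨p, hp, q, hq, hne, hcomm, rfl⟩
    have hp2 := hsq p hp
    have hq2 := hsq q hq
    have hpi : p⁻¹ = p := inv_eq_of_mul_eq_one_right hp2
    haveI : Fact (Nat.Prime 2) := ⟨Nat.prime_two⟩
    have hswap : ∀ x : G, q*(p*x) = p*(q*x) := by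
      intro x; rw [← mul_assoc, ← hcomm, mul_assoc]
    refine orderOf_eq_prime ?_ ?_
    · rw [pow_two, mul_assoc, hswap, hq2, mul_one]
      exact hp2
    · intro h1
      have h2 : p⁻¹ = q := inv_eq_of_mul_eq_one_right h1
      rw [hpi] at h2
      exact hne h2
  · rintro s ⟨p, hp, q, hq, hne1, hcpq, rfl⟩ t ⟨r, hr, u, hu, hne2, hcru, rfl⟩
    have hp2 := hsq p hp
    have hq2 := hsq q hq
    have hr2 := hsq r hr
    have hu2 := hsq u hu
    have hpi : p⁻¹ = p := inv_eq_of_mul_eq_one_right hp2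
    have hqi : q⁻¹ = q := inv_eq_of_mul_eq_one_right hq2
    have hcancelp : ∀ x : G, p*(p*x) = x := by
      intro x; rw [← mul_assoc, hp2, one_mul]
    have finish : ∀ n : ℕ, 0 < n → n ≤ 6 → ((p*q)*(r*u))^n = 1 →
        orderOf ((p*q)*(r*u)) ≤ 6 := by
      intro n hn h6 hpow
      exact le_trans (Nat.le_of_dvd hn (orderOf_dvd_of_pow_eq_one hpow)) h6
    by_cases hqr : q = r
    · have e : (p*q)*(r*u) = p*u := by
        rw [← hqr, mul_assoc, ← mul_assoc q q, hq2, one_mul]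
      rw [e]
      exact le_trans (h3 p hp u hu) (by norm_num)
    by_cases hqu : q = u
    · have e : (p*q)*(r*u) = p*(q*r*q⁻¹) := by
        rw [← hqu, hqi]
        simp only [mul_assoc]
      rw [e]
      exact le_trans (h3 p hp _ (hconj r hr q)) (by norm_num)
    by_cases hpr : p = r
    · have e : (p*q)*(r*u) = (p*q*p⁻¹)*u := by
        rw [← hpr, hpi]
        simp only [mul_assoc]
      rw [e]
      exact le_trans (h3 _ (hconj q hq p) u hu) (by norm_num)
    by_cases hpu : p = u
    · have e : (p*q)*(r*u) = (p*q*p⁻¹)*(p*r*p⁻¹) := by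
        rw [← hpu, hpi]
        simp only [mul_assoc]
        rw [hcancelp]
      rw [e]
      exact le_trans (h3 _ (hconj q hq p) _ (hconj r hr p)) (by norm_num)
    rcases (CertAux.tri hp2 hr2 (h3 p hp r hr)).resolve_left hpr with c1 | c1 <;>
      rcases (CertAux.tri hp2 hu2 (h3 p hp u hu)).resolve_left hpu with c2 | c2 <;>
      rcases (CertAux.tri hq2 hr2 (h3 q hq r hr)).resolve_left hqr with c3 | c3 <;>
      rcases (CertAux.tri hq2 hu2 (h3 q hq u hu)).resolve_left hqu with c4 | c4
    · exact finish 2 (by norm_num) (by norm_num) (CertAux.case2222 p q r u hp2 hq2 hr2 hu2 hcpq hcru c1 c2 c3 c4)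
    · exact finish 6 (by norm_num) (by norm_num) (CertAux.case2223 p q r u hp2 hq2 hr2 hu2 hcpq hcru c1 c2 c3 c4)
    · exact finish 6 (by norm_num) (by norm_num) (CertAux.case2232 p q r u hp2 hq2 hr2 hu2 hcpq hcru c1 c2 c3 c4)
    · exact finish 4 (by norm_num) (by norm_num) (CertAux.case2233 p q r u hp2 hq2 hr2 hu2 hcpq hcru c1 c2 c3 c4)
    · exact finish 6 (by norm_num) (by norm_num) (CertAux.case2322 p q r u hp2 hq2 hr2 hu2 hcpq hcru c1 c2 c3 c4)
    · exact finish 4 (by norm_num) (by norm_num) (CertAux.case2323 p q r u hp2 hq2 hr2 hu2 hcpq hcru c1 c2 c3 c4)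
    · exact finish 3 (by norm_num) (by norm_num) (CertAux.case2332 p q r u hp2 hq2 hr2 hu2 hcpq hcru c1 c2 c3 c4)
    · exact finish 5 (by norm_num) (by norm_num) (CertAux.case2333 p q r u hp2 hq2 hr2 hu2 hcpq hcru c1 c2 c3 c4)
    · exact finish 6 (by norm_num) (by norm_num) (CertAux.case3222 p q r u hp2 hq2 hr2 hu2 hcpq hcru c1 c2 c3 c4)
    · exact finish 3 (by norm_num) (by norm_num) (CertAux.case3223 p q r u hp2 hq2 hr2 hu2 hcpq hcru c1 c2 c3 c4)
    · exact finish 4 (by norm_num) (by norm_num) (CertAux.case3232 p q r u hp2 hq2 hr2 hu2 hcpq hcru c1 c2 c3 c4)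
    · exact finish 5 (by norm_num) (by norm_num) (CertAux.case3233 p q r u hp2 hq2 hr2 hu2 hcpq hcru c1 c2 c3 c4)
    · exact finish 4 (by norm_num) (by norm_num) (CertAux.case3322 p q r u hp2 hq2 hr2 hu2 hcpq hcru c1 c2 c3 c4)
    · exact finish 5 (by norm_num) (by norm_num) (CertAux.case3323 p q r u hp2 hq2 hr2 hu2 hcpq hcru c1 c2 c3 c4)
    · exact finish 5 (by norm_num) (by norm_num) (CertAux.case3332 p q r u hp2 hq2 hr2 hu2 hcpq hcru c1 c2 c3 c4)
    · exact CertAux.case3333 hconj h3 hp hq hr hu hp2 hq2 hr2 hu2 hcpq hcru c1 c2 c3 c4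
end

section
/- Let G be a group, let m ≥ 1, and let d_1, …, d_m ∈ G be pairwise distinct elements, each of order exactly 2, such that d_i * d_{i+1} has order exactly 3 for all 1 ≤ i ≤ m−1, and d_i * d_j = d_j * d_i whenever |i − j| ≥ 2. Then there exists a group isomorphism from the symmetric group S_{m+1} onto the subgroup of G generated by {d_1, …, d_m} which sends the adjacent transposition (i, i+1) to d_i for each 1 ≤ i ≤ m. -/
open Equiv Function

namespace ChainAux


/-- Three distinct points: (swap a b * swap b c)^3 = 1. -/
lemma swap_cube {α : Type*} [DecidableEq α] {a b c : α} (hab : a ≠ b) (hbc : b ≠ c)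
    (hac : a ≠ c) : (Equiv.swap a b * Equiv.swap b c) ^ 3 = 1 := by
  set f := Equiv.swap a b * Equiv.swap b c with hf
  have h : ∀ x, f x = if x = c then a else if x = b then c else if x = a then b else x := by
    intro x
    simp only [hf, Equiv.Perm.mul_apply]
    by_cases h1 : x = c
    · subst h1
      rw [Equiv.swap_apply_right, Equiv.swap_apply_right, if_pos rfl]
    · by_cases h2 : x = b
      · subst h2
        rw [Equiv.swap_apply_left, Equiv.swap_apply_of_ne_of_ne hac.symm hbc.symm,
          if_neg h1, if_pos rfl]
        
      · by_cases h3 : x = a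
        · subst h3
          rw [Equiv.swap_apply_of_ne_of_ne hab hac, Equiv.swap_apply_left, if_neg h1,
            if_neg h2, if_pos rfl]
        · rw [Equiv.swap_apply_of_ne_of_ne h2 h1, Equiv.swap_apply_of_ne_of_ne h3 h2,
            if_neg h1, if_neg h2, if_neg h3]
  ext x
  have h3 : ∀ x, (f ^ 3) x = f (f (f x)) := by
    intro x; simp [pow_succ, Equiv.Perm.mul_apply]
  rw [h3, Equiv.Perm.one_apply, h x]
  by_cases h1 : x = c
  · subst h1; rw [if_pos rfl, h a, if_neg hac, if_neg hab, if_pos rfl, h b, if_neg hbc,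
      if_pos rfl]
  · by_cases h2 : x = b
    · subst h2; rw [if_neg h1, if_pos rfl, h c, if_pos rfl, h a, if_neg hac, if_neg hab,
        if_pos rfl]
    · by_cases h3' : x = a
      · subst h3'; rw [if_neg h1, if_neg h2, if_pos rfl, h b, if_neg hbc, if_pos rfl,
          h c, if_pos rfl]
      · rw [if_neg h1, if_neg h2, if_neg h3', h x, if_neg h1, if_neg h2, if_neg h3',
          h x, if_neg h1, if_neg h2, if_neg h3']

/-- Disjoint swaps commute. -/
lemma swap_comm_swap {α : Type*} [DecidableEq α] {a b c d : α} (hac : a ≠ c) (had : a ≠ d)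
    (hbc : b ≠ c) (hbd : b ≠ d) :
    Equiv.swap a b * Equiv.swap c d = Equiv.swap c d * Equiv.swap a b := by
  have : (Equiv.swap a b).Disjoint (Equiv.swap c d) := by
    intro x
    by_cases h1 : x = a
    · subst h1; right; exact Equiv.swap_apply_of_ne_of_ne hac had
    · by_cases h2 : x = b
      · subst h2; right; exact Equiv.swap_apply_of_ne_of_ne hbc hbd
      · left; exact Equiv.swap_apply_of_ne_of_ne h1 h2
  exact this.commute



abbrev CM (m : ℕ) : CoxeterMatrix (Fin m) := CoxeterMatrix.Aₙ m
abbrev W (m : ℕ) : Type := (CM m).Group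
noncomputable abbrev cs (m : ℕ) : CoxeterSystem (CM m) (W m) :=
  CoxeterMatrix.toCoxeterSystem (CM m)

lemma CM_apply (m : ℕ) (i j : Fin m) :
    CM m i j = if i = j then 1 else if (j : ℕ) + 1 = i ∨ (i : ℕ) + 1 = j then 3 else 2 := rfl

/-- General liftability criterion for the Aₙ Coxeter matrix. -/
lemma isLiftable {m : ℕ} {G : Type*} [Group G] (f : Fin m → G)
    (sq : ∀ i, f i * f i = 1)
    (adj : ∀ i j : Fin m, (i : ℕ) + 1 = (j : ℕ) → (f i * f j) ^ 3 = 1)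
    (comm : ∀ i j : Fin m, (i : ℕ) + 2 ≤ (j : ℕ) → f i * f j = f j * f i) :
    CoxeterMatrix.IsLiftable (CM m) f := by
  have comm' : ∀ i j : Fin m, (i : ℕ) + 2 ≤ (j : ℕ) ∨ (j : ℕ) + 2 ≤ (i : ℕ) →
      f i * f j = f j * f i := by
    intro i j h
    rcases h with h | h
    · exact comm i j h
    · exact (comm j i h).symm
  intro i j
  rw [CM_apply]
  by_cases hij : i = j
  · subst hij; rw [if_pos rfl, pow_one, sq]
  · rw [if_neg hij]
    by_cases hadj : (j : ℕ) + 1 = i ∨ (i : ℕ) + 1 = j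
    · rw [if_pos hadj]
      rcases hadj with h | h
      · have h3 := adj j i h
        have key : (f i * f j) ^ 3 = (f j)⁻¹ * (f j * f i) ^ 3 * f j := by
          simp only [show (3:ℕ) = 2 + 1 from rfl, pow_succ, pow_zero, one_mul]
          group
        rw [key, h3, mul_one, inv_mul_cancel]
      · exact adj i j h
    · rw [if_neg hadj]
      have h := comm' i j (by
        push_neg at hadj
        have : (i : ℕ) ≠ j := fun h => hij (Fin.ext h)
        omega)
      rw [pow_two]
      calc (f i * f j) * (f i * f j) = f i * (f j * f i) * f j := by group
        _ = f i * (f i * f j) * f j := by rw [← h]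
        _ = (f i * f i) * (f j * f j) := by group
        _ = 1 := by rw [sq, sq, one_mul]

lemma simple_comm (m : ℕ) (i j : Fin m) (h : (i : ℕ) + 2 ≤ j ∨ (j : ℕ) + 2 ≤ i) :
    (cs m).simple i * (cs m).simple j = (cs m).simple j * (cs m).simple i := by
  have h1 := (cs m).simple_mul_simple_pow i j
  rw [CM_apply, if_neg (by rintro rfl; omega), if_neg (by omega), pow_two] at h1
  have h2 := eq_inv_of_mul_eq_one_left h1
  rw [mul_inv_rev, (cs m).inv_simple, (cs m).inv_simple] at h2
  exact h2

lemma simple_braid (m : ℕ) (i j : Fin m) (h : (i : ℕ) + 1 = j) :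
    (cs m).simple i * (cs m).simple j * (cs m).simple i =
      (cs m).simple j * (cs m).simple i * (cs m).simple j := by
  have h1 := (cs m).simple_mul_simple_pow i j
  rw [CM_apply, if_neg (by rintro rfl; omega), if_pos (by omega)] at h1
  have h1' : ((cs m).simple i * (cs m).simple j) * (((cs m).simple i * (cs m).simple j) *
      ((cs m).simple i * (cs m).simple j)) = 1 := by
    simpa [pow_succ, mul_assoc] using h1
  have h2 : (cs m).simple i * (cs m).simple j * (cs m).simple i =
      ((cs m).simple j * (cs m).simple i * (cs m).simple j)⁻¹ := by
    apply eq_inv_of_mul_eq_one_left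
    simpa [mul_assoc] using h1'
  rw [h2, mul_inv_rev, mul_inv_rev, (cs m).inv_simple, (cs m).inv_simple, mul_assoc]

/-- `sp m k`: the `k`-th simple reflection of `W m`, or `1` when out of range. -/
noncomputable def sp (m : ℕ) (k : ℕ) : W m :=
  if h : k < m then (cs m).simple ⟨k, h⟩ else 1

lemma sp_of_lt {m k : ℕ} (h : k < m) : sp m k = (cs m).simple ⟨k, h⟩ := dif_pos h

lemma sp_of_ge {m k : ℕ} (h : m ≤ k) : sp m k = 1 := dif_neg (by omega)

lemma sp_mul_self (m k : ℕ) : sp m k * sp m k = 1 := by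
  by_cases h : k < m
  · rw [sp_of_lt h]; exact (cs m).simple_mul_simple_self _
  · rw [sp_of_ge (by omega), one_mul]

lemma sp_comm (m : ℕ) {k l : ℕ} (h : k + 2 ≤ l) : sp m k * sp m l = sp m l * sp m k := by
  by_cases hl : l < m
  · rw [sp_of_lt hl, sp_of_lt (by omega : k < m)]
    exact simple_comm m _ _ (Or.inl (by simpa using h))
  · rw [sp_of_ge (show m ≤ l by omega), one_mul, mul_one]

lemma sp_braid (m : ℕ) {k : ℕ} (h : k + 1 < m) :
    sp m k * sp m (k + 1) * sp m k = sp m (k + 1) * sp m k * sp m (k + 1) := by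
  rw [sp_of_lt (by omega : k < m), sp_of_lt h]
  exact simple_braid m _ _ (by simp)

section Step

variable (m : ℕ)

/-- The canonical homomorphism `W m →* W (m+1)`. -/
noncomputable def step : W m →* W (m + 1) :=
  (cs m).lift ⟨fun i => (cs (m + 1)).simple i.castSucc, by
    apply isLiftable
    · intro i; exact (cs (m + 1)).simple_mul_simple_self _
    · intro i j hij
      have h1 := (cs (m + 1)).simple_mul_simple_pow i.castSucc j.castSucc
      rw [CM_apply, if_neg (by
          intro h'
          have := congrArg Fin.val h'
          simp at this
          omega),
        if_pos (by simp; omega)] at h1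
      exact h1
    · intro i j hij
      exact simple_comm (m + 1) _ _ (by simp; omega)⟩

/-- `H`: the image of `W m` in `W (m+1)`. -/
noncomputable def Hsub : Subgroup (W (m + 1)) := (step m).range

lemma sp_mem_Hsub {k : ℕ} (h : k < m ∨ m + 1 ≤ k) : sp (m + 1) k ∈ Hsub m := by
  rcases h with h | h
  · refine ⟨(cs m).simple ⟨k, h⟩, ?_⟩
    rw [step, CoxeterSystem.lift_apply_simple]
    rw [sp_of_lt (by omega : k < m + 1)]
    rfl
  · rw [sp_of_ge h]; exact one_mem _

/-- `tp m j = s_j s_{j+1} ⋯ s_m` in `W (m+1)`. -/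
noncomputable def tp (j : ℕ) : W (m + 1) :=
  (((List.finRange (m + 1)).drop j).map (cs (m + 1)).simple).prod

lemma tp_ge {j : ℕ} (h : m + 1 ≤ j) : tp m j = 1 := by
  rw [tp, List.drop_eq_nil_of_le (by simpa using h)]
  simp

lemma tp_succ (j : ℕ) : tp m j = sp (m + 1) j * tp m (j + 1) := by
  by_cases h : j < m + 1
  · have hlen : j < (List.finRange (m + 1)).length := by simpa using h
    have hget : (List.finRange (m + 1))[j] = (⟨j, h⟩ : Fin (m + 1)) := by ext; simp
    rw [tp, tp, List.drop_eq_getElem_cons hlen, List.map_cons, List.prod_cons, sp_of_lt h, hget]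
  · rw [tp_ge m (by omega), tp_ge m (by omega), sp_of_ge (show m + 1 ≤ j by omega), one_mul]

lemma sp_comm_tp {k j : ℕ} (h : k + 2 ≤ j) : sp (m + 1) k * tp m j = tp m j * sp (m + 1) k := by
  suffices H : ∀ fuel j, m + 1 ≤ j + fuel → k + 2 ≤ j →
      sp (m + 1) k * tp m j = tp m j * sp (m + 1) k by
    exact H (m + 1) j (by omega) h
  intro fuel
  induction fuel with
  | zero =>
    intro j hj _
    rw [tp_ge m (by omega), one_mul, mul_one]
  | succ fuel ih =>
    intro j hj hkj
    by_cases hjm : m + 1 ≤ j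
    · rw [tp_ge m hjm, one_mul, mul_one]
    · rw [tp_succ m j, ← mul_assoc, sp_comm (m + 1) hkj, mul_assoc,
        ih (j + 1) (by omega) (by omega), ← mul_assoc]

lemma sp_slide {i j : ℕ} (hi : i < m + 1) (hj : j < i) :
    sp (m + 1) i * tp m j = tp m j * sp (m + 1) (i - 1) := by
  suffices H : ∀ fuel j, i ≤ j + 1 + fuel → j < i →
      sp (m + 1) i * tp m j = tp m j * sp (m + 1) (i - 1) by
    exact H i j (by omega) hj
  intro fuel
  induction fuel with
  | zero =>
    intro j hj hji
    have hji' : j = i - 1 := by omega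
    subst hji'
    have hi1 : (i - 1) + 1 = i := by omega
    rw [tp_succ m (i - 1), tp_succ m ((i - 1) + 1), hi1, ← mul_assoc, ← mul_assoc,
      ← mul_assoc]
    have hbr : sp (m + 1) i * sp (m + 1) (i - 1) * sp (m + 1) i =
        sp (m + 1) (i - 1) * sp (m + 1) i * sp (m + 1) (i - 1) := by
      have := sp_braid (m + 1) (k := i - 1) (by omega)
      rw [hi1] at this
      exact this.symm
    rw [hbr, mul_assoc, mul_assoc, sp_comm_tp m (by omega : (i - 1) + 2 ≤ i + 1),
      ← mul_assoc, ← mul_assoc]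
  | succ fuel ih =>
    intro j hj hji
    by_cases hcase : j = i - 1
    · subst hcase
      exact ih (i - 1) (by omega) hji
    · rw [tp_succ m j, ← mul_assoc, ← sp_comm (m + 1) (by omega : j + 2 ≤ i), mul_assoc,
        ih (j + 1) (by omega) (by omega), ← mul_assoc]

lemma exists_decomp (w : W (m + 1)) : ∃ j ≤ m + 1, ∃ h ∈ Hsub m, w = tp m j * h := by
  apply (cs (m + 1)).simple_induction_left w
  · exact ⟨m + 1, le_refl _, 1, one_mem _, by rw [tp_ge m (le_refl _), one_mul]⟩
  · rintro w i ⟨j, hj, h, hH, rfl⟩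
    have hsi : (cs (m + 1)).simple i = sp (m + 1) (i : ℕ) := by
      rw [sp_of_lt i.isLt]
    rcases lt_trichotomy (i : ℕ) j with hlt | heq | hgt
    · by_cases hadj : (i : ℕ) + 1 = j
      · -- s_i * t_j = t_i
        refine ⟨(i : ℕ), by omega, h, hH, ?_⟩
        rw [hsi, ← mul_assoc, tp_succ m (i : ℕ), hadj]
      · -- commute
        refine ⟨j, hj, sp (m + 1) (i : ℕ) * h, mul_mem (sp_mem_Hsub m (by omega)) hH, ?_⟩
        rw [hsi, ← mul_assoc, sp_comm_tp m (by omega), mul_assoc]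
    · -- s_i * t_i = t_{i+1}
      refine ⟨j + 1, by omega, h, hH, ?_⟩
      rw [hsi, ← mul_assoc, tp_succ m j, ← mul_assoc, ← heq, sp_mul_self, one_mul]
    · -- slide
      refine ⟨j, hj, sp (m + 1) ((i : ℕ) - 1) * h,
        mul_mem (sp_mem_Hsub m (by left; omega)) hH, ?_⟩
      rw [hsi, ← mul_assoc, sp_slide m i.isLt hgt, mul_assoc]

end Step

lemma W_finite_card : ∀ m : ℕ, Finite (W m) ∧ Nat.card (W m) ≤ (m + 1).factorial := by
  intro m
  induction m with
  | zero =>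
    have h1 : ∀ x : W 0, x = 1 := by
      intro x
      apply (cs 0).simple_induction_left (p := fun w => w = 1) x rfl
      intro w i _
      exact absurd i.isLt (by omega)
    haveI : Subsingleton (W 0) := ⟨fun a b => (h1 a).trans (h1 b).symm⟩
    constructor
    · exact Finite.of_subsingleton
    · haveI : Unique (W 0) := ⟨⟨1⟩, h1⟩
      simp [Nat.card_unique]
  | succ m ih =>
    haveI : Finite (W m) := ih.1
    haveI hHfin : Finite (Hsub m) := by
      have : Set.Finite (Set.range (step m)) := Set.finite_range _
      exact this.to_subtype
    have hsurj : Surjective (fun p : Fin (m + 2) × (Hsub m) => tp m (p.1 : ℕ) * (p.2 : W (m + 1))) := by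
      intro w
      obtain ⟨j, hj, h, hH, rfl⟩ := exists_decomp m w
      exact ⟨(⟨j, by omega⟩, ⟨h, hH⟩), rfl⟩
    haveI : Finite (W (m + 1)) := Finite.of_surjective _ hsurj
    refine ⟨inferInstance, ?_⟩
    have h1 : Nat.card (W (m + 1)) ≤ Nat.card (Fin (m + 2) × (Hsub m)) :=
      Nat.card_le_card_of_surjective _ hsurj
    have h2 : Nat.card (Hsub m) ≤ Nat.card (W m) :=
      Nat.card_le_card_of_surjective _ (step m).rangeRestrict_surjective
    have hfin2 : Nat.card (Fin (m + 2)) = m + 2 := by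
      simp [Nat.card_eq_fintype_card]
    rw [Nat.card_prod, hfin2] at h1
    calc Nat.card (W (m + 1)) ≤ (m + 2) * Nat.card (Hsub m) := h1
      _ ≤ (m + 2) * (m + 1).factorial := Nat.mul_le_mul_left _ (le_trans h2 ih.2)
      _ = (m + 2).factorial := (Nat.factorial_succ _).symm


section PermSide

variable (m : ℕ)

lemma swap_liftable :
    CoxeterMatrix.IsLiftable (CM m) (fun i : Fin m => Equiv.swap i.castSucc i.succ) := by
  apply isLiftable
  · intro i; exact Equiv.swap_mul_self _ _
  · intro i j hij
    have hbc : i.succ = j.castSucc := by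
      ext; simp [hij]
    rw [hbc]
    exact swap_cube (by intro hcon; have := congrArg Fin.val hcon; simp at this; try omega) (by intro hcon; have := congrArg Fin.val hcon; simp at this; try omega) (by intro hcon; have := congrArg Fin.val hcon; simp at this; try omega)
  · intro i j hij
    exact swap_comm_swap (by intro hcon; have := congrArg Fin.val hcon; simp at this; try omega) (by intro hcon; have := congrArg Fin.val hcon; simp at this; try omega) (by intro hcon; have := congrArg Fin.val hcon; simp at this; try omega) (by intro hcon; have := congrArg Fin.val hcon; simp at this; try omega)

/-- The homomorphism `W m →* Perm (Fin (m+1))` sending simples to adjacent swaps. -/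
noncomputable def permHom : W m →* Equiv.Perm (Fin (m + 1)) :=
  (cs m).lift ⟨fun i : Fin m => Equiv.swap i.castSucc i.succ, swap_liftable m⟩

lemma permHom_simple (i : Fin m) :
    permHom m ((cs m).simple i) = Equiv.swap i.castSucc i.succ :=
  (cs m).lift_apply_simple (swap_liftable m) i

lemma swap_closure_top :
    Subgroup.closure (Set.range fun i : Fin m => Equiv.swap (i.castSucc) (i.succ)) =
      (⊤ : Subgroup (Equiv.Perm (Fin (m + 1)))) :=
  Subgroup.closure_eq_top_of_mclosure_eq_top (Equiv.Perm.mclosure_swap_castSucc_succ m)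

lemma permHom_surjective : Surjective (permHom m) := by
  have hsub : Set.range (fun i : Fin m => Equiv.swap i.castSucc i.succ) ⊆
      ((permHom m).range : Set (Equiv.Perm (Fin (m + 1)))) := by
    rintro x ⟨i, rfl⟩
    exact ⟨(cs m).simple i, permHom_simple m i⟩
  intro x
  have hx : x ∈ Subgroup.closure (Set.range fun i : Fin m => Equiv.swap i.castSucc i.succ) := by
    rw [swap_closure_top m]; trivial
  obtain ⟨y, hy⟩ := (Subgroup.closure_le (permHom m).range).mpr hsub hx
  exact ⟨y, hy⟩

lemma permHom_bijective : Bijective (permHom m) := by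
  haveI : Finite (W m) := (W_finite_card m).1
  apply (permHom_surjective m).bijective_of_nat_card_le
  have h1 : Nat.card (Equiv.Perm (Fin (m + 1))) = (m + 1).factorial := by
    rw [Nat.card_eq_fintype_card, Fintype.card_perm, Fintype.card_fin]
  rw [h1]
  exact (W_finite_card m).2

/-- The isomorphism `W m ≃* Perm (Fin (m+1))`. -/
noncomputable def permEquiv : W m ≃* Equiv.Perm (Fin (m + 1)) :=
  MulEquiv.ofBijective (permHom m) (permHom_bijective m)

lemma permEquiv_symm_swap (i : Fin m) :
    (permEquiv m).symm (Equiv.swap i.castSucc i.succ) = (cs m).simple i := by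
  rw [MulEquiv.symm_apply_eq]
  exact (permHom_simple m i).symm

end PermSide

section InjHelpers

lemma viaEmbedding_swap {α β : Type*} [DecidableEq α] [DecidableEq β] (ι : α ↪ β) (a b : α) :
    (Equiv.swap a b).viaEmbedding ι = Equiv.swap (ι a) (ι b) := by
  ext x
  by_cases hx : x ∈ Set.range ι
  · obtain ⟨y, rfl⟩ := hx
    rw [Equiv.Perm.viaEmbedding_apply]
    by_cases hy : y = a
    · subst hy; rw [Equiv.swap_apply_left, Equiv.swap_apply_left]
    · by_cases hy2 : y = b
      · subst hy2; rw [Equiv.swap_apply_right, Equiv.swap_apply_right]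
      · rw [Equiv.swap_apply_of_ne_of_ne hy hy2,
          Equiv.swap_apply_of_ne_of_ne (fun h => hy (ι.injective h))
            (fun h => hy2 (ι.injective h))]
  · rw [Equiv.Perm.viaEmbedding_apply_of_notMem _ _ _ hx,
      Equiv.swap_apply_of_ne_of_ne (by rintro rfl; exact hx ⟨a, rfl⟩)
        (by rintro rfl; exact hx ⟨b, rfl⟩)]

lemma exists_viaEmbedding_of_fix_zero {n : ℕ} (σ : Equiv.Perm (Fin (n + 1))) (h0 : σ 0 = 0) :
    ∃ τ : Equiv.Perm (Fin n), (Equiv.Perm.viaEmbeddingHom (Fin.succEmb n)) τ = σ := by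
  refine ⟨(Equiv.Perm.decomposeFin σ).2, ?_⟩
  have hσ : Equiv.Perm.decomposeFin.symm
      ((Equiv.Perm.decomposeFin σ).1, (Equiv.Perm.decomposeFin σ).2) = σ := by
    rw [show ((Equiv.Perm.decomposeFin σ).1, (Equiv.Perm.decomposeFin σ).2) =
      Equiv.Perm.decomposeFin σ from rfl, Equiv.symm_apply_apply]
  have hp : (Equiv.Perm.decomposeFin σ).1 = 0 := by
    have := Equiv.Perm.decomposeFin_symm_apply_zero (Equiv.Perm.decomposeFin σ).1
      (Equiv.Perm.decomposeFin σ).2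
    rw [hσ, h0] at this
    exact this.symm
  rw [hp] at hσ
  ext x
  rw [Equiv.Perm.viaEmbeddingHom_apply]
  refine Fin.cases ?_ ?_ x
  · rw [Equiv.Perm.viaEmbedding_apply_of_notMem _ _ _ (by
      rintro ⟨y, hy⟩
      exact (Fin.succ_ne_zero y) hy), h0]
  · intro y
    have h1 : (Fin.succEmb n) y = y.succ := rfl
    have h2 := (Equiv.Perm.decomposeFin σ).2.viaEmbedding_apply (Fin.succEmb n) y
    rw [h1] at h2
    rw [h2, ← hσ, Equiv.Perm.decomposeFin_symm_apply_succ, Equiv.swap_self]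
    rfl

lemma perm_fin_two (σ : Equiv.Perm (Fin 2)) : σ = 1 ∨ σ = Equiv.swap 0 1 := by
  revert σ
  decide

end InjHelpers

section KeyInj

lemma key_inj : ∀ (m : ℕ) {G : Type*} [Group G] (d : Fin (m + 1) → G),
    Function.Injective d →
    (∀ i, orderOf (d i) = 2) →
    (∀ i : Fin (m + 1), ∀ hi : (i : ℕ) + 1 < m + 1, orderOf (d i * d ⟨(i : ℕ) + 1, hi⟩) = 3) →
    (∀ i j : Fin (m + 1), (i : ℕ) + 2 ≤ (j : ℕ) → Commute (d i) (d j)) →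
    ∀ ψ : Equiv.Perm (Fin (m + 2)) →* G,
      (∀ i : Fin (m + 1), ψ (Equiv.swap i.castSucc i.succ) = d i) →
      Function.Injective ψ := by
  intro m
  induction m with
  | zero =>
    intro G _ d hinj hord h3 hcomm ψ hψ
    rw [injective_iff_map_eq_one]
    intro σ hσ
    rcases perm_fin_two σ with rfl | rfl
    · rfl
    · exfalso
      have h01 : Equiv.swap (0 : Fin 2) 1 =
          Equiv.swap ((0 : Fin 1).castSucc) ((0 : Fin 1).succ) := by decide
      rw [h01, hψ 0] at hσ
      have h2 := hord 0
      rw [hσ, orderOf_one] at h2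
      omega
  | succ m IH =>
    intro G _ d hinj hord h3 hcomm ψ hψ
    have hdsq : ∀ i, d i * d i = 1 := by
      intro i
      have := pow_orderOf_eq_one (d i)
      rwa [hord i, pow_two] at this
    have hdne : ∀ i, d i ≠ 1 := by
      intro i h
      have h2 := hord i
      rw [h, orderOf_one] at h2
      omega
    set ι : Fin (m + 2) ↪ Fin (m + 3) := Fin.succEmb (m + 2) with hι
    set ψ' : Equiv.Perm (Fin (m + 2)) →* G := ψ.comp (Equiv.Perm.viaEmbeddingHom ι)
      with hψ'def
    set d' : Fin (m + 1) → G := fun i => d i.succ with hd'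
    have hvs : ∀ a b : Fin (m + 2), (Equiv.Perm.viaEmbeddingHom ι) (Equiv.swap a b)
        = Equiv.swap a.succ b.succ := by
      intro a b
      rw [Equiv.Perm.viaEmbeddingHom_apply, viaEmbedding_swap]
      rfl
    have hψ's : ∀ i : Fin (m + 1), ψ' (Equiv.swap i.castSucc i.succ) = d' i := by
      intro i
      rw [hψ'def, MonoidHom.comp_apply, hvs]
      have e1 : (i.castSucc).succ = (i.succ).castSucc := Fin.succ_castSucc i
      rw [e1]
      exact hψ i.succ
    have hinjψ' : Function.Injective ψ' := by
      refine IH d' ?_ ?_ ?_ ?_ ψ' hψ's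
      · intro a b hab
        exact Fin.succ_injective _ (hinj hab)
      · intro i; exact hord i.succ
      · intro i hi
        have hi2 : ((i.succ : Fin (m + 2)) : ℕ) + 1 < m + 2 := by simp; omega
        have h2 := h3 i.succ hi2
        have he : (⟨((i.succ : Fin (m + 2)) : ℕ) + 1, hi2⟩ : Fin (m + 2))
            = ((⟨(i : ℕ) + 1, hi⟩ : Fin (m + 1)).succ) := by
          ext; simp
        rw [he] at h2
        exact h2
      · intro i j hij
        exact hcomm i.succ j.succ (by simp; omega)
    rw [injective_iff_map_eq_one]
    intro σ hσ
    by_contra hne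
    have fix0 : ∀ τ : Equiv.Perm (Fin (m + 3)), ψ τ = 1 → τ 0 = 0 → τ = 1 := by
      intro τ hτ ht0
      obtain ⟨τ', hτ'⟩ := exists_viaEmbedding_of_fix_zero τ ht0
      have hτ'1 : ψ' τ' = 1 := by rw [hψ'def, MonoidHom.comp_apply, hτ', hτ]
      have hτ1 : τ' = 1 := hinjψ' (by rw [hτ'1, map_one])
      rw [← hτ', hτ1, map_one]
    have h0 : σ 0 ≠ 0 := fun h => hne (fix0 σ hσ h)
    set p : Fin (m + 3) := σ 0 with hp
    have hp0 : p ≠ 0 := h0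
    set σ₁ : Equiv.Perm (Fin (m + 3)) := Equiv.swap p 1 * σ * Equiv.swap p 1 with hσ₁def
    have hσ₁ : ψ σ₁ = 1 := by
      rw [hσ₁def, map_mul, map_mul, hσ, mul_one, ← map_mul, Equiv.swap_mul_self, map_one]
    have hσ₁0 : σ₁ 0 = 1 := by
      rw [hσ₁def]
      simp only [Equiv.Perm.mul_apply]
      rw [Equiv.swap_apply_of_ne_of_ne (Ne.symm hp0)
        (by intro h; have := congrArg Fin.val h; simp at this), ← hp, Equiv.swap_apply_left]
    set ρ : Equiv.Perm (Fin (m + 3)) := Equiv.swap 0 1 * σ₁ with hρdef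
    have hρ0 : ρ 0 = 0 := by
      rw [hρdef]
      simp only [Equiv.Perm.mul_apply]
      rw [hσ₁0, Equiv.swap_apply_right]
    have hρψ : ψ ρ = d 0 := by
      have h01 : Equiv.swap (0 : Fin (m + 3)) 1 =
          Equiv.swap ((0 : Fin (m + 2)).castSucc) ((0 : Fin (m + 2)).succ) := by
        rw [show ((0 : Fin (m + 2)).castSucc) = (0 : Fin (m + 3)) from by ext; simp,
          show ((0 : Fin (m + 2)).succ) = (1 : Fin (m + 3)) from by ext; simp]
      rw [hρdef, map_mul, hσ₁, mul_one, h01, hψ 0]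
    obtain ⟨ρ', hρ'⟩ := exists_viaEmbedding_of_fix_zero ρ hρ0
    have hψρ' : ψ' ρ' = d 0 := by rw [hψ'def, MonoidHom.comp_apply, hρ', hρψ]
    have hρ'ne : ρ' ≠ 1 := by
      intro h
      rw [h, map_one] at hψρ'
      exact hdne 0 hψρ'.symm
    have hpair : ∀ i : Fin (m + 1), 1 ≤ (i : ℕ) →
        (ρ' i.castSucc = i.castSucc ∧ ρ' i.succ = i.succ) ∨
        (ρ' i.castSucc = i.succ ∧ ρ' i.succ = i.castSucc) := by
      intro i hi
      have hcm : Commute (d 0) (d' i) := hcomm 0 i.succ (by simp; omega)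
      have hc : ρ' * Equiv.swap i.castSucc i.succ = Equiv.swap i.castSucc i.succ * ρ' := by
        apply hinjψ'
        rw [map_mul, map_mul, hψρ', hψ's i]
        exact hcm
      have heq : ρ' i.succ = Equiv.swap i.castSucc i.succ (ρ' i.castSucc) := by
        have h2 := congrArg (fun f => f i.castSucc) hc
        simp only [Equiv.Perm.mul_apply] at h2
        rwa [Equiv.swap_apply_left] at h2
      by_cases ha : ρ' i.castSucc = i.castSucc
      · left
        exact ⟨ha, by rw [heq, ha, Equiv.swap_apply_left]⟩
      · by_cases hb : ρ' i.castSucc = i.succ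
        · right
          exact ⟨hb, by rw [heq, hb, Equiv.swap_apply_right]⟩
        · exfalso
          rw [Equiv.swap_apply_of_ne_of_ne ha hb] at heq
          have h2 := congrArg Fin.val (ρ'.injective heq)
          simp at h2
    -- a contradiction if all pairs are fixed (needs 1 ≤ m)
    have hfix_concl : 1 ≤ m → (∀ i : Fin (m + 1), 1 ≤ (i : ℕ) →
        ρ' i.castSucc = i.castSucc ∧ ρ' i.succ = i.succ) → False := by
      intro hm1 hfix
      have hfixall : ∀ x : Fin (m + 2), 1 ≤ (x : ℕ) → ρ' x = x := by
        intro x hx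
        by_cases hxm : (x : ℕ) ≤ m
        · have h1 := (hfix ⟨(x : ℕ), by omega⟩ (by simpa)).1
          have h2 : ((⟨(x : ℕ), by omega⟩ : Fin (m + 1)).castSucc) = x := by ext; simp
          rwa [h2] at h1
        · have h1 := (hfix ⟨m, by omega⟩ (by simpa)).2
          have h2 : ((⟨m, by omega⟩ : Fin (m + 1)).succ) = x := by
            ext
            simp
            omega
          rwa [h2] at h1
      have hρ'0 : ρ' 0 = 0 := by
        by_contra hzz
        have h1le : 1 ≤ ((ρ' 0 : Fin (m + 2)) : ℕ) := by
          rcases Nat.eq_zero_or_pos ((ρ' 0 : Fin (m + 2)) : ℕ) with h | h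
          · exact absurd (Fin.ext h) hzz
          · exact h
        have h2 := hfixall (ρ' 0) h1le
        exact hzz (ρ'.injective h2)
      apply hρ'ne
      apply Equiv.ext
      intro x
      rw [Equiv.Perm.one_apply]
      by_cases hx : (x : ℕ) = 0
      · have hx0 : x = 0 := Fin.ext (by simpa using hx)
        subst hx0
        exact hρ'0
      · exact hfixall x (by omega)
    rcases Nat.lt_or_ge m 1 with hm0 | hm1
    · -- m = 0 : ρ' ∈ Perm (Fin 2)
      have hm : m = 0 := by omega
      subst hm
      rcases perm_fin_two ρ' with h | h
      · exact hρ'ne h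
      · have h2 : ψ' ρ' = d' 0 := by
          rw [h]
          have h01 : Equiv.swap (0 : Fin 2) 1 =
              Equiv.swap ((0 : Fin 1).castSucc) ((0 : Fin 1).succ) := by decide
          rw [h01]
          exact hψ's 0
        rw [hψρ'] at h2
        have h3' := hinj h2
        have := congrArg Fin.val h3'
        simp at this
    rcases Nat.lt_or_ge m 2 with hm2 | hm2
    · -- m = 1 : ρ' ∈ Perm (Fin 3)
      have hm : m = 1 := by omega
      subst hm
      rcases hpair 1 (by decide) with hfx | hsw
      · refine hfix_concl (by omega) ?_
        intro i hi
        have hi1 : i = 1 := by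
          apply Fin.ext
          have h5 : ((1 : Fin (1 + 1)) : ℕ) = 1 := rfl
          rw [h5]
          have := i.isLt
          omega
        subst hi1
        exact hfx
      · -- swapped case: ρ' = swap 1 2 on Fin 3
        have hc1 : ((1 : Fin 2).castSucc) = (1 : Fin (1 + 2)) := by decide
        have hc2 : ((1 : Fin 2).succ) = (2 : Fin (1 + 2)) := by decide
        have hval : ∀ y : Fin (1 + 2), (y : ℕ) = 0 ∨ (y : ℕ) = 1 ∨ (y : ℕ) = 2 := fun y => by
          have := y.isLt; omega
        have hs1 : ρ' (1 : Fin (1 + 2)) = 2 := by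
          have h' := hsw.1; rwa [hc1, hc2] at h'
        have hs2 : ρ' (2 : Fin (1 + 2)) = 1 := by
          have h' := hsw.2; rwa [hc1, hc2] at h'
        have hz : ρ' 0 = 0 := by
          by_contra hzz
          rcases hval (ρ' 0) with h | h | h
          · exact hzz (Fin.ext (by rw [h]; decide))
          · have h' : ρ' 0 = ρ' 2 := by rw [hs2]; exact Fin.ext (by rw [h]; decide)
            have h'' := congrArg Fin.val (ρ'.injective h')
            simp at h''
          · have h' : ρ' 0 = ρ' 1 := by rw [hs1]; exact Fin.ext (by rw [h]; decide)
            have h'' := congrArg Fin.val (ρ'.injective h')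
            simp at h''
        have hρeq : ρ' = Equiv.swap (1 : Fin (1 + 2)) 2 := by
          apply Equiv.ext
          intro x
          rcases hval x with h | h | h
          · have hx : x = 0 := Fin.ext (by rw [h]; decide)
            subst hx
            rw [hz, Equiv.swap_apply_of_ne_of_ne (by decide) (by decide)]
          · have hx : x = 1 := Fin.ext (by rw [h]; decide)
            subst hx
            rw [hs1, Equiv.swap_apply_left]
          · have hx : x = 2 := Fin.ext (by rw [h]; decide)
            subst hx
            rw [hs2, Equiv.swap_apply_right]
        have h2 : ψ' ρ' = d' 1 := by
          rw [hρeq, ← hc1, ← hc2]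
          exact hψ's 1
        rw [hψρ'] at h2
        have h3' := hinj h2
        have hne' := congrArg Fin.val h3'
        simp [hd'] at hne'
    · -- m ≥ 2 : all pairs fixed
      refine hfix_concl (by omega) ?_
      intro i hi
      rcases hpair i hi with h | h
      · exact h
      · exfalso
        by_cases him : (i : ℕ) + 1 ≤ m
        · set j : Fin (m + 1) := ⟨(i : ℕ) + 1, by omega⟩ with hj
          have hjc : j.castSucc = i.succ := by ext; simp [hj]
          rcases hpair j (by rw [hj]; simp) with hj2 | hj2
          · have h4 := h.2.symm.trans (hjc ▸ hj2.1)
            have hv := congrArg Fin.val h4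
            simp only [Fin.coe_castSucc, Fin.val_succ] at hv
            omega
          · have h4 := h.2.symm.trans (hjc ▸ hj2.1)
            have hv := congrArg Fin.val h4
            rw [hj] at hv
            simp only [Fin.coe_castSucc, Fin.val_succ] at hv
            omega
        · have him' : (i : ℕ) = m := by
            have := i.isLt
            omega
          set j : Fin (m + 1) := ⟨(i : ℕ) - 1, by omega⟩ with hj
          have hjs : j.succ = i.castSucc := by
            ext
            simp [hj]
            omega
          rcases hpair j (by rw [hj]; simp; omega) with hj2 | hj2
          · have h4 := h.1.symm.trans (hjs ▸ hj2.2)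
            have hv := congrArg Fin.val h4
            simp only [Fin.coe_castSucc, Fin.val_succ] at hv
            omega
          · have h4 := h.1.symm.trans (hjs ▸ hj2.2)
            have hv := congrArg Fin.val h4
            rw [hj] at hv
            simp only [Fin.coe_castSucc, Fin.val_succ] at hv
            omega

end KeyInj

end ChainAux

/-- A chain of `m` pairwise distinct involutions `d 0, …, d (m-1)` in a
group `G`, with consecutive products of order exactly `3` and non-consecutive members
commuting, generates a subgroup isomorphic to the symmetric group `S (m+1)`, via an
isomorphism sending the adjacent transposition `(i, i+1)` to `d i`. -/
theorem chain_generates_symmetric_group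
    (G : Type*) [Group G] (m : ℕ) (hm : 1 ≤ m) (d : Fin m → G)
    (hinj : Function.Injective d)
    (hord : ∀ i : Fin m, orderOf (d i) = 2)
    (h3 : ∀ i : Fin m, ∀ hi : (i : ℕ) + 1 < m, orderOf (d i * d ⟨(i : ℕ) + 1, hi⟩) = 3)
    (hcomm : ∀ i j : Fin m, (i : ℕ) + 2 ≤ (j : ℕ) → Commute (d i) (d j)) :
    ∃ e : Equiv.Perm (Fin (m + 1)) ≃* Subgroup.closure (Set.range d),
      ∀ i : Fin m, (e (Equiv.swap i.castSucc i.succ) : G) = d i := by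
  obtain ⟨n, rfl⟩ : ∃ n, m = n + 1 := ⟨m - 1, by omega⟩
  have hdlift : CoxeterMatrix.IsLiftable (ChainAux.CM (n + 1)) d := by
    apply ChainAux.isLiftable
    · intro i
      have h2 := pow_orderOf_eq_one (d i)
      rwa [hord i, pow_two] at h2
    · intro i j hij
      have hlt : (i : ℕ) + 1 < n + 1 := by rw [hij]; exact j.isLt
      have h2 := h3 i hlt
      have he : (⟨(i : ℕ) + 1, hlt⟩ : Fin (n + 1)) = j := Fin.ext hij
      rw [he] at h2
      have h4 := pow_orderOf_eq_one (d i * d j)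
      rwa [h2] at h4
    · intro i j hij
      exact hcomm i j hij
  set φ : ChainAux.W (n + 1) →* G := (ChainAux.cs (n + 1)).lift ⟨d, hdlift⟩ with hφ
  set e₀ : Equiv.Perm (Fin (n + 2)) →* G :=
    φ.comp ((ChainAux.permEquiv (n + 1)).symm.toMonoidHom) with he₀
  have he₀s : ∀ i : Fin (n + 1), e₀ (Equiv.swap i.castSucc i.succ) = d i := by
    intro i
    rw [he₀, MonoidHom.comp_apply, MulEquiv.coe_toMonoidHom,
      ChainAux.permEquiv_symm_swap (n + 1) i, hφ]
    exact (ChainAux.cs (n + 1)).lift_apply_simple hdlift i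
  have hinj₀ : Function.Injective e₀ := ChainAux.key_inj n d hinj hord h3 hcomm e₀ he₀s
  have hrange : e₀.range = Subgroup.closure (Set.range d) := by
    rw [MonoidHom.range_eq_map, ← ChainAux.swap_closure_top (n + 1), MonoidHom.map_closure,
      ← Set.range_comp]
    have hco : (⇑e₀ ∘ fun i : Fin (n + 1) => Equiv.swap i.castSucc i.succ) = d :=
      funext fun i => he₀s i
    rw [hco]
  refine ⟨(MonoidHom.ofInjective hinj₀).trans (MulEquiv.subgroupCongr hrange), ?_⟩
  intro i
  rw [MulEquiv.trans_apply, MulEquiv.subgroupCongr_apply, MonoidHom.ofInjective_apply]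
  exact he₀s i
end

section
/- Let K be a field, V a vector space over K, and B : V → V → K a bilinear map. Suppose v_1, …, v_{n+1} ∈ V satisfy B(v_i, v_j) = 0 whenever j ≥ i + 2, and B(v_i, v_{i+1}) ≠ 0 for all 1 ≤ i ≤ n. Then the vectors v_1, …, v_n are linearly independent. -/
/-- the "small lemma". If `v 0, …, v n` are vectors in a vector space `V`
with a bilinear map `B : V → V → K` such that `B (v i) (v j) = 0` whenever `j ≥ i + 2` and
`B (v i) (v (i+1)) ≠ 0` for all `i`, then `v 0, …, v (n-1)` are linearly independent. -/
theorem chain_linearIndependent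
    (K : Type*) [Field K] (V : Type*) [AddCommGroup V] [Module K V]
    (B : V →ₗ[K] V →ₗ[K] K) (n : ℕ) (v : Fin (n + 1) → V)
    (h0 : ∀ i j : Fin (n + 1), (i : ℕ) + 2 ≤ (j : ℕ) → B (v i) (v j) = 0)
    (h1 : ∀ i : Fin n, B (v i.castSucc) (v i.succ) ≠ 0) :
    LinearIndependent K (fun i : Fin n => v i.castSucc) := by
  rw [Fintype.linearIndependent_iff]
  intro g hg
  have main : ∀ i : Fin n, (∀ j : Fin n, (i : ℕ) < (j : ℕ) → g j = 0) → g i = 0 := by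
    intro i hj
    have h2 : ∑ k : Fin n, g k * B (v k.castSucc) (v i.succ) = 0 := by
      have := congrArg (B.flip (v i.succ)) hg
      simpa [map_sum, map_smul, smul_eq_mul] using this
    rw [Finset.sum_eq_single i] at h2
    · exact (mul_eq_zero.mp h2).resolve_right (h1 i)
    · intro b _ hb
      rcases lt_or_gt_of_ne (Fin.val_ne_of_ne hb) with hlt | hgt
      · have : B (v b.castSucc) (v i.succ) = 0 := by
          apply h0
          simp [Fin.val_succ]
          omega
        rw [this, mul_zero]
      · rw [hj b hgt, zero_mul]
    · intro h; exact absurd (Finset.mem_univ i) h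
  have all : ∀ m : ℕ, ∀ i : Fin n, n ≤ (i : ℕ) + m → g i = 0 := by
    intro m
    induction m with
    | zero => intro i h; exact absurd i.isLt (by omega)
    | succ m ih =>
      intro i h
      apply main i
      intro j hij
      exact ih j (by omega)
  intro i
  exact all n i (by omega)
end

section
/- Let n ≥ 2 and let V = (Fin (2n) → ZMod 2) with the symplectic bilinear form B(x,y) = Σ_{i=1}^{n} (x_{2i−1} y_{2i} + x_{2i} y_{2i−1}). Then: (a) there exists an injective group homomorphism ψ from the symmetric group S_{2n+2} to the group of linear automorphisms of V such that for every transposition τ ∈ S_{2n+2}, ψ(τ) is a symplectic transvection t_v for some nonzero v ∈ V; and (b) there is no injective group homomorphism from S_{2n+3} to the linear automorphisms of V sending every transposition to a symplectic transvection. (Equivalently, the maximal k such that S_k embeds into Sp_{2n}(2) with all transpositions mapping to transvections is φ(Sp_{2n}(2)) = 2n+2.) -/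
/-- The standard symplectic form on `(ZMod 2)^(2n)`:
`B x y = ∑ i, (x (2i) * y (2i+1) + x (2i+1) * y (2i))` (0-indexed). -/
def sympForm (n : ℕ) (x y : Fin (2 * n) → ZMod 2) : ZMod 2 :=
  ∑ i : Fin n,
    (x ⟨2 * i.1, by have := i.2; omega⟩ * y ⟨2 * i.1 + 1, by have := i.2; omega⟩ +
      x ⟨2 * i.1 + 1, by have := i.2; omega⟩ * y ⟨2 * i.1, by have := i.2; omega⟩)

open Finset

namespace PhiSymp

lemma z2cases (a : ZMod 2) : a = 0 ∨ a = 1 := by fin_cases a; exacts [Or.inl rfl, Or.inr rfl]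
lemma z2add (a : ZMod 2) : a + a = 0 := by fin_cases a <;> rfl

def iv {m : ℕ} (F : Finset (Fin m)) : Fin m → ZMod 2 := fun j => if j ∈ F then 1 else 0

def dotp {m : ℕ} (u v : Fin m → ZMod 2) : ZMod 2 := ∑ j, u j * v j

lemma dotp_comm {m : ℕ} (u v : Fin m → ZMod 2) : dotp u v = dotp v u := by
  unfold dotp; exact Finset.sum_congr rfl fun j _ => mul_comm _ _

lemma dotp_iv {m : ℕ} (F G : Finset (Fin m)) :
    dotp (iv F) (iv G) = ((F ∩ G).card : ZMod 2) := by
  unfold dotp iv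
  have : ∀ j : Fin m, (if j ∈ F then (1:ZMod 2) else 0) * (if j ∈ G then 1 else 0)
      = if j ∈ F ∩ G then 1 else 0 := by
    intro j; by_cases hF : j ∈ F <;> by_cases hG : j ∈ G <;> simp [hF, hG]
  rw [Finset.sum_congr rfl fun j _ => this j]
  rw [Finset.sum_ite_mem, Finset.univ_inter, Finset.sum_const, nsmul_eq_mul, mul_one]

lemma dotp_add_right {m : ℕ} (u v w : Fin m → ZMod 2) :
    dotp u (v + w) = dotp u v + dotp u w := by
  unfold dotp; rw [← Finset.sum_add_distrib]; exact Finset.sum_congr rfl fun j _ => by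
    simp [mul_add]

lemma dotp_smul_right {m : ℕ} (u v : Fin m → ZMod 2) (c : ZMod 2) :
    dotp u (c • v) = c * dotp u v := by
  unfold dotp; rw [Finset.mul_sum]; exact Finset.sum_congr rfl fun j _ => by
    simp [Pi.smul_apply, smul_eq_mul]; ring

lemma dotp_zero_right {m : ℕ} (u : Fin m → ZMod 2) : dotp u 0 = 0 := by
  unfold dotp; simp

lemma dotp_sum_right {m : ℕ} {ι : Type*} (u : Fin m → ZMod 2) (s : Finset ι)
    (v : ι → Fin m → ZMod 2) : dotp u (∑ i ∈ s, v i) = ∑ i ∈ s, dotp u (v i) := by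
  classical
  induction s using Finset.induction_on with
  | empty => simp [dotp_zero_right]
  | insert _ _ h ih => rw [Finset.sum_insert h, Finset.sum_insert h, dotp_add_right, ih]

def pact {m : ℕ} (σ : Equiv.Perm (Fin m)) (w : Fin m → ZMod 2) : Fin m → ZMod 2 :=
  fun j => w (σ⁻¹ j)

lemma pact_mul {m : ℕ} (σ τ : Equiv.Perm (Fin m)) (w : Fin m → ZMod 2) :
    pact (σ * τ) w = pact σ (pact τ w) := by
  funext j; simp [pact]

lemma pact_one {m : ℕ} (w : Fin m → ZMod 2) : pact 1 w = w := rfl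

lemma pact_add {m : ℕ} (σ : Equiv.Perm (Fin m)) (u v : Fin m → ZMod 2) :
    pact σ (u + v) = pact σ u + pact σ v := rfl

lemma pact_smul {m : ℕ} (σ : Equiv.Perm (Fin m)) (c : ZMod 2) (v : Fin m → ZMod 2) :
    pact σ (c • v) = c • pact σ v := rfl

lemma pact_iv {m : ℕ} (σ : Equiv.Perm (Fin m)) (F : Finset (Fin m)) :
    pact σ (iv F) = iv (F.image σ) := by
  funext j
  simp only [pact, iv]
  congr 1
  simp only [Finset.mem_image, eq_iff_iff]
  constructor
  · intro h; exact ⟨σ⁻¹ j, h, by simp⟩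
  · rintro ⟨a, ha, rfl⟩; simpa using ha

lemma pact_iv_univ {m : ℕ} (σ : Equiv.Perm (Fin m)) :
    pact σ (iv (univ : Finset (Fin m))) = iv univ := by
  funext j; simp [pact, iv]

lemma iv_inj {m : ℕ} {F G : Finset (Fin m)} (h : iv F = iv G) : F = G := by
  ext j
  have hj := congrFun h j
  by_cases hF : j ∈ F <;> by_cases hG : j ∈ G <;> simp [iv, hF, hG] at hj ⊢

lemma iv_add_univ {m : ℕ} (F : Finset (Fin m)) : iv F + iv univ = iv Fᶜ := by
  funext j
  by_cases hF : j ∈ F <;> simp [iv, hF, Finset.mem_compl, z2add]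

lemma pact_swap {m : ℕ} {p q : Fin m} (hpq : p ≠ q) (w : Fin m → ZMod 2) :
    pact (Equiv.swap p q) w = w + (w p + w q) • iv {p, q} := by
  funext j
  simp only [pact, Equiv.swap_inv, Pi.add_apply, Pi.smul_apply, smul_eq_mul, iv,
    Equiv.swap_apply_def, Finset.mem_insert, Finset.mem_singleton]
  by_cases hp : j = p
  · subst hp
    rw [if_pos rfl, if_pos (Or.inl rfl), mul_one]
    rcases z2cases (w j) with h|h <;> rcases z2cases (w q) with h'|h' <;> rw [h, h'] <;> decide
  · by_cases hq : j = q
    · subst hq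
      rw [if_neg hp, if_pos rfl, if_pos (Or.inr rfl), mul_one]
      rcases z2cases (w p) with h|h <;> rcases z2cases (w j) with h'|h' <;> rw [h, h'] <;> decide
    · simp [hp, hq]


section Construction
variable (n : ℕ)

def idxA (i : Fin n) : Fin (2*n+2) := ⟨2*i.1, by have := i.2; omega⟩
def idxC (i : Fin n) : Fin (2*n+2) := ⟨2*i.1+1, by have := i.2; omega⟩
def idxU : Fin (2*n+2) := ⟨2*n, by omega⟩
def idxL : Fin (2*n+2) := ⟨2*n+1, by omega⟩

@[simp] lemma idxA_val (i : Fin n) : (idxA n i).1 = 2*i.1 := rfl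
@[simp] lemma idxC_val (i : Fin n) : (idxC n i).1 = 2*i.1+1 := rfl
@[simp] lemma idxU_val : (idxU n).1 = 2*n := rfl
@[simp] lemma idxL_val : (idxL n).1 = 2*n+1 := rfl

def aset (i : Fin n) : Finset (Fin (2*n+2)) := {idxA n i, idxC n i}
def cset (i : Fin n) : Finset (Fin (2*n+2)) := insert (idxU n) (Iic (idxA n i))

lemma mem_aset {i : Fin n} {x : Fin (2*n+2)} :
    x ∈ aset n i ↔ x.1 = 2*i.1 ∨ x.1 = 2*i.1+1 := by
  simp [aset, idxA, idxC, Fin.ext_iff]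

lemma mem_cset {i : Fin n} {x : Fin (2*n+2)} :
    x ∈ cset n i ↔ x.1 = 2*n ∨ x.1 ≤ 2*i.1 := by
  simp [cset, idxA, idxU, Fin.ext_iff, Fin.le_def]

lemma card_aset (i : Fin n) : (aset n i).card = 2 := by
  rw [aset, Finset.card_pair]
  simp [idxA, idxC, Fin.ext_iff]

lemma card_cset (i : Fin n) : (cset n i).card = 2*i.1+2 := by
  rw [cset, Finset.card_insert_of_notMem, Fin.card_Iic]
  · simp [idxA]
  · simp only [Finset.mem_Iic, idxA, idxU, Fin.mk_le_mk]
    have := i.2; omega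

lemma k_cases (k : Fin (2*n+2)) :
    (∃ i : Fin n, k = idxA n i) ∨ (∃ i : Fin n, k = idxC n i) ∨ k = idxU n ∨ k = idxL n := by
  rcases k with ⟨v, hv⟩
  by_cases h1 : v < 2*n
  · by_cases h2 : v % 2 = 0
    · exact Or.inl ⟨⟨v/2, by omega⟩, Fin.ext (show v = 2*(v/2) by omega)⟩
    · exact Or.inr (Or.inl ⟨⟨v/2, by omega⟩, Fin.ext (show v = 2*(v/2)+1 by omega)⟩)
  · by_cases h2 : v = 2*n
    · exact Or.inr (Or.inr (Or.inl (by simp [idxU, Fin.ext_iff, h2])))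
    · exact Or.inr (Or.inr (Or.inr (by simp [idxL, Fin.ext_iff]; omega)))

-- intersection cardinalities, cast to ZMod 2
lemma natcast_even {k : ℕ} (h : k % 2 = 0) : (k : ZMod 2) = 0 := by
  rw [ZMod.natCast_eq_zero_iff]; omega

lemma dotp_aa (i j : Fin n) : dotp (iv (aset n i)) (iv (aset n j)) = 0 := by
  rw [dotp_iv]
  rcases eq_or_ne i j with rfl | hne
  · rw [Finset.inter_self, card_aset]; exact natcast_even (by omega)
  · have : aset n i ∩ aset n j = ∅ := by
      ext x
      simp only [Finset.mem_inter, mem_aset, Finset.notMem_empty, iff_false, not_and]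
      have : i.1 ≠ j.1 := fun h => hne (Fin.ext h)
      omega
    rw [this]; simp

lemma dotp_ac (i j : Fin n) :
    dotp (iv (aset n i)) (iv (cset n j)) = if i = j then 1 else 0 := by
  rw [dotp_iv]
  have hi := i.2; have hj := j.2
  rcases lt_trichotomy i.1 j.1 with h | h | h
  · have : aset n i ∩ cset n j = aset n i := by
      ext x
      simp only [Finset.mem_inter, mem_aset, mem_cset]
      omega
    have hne : ¬ i = j := by intro hh; subst hh; omega
    rw [this, card_aset, if_neg hne]
    exact natcast_even (by omega)
  · have hij : i = j := Fin.ext h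
    have : aset n i ∩ cset n j = {idxA n i} := by
      ext x
      simp only [Finset.mem_inter, mem_aset, mem_cset, Finset.mem_singleton, Fin.ext_iff, idxA]
      omega
    rw [this, if_pos hij]; simp
  · have : aset n i ∩ cset n j = ∅ := by
      ext x
      simp only [Finset.mem_inter, mem_aset, mem_cset, Finset.notMem_empty, iff_false, not_and]
      omega
    have hne : ¬ i = j := by intro hh; subst hh; omega
    rw [this, if_neg hne]; simp

lemma dotp_cc (i j : Fin n) : dotp (iv (cset n i)) (iv (cset n j)) = 0 := by
  rw [dotp_iv]
  have hi := i.2; have hj := j.2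
  have : cset n i ∩ cset n j = cset n (min i j) := by
    ext x
    simp only [Finset.mem_inter, mem_cset]
    rcases le_total i j with h | h
    · rw [min_eq_left h]
      have : i.1 ≤ j.1 := h
      omega
    · rw [min_eq_right h]
      have : j.1 ≤ i.1 := h
      omega
  rw [this, card_cset]
  exact natcast_even (by omega)

lemma dotp_au (i : Fin n) : dotp (iv (aset n i)) (iv univ) = 0 := by
  rw [dotp_iv, Finset.inter_univ, card_aset]; exact natcast_even (by omega)

lemma dotp_cu (i : Fin n) : dotp (iv (cset n i)) (iv univ) = 0 := by
  rw [dotp_iv, Finset.inter_univ, card_cset]; exact natcast_even (by omega)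

lemma dotp_uu : dotp (iv (univ : Finset (Fin (2*n+2)))) (iv univ) = 0 := by
  rw [dotp_iv, Finset.inter_univ, Finset.card_univ, Fintype.card_fin]
  exact natcast_even (by omega)

lemma dotp_al (i : Fin n) : dotp (iv (aset n i)) (iv {idxL n}) = 0 := by
  rw [dotp_iv]
  have hi := i.2
  have : aset n i ∩ {idxL n} = ∅ := by
    ext x
    simp only [Finset.mem_inter, mem_aset, Finset.mem_singleton, Fin.ext_iff, idxL,
      Finset.notMem_empty, iff_false, not_and]
    omega
  rw [this]; simp

lemma dotp_cl (i : Fin n) : dotp (iv (cset n i)) (iv {idxL n}) = 0 := by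
  rw [dotp_iv]
  have hi := i.2
  have : cset n i ∩ {idxL n} = ∅ := by
    ext x
    simp only [Finset.mem_inter, mem_cset, Finset.mem_singleton, Fin.ext_iff, idxL,
      Finset.notMem_empty, iff_false, not_and]
    omega
  rw [this]; simp

lemma dotp_ul : dotp (iv (univ : Finset (Fin (2*n+2)))) (iv {idxL n}) = 1 := by
  rw [dotp_iv, Finset.univ_inter, Finset.card_singleton, Nat.cast_one]

lemma dotp_ll : dotp (iv ({idxL n} : Finset (Fin (2*n+2)))) (iv {idxL n}) = 1 := by
  rw [dotp_iv, Finset.inter_self, Finset.card_singleton, Nat.cast_one]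


def bset (k : Fin (2*n+2)) : Finset (Fin (2*n+2)) :=
  if h : k.1 < 2*n then
    (if k.1 % 2 = 0 then aset n ⟨k.1/2, by omega⟩ else cset n ⟨k.1/2, by omega⟩)
  else if k.1 = 2*n then univ else {idxL n}

def bvec (k : Fin (2*n+2)) : Fin (2*n+2) → ZMod 2 := iv (bset n k)

lemma bset_a (i : Fin n) : bset n (idxA n i) = aset n i := by
  have hi := i.2
  simp only [bset]
  rw [dif_pos (show (idxA n i).1 < 2*n by rw [idxA_val]; omega), if_pos (show (idxA n i).1 % 2 = 0 by rw [idxA_val]; omega)]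
  congr 1
  exact Fin.ext (show 2*i.1/2 = i.1 by omega)

lemma bset_c (i : Fin n) : bset n (idxC n i) = cset n i := by
  have hi := i.2
  simp only [bset]
  rw [dif_pos (show (idxC n i).1 < 2*n by rw [idxC_val]; omega), if_neg (show ¬ (idxC n i).1 % 2 = 0 by rw [idxC_val]; omega)]
  congr 1
  exact Fin.ext (show (2*i.1+1)/2 = i.1 by omega)

lemma bset_u : bset n (idxU n) = univ := by
  simp [bset]

lemma bset_l : bset n (idxL n) = {idxL n} := by
  simp only [bset]
  rw [dif_neg (show ¬ (idxL n).1 < 2*n by rw [idxL_val]; omega), if_neg (show ¬ (idxL n).1 = 2*n by rw [idxL_val]; omega)]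

-- distinctness of indices
lemma idxA_inj {i j : Fin n} : idxA n i = idxA n j ↔ i = j := by
  constructor
  · intro h; exact Fin.ext (by have := congrArg Fin.val h; simp [idxA] at this; omega)
  · rintro rfl; rfl

lemma idxC_inj {i j : Fin n} : idxC n i = idxC n j ↔ i = j := by
  constructor
  · intro h; exact Fin.ext (by have := congrArg Fin.val h; simp [idxC] at this; omega)
  · rintro rfl; rfl

lemma idxA_ne_idxC {i j : Fin n} : idxA n i ≠ idxC n j := by
  intro h; have := congrArg Fin.val h; simp [idxA, idxC] at this; omega

lemma idxA_ne_idxU {i : Fin n} : idxA n i ≠ idxU n := by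
  intro h; have := congrArg Fin.val h; have hi := i.2; simp [idxA, idxU] at this; omega

lemma idxA_ne_idxL {i : Fin n} : idxA n i ≠ idxL n := by
  intro h; have := congrArg Fin.val h; have hi := i.2; simp [idxA, idxL] at this; omega

lemma idxC_ne_idxU {i : Fin n} : idxC n i ≠ idxU n := by
  intro h; have := congrArg Fin.val h; have hi := i.2; simp [idxC, idxU] at this; omega

lemma idxC_ne_idxL {i : Fin n} : idxC n i ≠ idxL n := by
  intro h; have := congrArg Fin.val h; have hi := i.2; simp [idxC, idxL] at this; omega

lemma idxU_ne_idxL : idxU n ≠ idxL n := by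
  intro h; have := congrArg Fin.val h; simp [idxU, idxL] at this

-- master collapse lemma
lemma collapse {m : ℕ} (g : Fin m → ZMod 2) (K : Fin m) :
    ∑ k, g k * (if k = K then 1 else 0) = g K := by
  rw [Finset.sum_congr rfl (fun k _ => by rw [mul_ite, mul_one, mul_zero])]
  rw [Finset.sum_ite_eq' univ K g, if_pos (Finset.mem_univ K)]

lemma dotp_c_bvec (i : Fin n) (k : Fin (2*n+2)) :
    dotp (iv (cset n i)) (bvec n k) = if k = idxA n i then 1 else 0 := by
  rcases k_cases n k with ⟨j, rfl⟩ | ⟨j, rfl⟩ | rfl | rfl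
  · rw [bvec, bset_a, dotp_comm, dotp_ac]
    by_cases h : j = i
    · subst h; rw [if_pos rfl, if_pos rfl]
    · rw [if_neg h, if_neg (fun hh => h (idxA_inj n |>.mp hh))]
  · rw [bvec, bset_c, dotp_cc, if_neg (fun hh => idxA_ne_idxC n hh.symm)]
  · rw [bvec, bset_u, dotp_cu, if_neg (fun hh => idxA_ne_idxU n hh.symm)]
  · rw [bvec, bset_l, dotp_cl, if_neg (fun hh => idxA_ne_idxL n hh.symm)]

lemma dotp_a_bvec (i : Fin n) (k : Fin (2*n+2)) :
    dotp (iv (aset n i)) (bvec n k) = if k = idxC n i then 1 else 0 := by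
  rcases k_cases n k with ⟨j, rfl⟩ | ⟨j, rfl⟩ | rfl | rfl
  · rw [bvec, bset_a, dotp_aa, if_neg (fun hh => idxA_ne_idxC n hh)]
  · rw [bvec, bset_c, dotp_ac]
    by_cases h : i = j
    · subst h; rw [if_pos rfl, if_pos rfl]
    · rw [if_neg h, if_neg (fun hh => h ((idxC_inj n |>.mp hh).symm))]
  · rw [bvec, bset_u, dotp_au, if_neg (fun hh => idxC_ne_idxU n hh.symm)]
  · rw [bvec, bset_l, dotp_al, if_neg (fun hh => idxC_ne_idxL n hh.symm)]

-- pointwise values at coordinates idxU, idxL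
lemma bvec_at_U (k : Fin (2*n+2)) :
    bvec n k (idxU n) = if k.1 < 2*n ∧ k.1 % 2 = 1 ∨ k = idxU n then 1 else 0 := by
  rcases k_cases n k with ⟨j, rfl⟩ | ⟨j, rfl⟩ | rfl | rfl <;> have hj : True := trivial
  · rw [bvec, bset_a]
    have h1 : idxU n ∉ aset n j := by
      rw [mem_aset]; have := j.2; simp [idxU]; omega
    rw [iv, if_neg h1, if_neg]
    rintro (⟨h2, h3⟩ | h2)
    · simp only [idxA_val] at h3; omega
    · exact idxA_ne_idxU n h2
  · rw [bvec, bset_c]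
    have h1 : idxU n ∈ cset n j := by rw [mem_cset]; left; rfl
    rw [iv, if_pos h1, if_pos]
    left
    refine ⟨?_, ?_⟩
    · simp only [idxC_val]; have := j.2; omega
    · simp only [idxC_val]; omega
  · rw [bvec, bset_u, iv, if_pos (Finset.mem_univ _), if_pos (Or.inr rfl)]
  · rw [bvec, bset_l, iv, if_neg, if_neg]
    · rintro (⟨h2, _⟩ | h2)
      · simp only [idxL_val] at h2; omega
      · exact idxU_ne_idxL n h2.symm
    · rw [Finset.mem_singleton]; exact fun h => idxU_ne_idxL n h

lemma bvec_at_L (k : Fin (2*n+2)) :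
    bvec n k (idxL n) = if k = idxU n ∨ k = idxL n then 1 else 0 := by
  rcases k_cases n k with ⟨j, rfl⟩ | ⟨j, rfl⟩ | rfl | rfl
  · rw [bvec, bset_a, iv, if_neg, if_neg]
    · rintro (h | h); exacts [idxA_ne_idxU n h, idxA_ne_idxL n h]
    · rw [mem_aset]; have := j.2; simp [idxL]; omega
  · rw [bvec, bset_c, iv, if_neg, if_neg]
    · rintro (h | h); exacts [idxC_ne_idxU n h, idxC_ne_idxL n h]
    · rw [mem_cset]; have := j.2; simp [idxL]
  · rw [bvec, bset_u, iv, if_pos (Finset.mem_univ _), if_pos (Or.inl rfl)]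
  · rw [bvec, bset_l, iv, if_pos (Finset.mem_singleton_self _), if_pos (Or.inr rfl)]

lemma bvec_li : LinearIndependent (ZMod 2) (bvec n) := by
  rw [Fintype.linearIndependent_iff]
  intro g hg
  have hz : ∀ u : Fin (2*n+2) → ZMod 2, ∑ k, g k * dotp u (bvec n k) = 0 := by
    intro u
    have h := congrArg (dotp u) hg
    rw [dotp_sum_right, dotp_zero_right] at h
    rw [← h]
    exact Finset.sum_congr rfl fun k _ => (dotp_smul_right _ _ _).symm
  have hA : ∀ i : Fin n, g (idxA n i) = 0 := by
    intro i
    have h := hz (iv (cset n i))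
    rw [Finset.sum_congr rfl (fun k _ => by rw [dotp_c_bvec]), collapse] at h
    exact h
  have hC : ∀ i : Fin n, g (idxC n i) = 0 := by
    intro i
    have h := hz (iv (aset n i))
    rw [Finset.sum_congr rfl (fun k _ => by rw [dotp_a_bvec]), collapse] at h
    exact h
  have hU : g (idxU n) = 0 := by
    have h := congrFun hg (idxU n)
    rw [Finset.sum_apply] at h
    have he : ∀ k ∈ (univ : Finset (Fin (2*n+2))),
        (g k • bvec n k) (idxU n) = g k * (if k = idxU n then 1 else 0) := by
      intro k _
      rw [Pi.smul_apply, smul_eq_mul, bvec_at_U]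
      rcases k_cases n k with ⟨j, rfl⟩ | ⟨j, rfl⟩ | rfl | rfl
      · rw [if_neg, if_neg]
        · exact fun h => idxA_ne_idxU n h
        · rintro (⟨_, h3⟩ | h2)
          · simp only [idxA_val] at h3; omega
          · exact idxA_ne_idxU n h2
      · rw [hC j, zero_mul, zero_mul]
      · rw [if_pos (Or.inr rfl), if_pos rfl]
      · rw [if_neg, if_neg]
        · exact fun h => idxU_ne_idxL n h.symm
        · rintro (⟨h2, _⟩ | h2)
          · simp only [idxL_val] at h2; omega
          · exact idxU_ne_idxL n h2.symm
    rw [Finset.sum_congr rfl he, collapse] at h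
    exact h
  have hL : g (idxL n) = 0 := by
    have h := congrFun hg (idxL n)
    rw [Finset.sum_apply] at h
    have he : ∀ k ∈ (univ : Finset (Fin (2*n+2))),
        (g k • bvec n k) (idxL n) = g k * (if k = idxL n then 1 else 0) := by
      intro k _
      rw [Pi.smul_apply, smul_eq_mul, bvec_at_L]
      rcases k_cases n k with ⟨j, rfl⟩ | ⟨j, rfl⟩ | rfl | rfl
      · rw [if_neg, if_neg]
        · exact fun h => idxA_ne_idxL n h
        · rintro (h | h); exacts [idxA_ne_idxU n h, idxA_ne_idxL n h]
      · rw [if_neg, if_neg]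
        · exact fun h => idxC_ne_idxL n h
        · rintro (h | h); exacts [idxC_ne_idxU n h, idxC_ne_idxL n h]
      · rw [hU, zero_mul, zero_mul]
      · rw [if_pos (Or.inr rfl), if_pos rfl]
    rw [Finset.sum_congr rfl he, collapse] at h
    exact h
  intro k
  rcases k_cases n k with ⟨j, rfl⟩ | ⟨j, rfl⟩ | rfl | rfl
  exacts [hA j, hC j, hU, hL]


noncomputable def bb : Module.Basis (Fin (2*n+2)) (ZMod 2) (Fin (2*n+2) → ZMod 2) :=
  basisOfLinearIndependentOfCardEqFinrank (bvec_li n)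
    (by rw [Module.finrank_fintype_fun_eq_card])

lemma bb_eq (k : Fin (2*n+2)) : bb n k = bvec n k :=
  congrFun (coe_basisOfLinearIndependentOfCardEqFinrank _ _) k

lemma repr_bvec (k : Fin (2*n+2)) :
    (bb n).repr (bvec n k) = Finsupp.single k 1 := by
  rw [← bb_eq, Module.Basis.repr_self]

def idx (k : Fin (2*n)) : Fin (2*n+2) := ⟨k.1, by omega⟩

@[simp] lemma idx_val (k : Fin (2*n)) : (idx n k).1 = k.1 := rfl

def evn (i : Fin n) : Fin (2*n) := ⟨2*i.1, by have := i.2; omega⟩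
def od (i : Fin n) : Fin (2*n) := ⟨2*i.1+1, by have := i.2; omega⟩

@[simp] lemma evn_val (i : Fin n) : (evn n i).1 = 2*i.1 := rfl
@[simp] lemma od_val (i : Fin n) : (od n i).1 = 2*i.1+1 := rfl

lemma idx_evn (i : Fin n) : idx n (evn n i) = idxA n i := rfl
lemma idx_od (i : Fin n) : idx n (od n i) = idxC n i := rfl

lemma fin2n_cases (k : Fin (2*n)) : (∃ i : Fin n, k = evn n i) ∨ (∃ i : Fin n, k = od n i) := by
  rcases k with ⟨v, hv⟩
  by_cases h2 : v % 2 = 0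
  · exact Or.inl ⟨⟨v/2, by omega⟩, Fin.ext (show v = 2*(v/2) by omega)⟩
  · exact Or.inr ⟨⟨v/2, by omega⟩, Fin.ext (show v = 2*(v/2)+1 by omega)⟩

def Lmap (x : Fin (2*n) → ZMod 2) : Fin (2*n+2) → ZMod 2 :=
  ∑ k : Fin (2*n), x k • bvec n (idx n k)

noncomputable def Pmap (w : Fin (2*n+2) → ZMod 2) : Fin (2*n) → ZMod 2 :=
  fun k => (bb n).repr w (idx n k)

lemma Lmap_add (x y : Fin (2*n) → ZMod 2) : Lmap n (x + y) = Lmap n x + Lmap n y := by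
  unfold Lmap
  rw [← Finset.sum_add_distrib]
  exact Finset.sum_congr rfl fun k _ => by rw [Pi.add_apply, add_smul]

lemma Lmap_smul (c : ZMod 2) (x : Fin (2*n) → ZMod 2) : Lmap n (c • x) = c • Lmap n x := by
  unfold Lmap
  rw [Finset.smul_sum]
  exact Finset.sum_congr rfl fun k _ => by
    rw [Pi.smul_apply, smul_eq_mul, mul_smul]

lemma Lmap_zero : Lmap n 0 = 0 := by unfold Lmap; simp

lemma Lmap_single (k : Fin (2*n)) : Lmap n (Pi.single k 1) = bvec n (idx n k) := by
  unfold Lmap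
  rw [Finset.sum_congr rfl (fun l _ => by
    rw [Pi.single_apply k (1:ZMod 2) l, ite_smul, one_smul, zero_smul])]
  rw [Finset.sum_ite_eq' univ k (fun l => bvec n (idx n l)), if_pos (Finset.mem_univ k)]

lemma Pmap_add (u v : Fin (2*n+2) → ZMod 2) : Pmap n (u + v) = Pmap n u + Pmap n v := by
  funext l; simp [Pmap]

lemma Pmap_smul (c : ZMod 2) (u : Fin (2*n+2) → ZMod 2) : Pmap n (c • u) = c • Pmap n u := by
  funext l; simp [Pmap]

lemma Pmap_sum {ι : Type*} (s : Finset ι) (f : ι → Fin (2*n+2) → ZMod 2) :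
    Pmap n (∑ i ∈ s, f i) = ∑ i ∈ s, Pmap n (f i) := by
  classical
  induction s using Finset.induction_on with
  | empty => funext l; simp [Pmap]
  | insert _ _ h ih => rw [Finset.sum_insert h, Finset.sum_insert h, Pmap_add, ih]

lemma Pmap_bvec_idx (k : Fin (2*n)) : Pmap n (bvec n (idx n k)) = Pi.single k 1 := by
  funext l
  rw [Pmap, repr_bvec, Finsupp.single_apply, Pi.single_apply k (1:ZMod 2) l]
  by_cases h : l = k
  · subst h; rw [if_pos rfl, if_pos rfl]
  · rw [if_neg h, if_neg]
    intro hh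
    have hv := congrArg Fin.val hh
    simp only [idx_val] at hv
    exact h (Fin.ext hv.symm)

lemma Pmap_U : Pmap n (bvec n (idxU n)) = 0 := by
  funext l
  rw [Pmap, repr_bvec, Finsupp.single_apply, if_neg]
  · rfl
  · intro h
    have hv := congrArg Fin.val h
    simp only [idx_val, idxU_val] at hv
    have := l.2; omega

lemma Pmap_L : Pmap n (bvec n (idxL n)) = 0 := by
  funext l
  rw [Pmap, repr_bvec, Finsupp.single_apply, if_neg]
  · rfl
  · intro h
    have hv := congrArg Fin.val h
    simp only [idx_val, idxL_val] at hv
    have := l.2; omega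

lemma P_L (x : Fin (2*n) → ZMod 2) : Pmap n (Lmap n x) = x := by
  rw [Lmap, Pmap_sum]
  rw [Finset.sum_congr rfl (fun k _ => by rw [Pmap_smul, Pmap_bvec_idx])]
  funext l
  rw [Finset.sum_apply]
  rw [Finset.sum_congr rfl (fun k _ => by
    rw [Pi.smul_apply, Pi.single_apply k (1:ZMod 2) l, smul_eq_mul, mul_ite, mul_one, mul_zero])]
  rw [Finset.sum_ite_eq univ l x, if_pos (Finset.mem_univ l)]

-- sum splitting helpers
lemma sum_range_two_mul {M : Type*} [AddCommMonoid M] (F : ℕ → M) (k : ℕ) :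
    ∑ j ∈ range (2*k), F j = ∑ i ∈ range k, (F (2*i) + F (2*i+1)) := by
  induction k with
  | zero => simp
  | succ k ih =>
    rw [show 2*(k+1) = 2*k+1+1 by ring, Finset.sum_range_succ, Finset.sum_range_succ, ih,
      Finset.sum_range_succ, add_assoc]

lemma fin_sum_to_range {m : ℕ} {M : Type*} [AddCommMonoid M] (g : Fin m → M) :
    ∑ k, g k = ∑ j ∈ range m, (if h : j < m then g ⟨j, h⟩ else 0) := by
  rw [← Fin.sum_univ_eq_sum_range (fun j => if h : j < m then g ⟨j, h⟩ else 0) m]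
  exact Finset.sum_congr rfl fun k _ => by rw [dif_pos k.2]

lemma sum_range_split2 {M : Type*} [AddCommMonoid M] (g : ℕ → M) (m : ℕ) :
    ∑ j ∈ range (m+2), g j = (∑ j ∈ range m, g j) + g m + g (m+1) := by
  rw [show m+2 = m+1+1 from rfl, Finset.sum_range_succ, Finset.sum_range_succ]

lemma fin_sum_split {M : Type*} [AddCommMonoid M] (f : Fin (2*n+2) → M) :
    ∑ k, f k = (∑ k : Fin (2*n), f (idx n k)) + f (idxU n) + f (idxL n) := by
  rw [fin_sum_to_range f, fin_sum_to_range (fun k : Fin (2*n) => f (idx n k))]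
  rw [sum_range_split2 _ (2*n)]
  congr 1
  · congr 1
    · refine Finset.sum_congr rfl fun j hj => ?_
      have hj' := Finset.mem_range.mp hj
      rw [dif_pos (by omega : j < 2*n+2), dif_pos hj']
      rfl
    · rw [dif_pos (by omega : 2*n < 2*n+2)]
      rfl
  · rw [dif_pos (by omega : 2*n+1 < 2*n+2)]
    rfl

lemma fin_sum_pairs {M : Type*} [AddCommMonoid M] (f : Fin (2*n) → M) :
    ∑ k, f k = ∑ i : Fin n, (f (evn n i) + f (od n i)) := by
  rw [fin_sum_to_range f, sum_range_two_mul, ← Fin.sum_univ_eq_sum_range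
    (fun j => (if h : 2*j < 2*n then f ⟨2*j, h⟩ else 0) + (if h : 2*j+1 < 2*n then f ⟨2*j+1, h⟩ else 0)) n]
  exact Finset.sum_congr rfl fun i _ => by
    have := i.2
    rw [dif_pos (by omega : 2*i.1 < 2*n), dif_pos (by omega : 2*i.1+1 < 2*n)]
    rfl


def pm (l : Fin (2*n)) : Fin (2*n) :=
  ⟨if l.1 % 2 = 0 then l.1+1 else l.1-1, by rcases l with ⟨v, hv⟩; dsimp only; split <;> omega⟩

@[simp] lemma pm_val (l : Fin (2*n)) : (pm n l).1 = if l.1 % 2 = 0 then l.1+1 else l.1-1 := rfl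

lemma pm_evn (i : Fin n) : pm n (evn n i) = od n i := by
  apply Fin.ext
  rw [pm_val, if_pos (show (evn n i).1 % 2 = 0 by rw [evn_val]; omega)]
  show 2*i.1+1 = 2*i.1+1; rfl

lemma pm_od (i : Fin n) : pm n (od n i) = evn n i := by
  apply Fin.ext
  rw [pm_val, if_neg (show ¬ (od n i).1 % 2 = 0 by rw [od_val]; omega)]
  show 2*i.1+1-1 = 2*i.1; omega

lemma evn_inj {i j : Fin n} (h : evn n i = evn n j) : i = j := by
  have := congrArg Fin.val h; simp only [evn_val] at this; exact Fin.ext (by omega)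

lemma od_inj {i j : Fin n} (h : od n i = od n j) : i = j := by
  have := congrArg Fin.val h; simp only [od_val] at this; exact Fin.ext (by omega)

lemma evn_ne_od {i j : Fin n} : evn n i ≠ od n j := by
  intro h; have := congrArg Fin.val h; simp only [evn_val, od_val] at this; omega

lemma dotp_bb (l k : Fin (2*n)) :
    dotp (bvec n (idx n l)) (bvec n (idx n k)) = if k = pm n l then 1 else 0 := by
  rcases fin2n_cases n l with ⟨i, rfl⟩ | ⟨i, rfl⟩ <;> rcases fin2n_cases n k with ⟨j, rfl⟩ | ⟨j, rfl⟩
  · rw [idx_evn, idx_evn, bvec, bvec, bset_a, bset_a, dotp_aa, pm_evn,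
      if_neg (fun h => evn_ne_od n h)]
  · rw [idx_evn, idx_od, bvec, bvec, bset_a, bset_c, dotp_ac, pm_evn]
    by_cases h : i = j
    · subst h; rw [if_pos rfl, if_pos rfl]
    · rw [if_neg h, if_neg (fun hh => h (od_inj n hh).symm)]
  · rw [idx_od, idx_evn, bvec, bvec, bset_c, bset_a, dotp_comm, dotp_ac, pm_od]
    by_cases h : j = i
    · subst h; rw [if_pos rfl, if_pos rfl]
    · rw [if_neg h, if_neg (fun hh => h (evn_inj n hh))]
  · rw [idx_od, idx_od, bvec, bvec, bset_c, bset_c, dotp_cc, pm_od,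
      if_neg (fun h => evn_ne_od n h.symm)]

lemma sympForm_eq (x y : Fin (2*n) → ZMod 2) :
    sympForm n x y = ∑ i : Fin n, (x (evn n i) * y (od n i) + x (od n i) * y (evn n i)) := rfl

lemma dotp_Lmap_bvec (x : Fin (2*n) → ZMod 2) (l : Fin (2*n)) :
    dotp (Lmap n x) (bvec n (idx n l)) = x (pm n l) := by
  rw [dotp_comm, Lmap, dotp_sum_right]
  rw [Finset.sum_congr rfl (fun k _ => by rw [dotp_smul_right, dotp_bb])]
  exact collapse (fun k => x k) (pm n l)

lemma dotp_LL (x y : Fin (2*n) → ZMod 2) :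
    dotp (Lmap n x) (Lmap n y) = sympForm n x y := by
  conv_lhs => rw [show Lmap n y = ∑ k : Fin (2*n), y k • bvec n (idx n k) from rfl]
  rw [dotp_sum_right]
  rw [Finset.sum_congr rfl (fun k _ => by rw [dotp_smul_right, dotp_Lmap_bvec])]
  rw [fin_sum_pairs n (fun k => y k * x (pm n k)), sympForm_eq]
  refine Finset.sum_congr rfl fun i _ => ?_
  rw [pm_evn, pm_od]
  ring

def sfun {m : ℕ} (w : Fin m → ZMod 2) : ZMod 2 := dotp (iv univ) w

lemma sfun_eq_sum {m : ℕ} (w : Fin m → ZMod 2) : sfun w = ∑ j, w j := by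
  unfold sfun dotp iv
  exact Finset.sum_congr rfl fun j _ => by rw [if_pos (Finset.mem_univ j), one_mul]

lemma sfun_pact {m : ℕ} (σ : Equiv.Perm (Fin m)) (w : Fin m → ZMod 2) :
    sfun (pact σ w) = sfun w := by
  rw [sfun_eq_sum, sfun_eq_sum]
  exact Equiv.sum_comp σ⁻¹ w

lemma sfun_bvec (k : Fin (2*n+2)) : sfun (bvec n k) = if k = idxL n then 1 else 0 := by
  rcases k_cases n k with ⟨j, rfl⟩ | ⟨j, rfl⟩ | rfl | rfl
  · rw [bvec, bset_a, sfun, dotp_comm, dotp_au, if_neg (fun h => idxA_ne_idxL n h)]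
  · rw [bvec, bset_c, sfun, dotp_comm, dotp_cu, if_neg (fun h => idxC_ne_idxL n h)]
  · rw [bvec, bset_u, sfun, dotp_uu, if_neg (fun h => idxU_ne_idxL n h)]
  · rw [bvec, bset_l, sfun, dotp_ul, if_pos rfl]

lemma repr_idxL (w : Fin (2*n+2) → ZMod 2) : (bb n).repr w (idxL n) = sfun w := by
  have hrep : ∑ k, (bb n).repr w k • bvec n k = w := by
    rw [Finset.sum_congr rfl (fun k _ => by rw [← bb_eq])]
    exact Module.Basis.sum_repr (bb n) w
  have h1 : sfun w = ∑ k, (bb n).repr w k * sfun (bvec n k) := by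
    conv_lhs => rw [← hrep]
    rw [sfun, dotp_sum_right]
    exact Finset.sum_congr rfl fun k _ => by rw [dotp_smul_right]; rfl
  rw [h1, Finset.sum_congr rfl (fun k _ => by rw [sfun_bvec]), collapse]

lemma smul2 {m : ℕ} (c : ZMod 2) (v : Fin m → ZMod 2) : c • v + c • v = 0 := by
  rw [← add_smul, z2add, zero_smul]

lemma L_P (w : Fin (2*n+2) → ZMod 2) :
    Lmap n (Pmap n w) = w + ((bb n).repr w (idxU n)) • bvec n (idxU n)
      + ((bb n).repr w (idxL n)) • bvec n (idxL n) := by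
  have hrep : ∑ k, (bb n).repr w k • bvec n k = w := by
    rw [Finset.sum_congr rfl (fun k _ => by rw [← bb_eq])]
    exact Module.Basis.sum_repr (bb n) w
  have hsplit := fin_sum_split n (fun k => (bb n).repr w k • bvec n k)
  rw [hrep] at hsplit
  have hL : Lmap n (Pmap n w)
      = ∑ k : Fin (2*n), (bb n).repr w (idx n k) • bvec n (idx n k) := rfl
  set S := ∑ k : Fin (2*n), (bb n).repr w (idx n k) • bvec n (idx n k) with hS
  set u := ((bb n).repr w (idxU n)) • bvec n (idxU n) with hu
  set l := ((bb n).repr w (idxL n)) • bvec n (idxL n) with hl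
  have hw : w = S + u + l := hsplit
  rw [hL, hw]
  have : S + u + l + u + l = S + (u + u) + (l + l) := by abel
  rw [this, smul2, smul2, add_zero, add_zero]

lemma LP0 (w : Fin (2*n+2) → ZMod 2) (hw : sfun w = 0) :
    Lmap n (Pmap n w) = w + ((bb n).repr w (idxU n)) • bvec n (idxU n) := by
  rw [L_P, repr_idxL, hw, zero_smul, add_zero]

lemma sfun_Lmap (x : Fin (2*n) → ZMod 2) : sfun (Lmap n x) = 0 := by
  rw [Lmap, sfun, dotp_sum_right]
  rw [Finset.sum_congr rfl (fun k _ => by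
    rw [dotp_smul_right, show dotp (iv univ) (bvec n (idx n k)) = sfun (bvec n (idx n k)) from rfl,
      sfun_bvec, if_neg (fun h => by
        have hv := congrArg Fin.val h
        simp only [idx_val, idxL_val] at hv
        have := k.2; omega), mul_zero])]
  exact Finset.sum_const_zero


noncomputable def psiFun (σ : Equiv.Perm (Fin (2*n+2))) (x : Fin (2*n) → ZMod 2) :
    Fin (2*n) → ZMod 2 := Pmap n (pact σ (Lmap n x))

lemma psi_one (x : Fin (2*n) → ZMod 2) : psiFun n 1 x = x := by
  rw [psiFun, pact_one, P_L]

lemma pact_iv_univ' (σ : Equiv.Perm (Fin (2*n+2))) :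
    pact σ (bvec n (idxU n)) = bvec n (idxU n) := by
  rw [bvec, bset_u]
  exact pact_iv_univ σ

lemma psi_mul (σ τ : Equiv.Perm (Fin (2*n+2))) (x : Fin (2*n) → ZMod 2) :
    psiFun n σ (psiFun n τ x) = psiFun n (σ * τ) x := by
  unfold psiFun
  have hw : sfun (pact τ (Lmap n x)) = 0 := by rw [sfun_pact, sfun_Lmap]
  rw [LP0 n _ hw, pact_add, pact_smul, pact_iv_univ']
  rw [Pmap_add, Pmap_smul, Pmap_U, smul_zero, add_zero, ← pact_mul]

lemma psi_add (σ : Equiv.Perm (Fin (2*n+2))) (x y : Fin (2*n) → ZMod 2) :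
    psiFun n σ (x + y) = psiFun n σ x + psiFun n σ y := by
  unfold psiFun
  rw [Lmap_add, pact_add, Pmap_add]

lemma psi_smul (σ : Equiv.Perm (Fin (2*n+2))) (c : ZMod 2) (x : Fin (2*n) → ZMod 2) :
    psiFun n σ (c • x) = c • psiFun n σ x := by
  unfold psiFun
  rw [Lmap_smul, pact_smul, Pmap_smul]

noncomputable def psiE (σ : Equiv.Perm (Fin (2*n+2))) :
    (Fin (2*n) → ZMod 2) ≃ₗ[ZMod 2] (Fin (2*n) → ZMod 2) where
  toFun := psiFun n σ
  invFun := psiFun n σ⁻¹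
  left_inv := fun x => by
    show psiFun n σ⁻¹ (psiFun n σ x) = x
    rw [psi_mul, inv_mul_cancel, psi_one]
  right_inv := fun x => by
    show psiFun n σ (psiFun n σ⁻¹ x) = x
    rw [psi_mul, mul_inv_cancel, psi_one]
  map_add' := psi_add n σ
  map_smul' := psi_smul n σ

lemma psiE_apply (σ : Equiv.Perm (Fin (2*n+2))) (x : Fin (2*n) → ZMod 2) :
    psiE n σ x = psiFun n σ x := rfl

noncomputable def psiH : Equiv.Perm (Fin (2*n+2)) →*
    ((Fin (2*n) → ZMod 2) ≃ₗ[ZMod 2] (Fin (2*n) → ZMod 2)) :=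
  MonoidHom.mk' (psiE n) (fun σ τ => by
    apply LinearEquiv.toLinearMap_injective
    apply LinearMap.ext
    intro x
    exact (psi_mul n σ τ x).symm)


lemma psiH_inj (hn : 2 ≤ n) : Function.Injective (psiH n) := by
  rw [injective_iff_map_eq_one]
  intro σ hσ
  have hfix : ∀ x, psiFun n σ x = x := fun x => LinearEquiv.ext_iff.mp hσ x
  -- step 1 : each basis set is preserved or complemented
  have step1 : ∀ k : Fin (2*n), ∃ γ : ZMod 2,
      pact σ (bvec n (idx n k)) = bvec n (idx n k) + γ • bvec n (idxU n) := by
    intro k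
    set w := pact σ (bvec n (idx n k)) with hwdef
    have hw : sfun w = 0 := by
      rw [hwdef, sfun_pact, sfun_bvec, if_neg]
      intro h
      have hv := congrArg Fin.val h
      simp only [idx_val, idxL_val] at hv
      have := k.2; omega
    have hP : Pmap n w = Pi.single k 1 := by
      rw [hwdef, ← Lmap_single n k]
      exact hfix _
    have hLP := LP0 n w hw
    rw [hP, Lmap_single] at hLP
    refine ⟨(bb n).repr w (idxU n), ?_⟩
    rw [hLP, add_assoc, smul2, add_zero]
  have hset : ∀ k : Fin (2*n),
      Finset.image σ (bset n (idx n k)) = bset n (idx n k)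
      ∨ Finset.image σ (bset n (idx n k)) = (bset n (idx n k))ᶜ := by
    intro k
    obtain ⟨γ, hγ⟩ := step1 k
    rw [show bvec n (idx n k) = iv (bset n (idx n k)) from rfl, pact_iv] at hγ
    rcases z2cases γ with h | h
    · left; apply iv_inj; rw [hγ, h, zero_smul, add_zero]
    · right; apply iv_inj
      rw [hγ, h, one_smul, show bvec n (idxU n) = iv univ from by rw [bvec, bset_u]]
      exact iv_add_univ _
  have hasetA : ∀ i : Fin n, Finset.image σ (aset n i) = aset n i := by
    intro i
    have h := hset (evn n i)
    rw [idx_evn, bset_a] at h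
    rcases h with h | h
    · exact h
    · exfalso
      have hcard : (Finset.image σ (aset n i)).card = 2 := by
        rw [Finset.card_image_of_injective _ σ.injective, card_aset]
      rw [h, Finset.card_compl, card_aset, Fintype.card_fin] at hcard
      omega
  set i0 : Fin n := ⟨0, by omega⟩ with hi0
  have hcset0 : Finset.image σ (cset n i0) = cset n i0 := by
    have h := hset (od n i0)
    rw [idx_od, bset_c] at h
    rcases h with h | h
    · exact h
    · exfalso
      have hcard : (Finset.image σ (cset n i0)).card = 2*i0.1+2 := by
        rw [Finset.card_image_of_injective _ σ.injective, card_cset]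
      rw [h, Finset.card_compl, card_cset, Fintype.card_fin] at hcard
      have h0 : i0.1 = 0 := rfl
      omega
  have memA : ∀ (i : Fin n) (x : Fin (2*n+2)), x ∈ aset n i → σ x ∈ aset n i := by
    intro i x hx
    rw [← hasetA i]
    exact Finset.mem_image_of_mem σ hx
  have hA0 : σ (idxA n i0) = idxA n i0 := by
    have h1 := memA i0 (idxA n i0) (by rw [mem_aset]; left; rfl)
    have h2 : σ (idxA n i0) ∈ cset n i0 := by
      rw [← hcset0]
      exact Finset.mem_image_of_mem σ (by rw [mem_cset]; right; simp [hi0])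
    rw [mem_aset] at h1
    rw [mem_cset] at h2
    apply Fin.ext
    simp only [idxA_val, hi0] at h1 h2 ⊢
    omega
  have hU : σ (idxU n) = idxU n := by
    have h2 : σ (idxU n) ∈ cset n i0 := by
      rw [← hcset0]
      exact Finset.mem_image_of_mem σ (by rw [mem_cset]; left; rfl)
    rw [mem_cset] at h2
    rcases h2 with h2 | h2
    · exact Fin.ext h2
    · exfalso
      have hz : (σ (idxU n)).1 = 0 := by have h0 : i0.1 = 0 := rfl; omega
      have : σ (idxU n) = σ (idxA n i0) := by
        rw [hA0]; apply Fin.ext; rw [hz]; simp [hi0]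
      have := σ.injective this
      have := congrArg Fin.val this
      simp only [idxU_val, idxA_val, hi0] at this
      omega
  have hL : σ (idxL n) = idxL n := by
    rcases k_cases n (σ (idxL n)) with ⟨i, hi⟩ | ⟨i, hi⟩ | hi | hi
    · exfalso
      have : σ (idxL n) ∈ aset n i := by rw [hi, mem_aset]; left; rfl
      rw [← hasetA i] at this
      obtain ⟨y, hy, hσy⟩ := Finset.mem_image.mp this
      have : y = idxL n := σ.injective hσy
      subst this
      rw [mem_aset] at hy
      simp only [idxL_val] at hy
      have := i.2; omega
    · exfalso
      have : σ (idxL n) ∈ aset n i := by rw [hi, mem_aset]; right; rfl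
      rw [← hasetA i] at this
      obtain ⟨y, hy, hσy⟩ := Finset.mem_image.mp this
      have : y = idxL n := σ.injective hσy
      subst this
      rw [mem_aset] at hy
      simp only [idxL_val] at hy
      have := i.2; omega
    · exfalso
      have : σ (idxL n) = σ (idxU n) := by rw [hi, hU]
      have := σ.injective this
      exact idxU_ne_idxL n this.symm
    · exact hi
  have hcsetAll : ∀ i : Fin n, Finset.image σ (cset n i) = cset n i := by
    intro i
    have h := hset (od n i)
    rw [idx_od, bset_c] at h
    rcases h with h | h
    · exact h
    · exfalso
      have hmem : idxL n ∈ (cset n i)ᶜ := by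
        rw [Finset.mem_compl, mem_cset]
        have := i.2
        simp only [idxL_val]
        omega
      rw [← h] at hmem
      obtain ⟨y, hy, hσy⟩ := Finset.mem_image.mp hmem
      rw [← hL] at hσy
      have : y = idxL n := σ.injective hσy
      subst this
      rw [mem_cset] at hy
      simp only [idxL_val] at hy
      have := i.2; omega
  have hAi : ∀ i : Fin n, σ (idxA n i) = idxA n i := by
    intro i
    have h1 := memA i (idxA n i) (by rw [mem_aset]; left; rfl)
    have h2 : σ (idxA n i) ∈ cset n i := by
      rw [← hcsetAll i]
      exact Finset.mem_image_of_mem σ (by rw [mem_cset]; right; simp)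
    rw [mem_aset] at h1
    rw [mem_cset] at h2
    have := i.2
    apply Fin.ext
    simp only [idxA_val] at h1 h2 ⊢
    omega
  have hCi : ∀ i : Fin n, σ (idxC n i) = idxC n i := by
    intro i
    have h1 := memA i (idxC n i) (by rw [mem_aset]; right; rfl)
    rw [mem_aset] at h1
    rcases h1 with h1 | h1
    · exfalso
      have : σ (idxC n i) = σ (idxA n i) := by
        rw [hAi i]; exact Fin.ext (by simp only [idxA_val]; exact h1)
      have := σ.injective this
      exact idxA_ne_idxC n this.symm
    · exact Fin.ext (by simp only [idxC_val]; exact h1)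
  apply Equiv.ext
  intro x
  rcases k_cases n x with ⟨i, rfl⟩ | ⟨i, rfl⟩ | rfl | rfl
  · rw [hAi i]; rfl
  · rw [hCi i]; rfl
  · rw [hU]; rfl
  · rw [hL]; rfl


lemma sfun_iv {m : ℕ} (F : Finset (Fin m)) : sfun (iv F) = (F.card : ZMod 2) := by
  rw [sfun, dotp_iv, Finset.univ_inter]

lemma dotp_pair {m : ℕ} {p q : Fin m} (hpq : p ≠ q) (w : Fin m → ZMod 2) :
    dotp w (iv {p, q}) = w p + w q := by
  unfold dotp iv
  rw [Finset.sum_congr rfl (fun j _ => by rw [mul_ite, mul_one, mul_zero])]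
  rw [Finset.sum_ite_mem, Finset.univ_inter, Finset.sum_pair hpq]

lemma sfun_pair {m : ℕ} {p q : Fin m} (hpq : p ≠ q) : sfun (iv ({p, q} : Finset (Fin m))) = 0 := by
  rw [sfun_iv, Finset.card_pair hpq]
  exact natcast_even (by omega)

lemma Pmap_pair_ne_zero (hn : 2 ≤ n) {p q : Fin (2*n+2)} (hpq : p ≠ q) :
    Pmap n (iv {p, q}) ≠ 0 := by
  intro h0
  have hLP := LP0 n (iv {p, q}) (sfun_pair hpq)
  rw [h0, Lmap_zero] at hLP
  have hu : iv ({p, q} : Finset (Fin (2*n+2)))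
      = ((bb n).repr (iv {p, q}) (idxU n)) • bvec n (idxU n) := by
    have := congrArg (· + ((bb n).repr (iv {p, q}) (idxU n)) • bvec n (idxU n)) hLP
    simp only [zero_add] at this
    rw [add_assoc, smul2, add_zero] at this
    exact this.symm
  rcases z2cases ((bb n).repr (iv {p, q}) (idxU n)) with h | h
  · rw [h, zero_smul] at hu
    have := congrFun hu p
    rw [show iv ({p,q} : Finset (Fin (2*n+2))) p = 1 from by
      rw [iv, if_pos (Finset.mem_insert_self p {q})]] at this
    exact one_ne_zero this
  · rw [h, one_smul, bvec, bset_u] at hu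
    have hset := iv_inj hu
    have hcard : ({p, q} : Finset (Fin (2*n+2))).card ≤ 2 := by
      refine le_trans (Finset.card_insert_le p {q}) ?_
      rw [Finset.card_singleton]
    have hcard2 := congrArg Finset.card hset
    rw [Finset.card_univ, Fintype.card_fin] at hcard2
    rw [hcard2] at hcard
    omega

lemma transvection (p q : Fin (2*n+2)) (hpq : p ≠ q) (x : Fin (2*n) → ZMod 2) :
    psiFun n (Equiv.swap p q) x
      = x + (sympForm n x (Pmap n (iv {p, q}))) • Pmap n (iv {p, q}) := by
  have hzero : dotp (Lmap n x) (bvec n (idxU n)) = 0 := by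
    rw [bvec, bset_u, dotp_comm]
    exact sfun_Lmap n x
  have hc : sympForm n x (Pmap n (iv {p, q})) = Lmap n x p + Lmap n x q := by
    rw [← dotp_LL, LP0 n _ (sfun_pair hpq), dotp_add_right, dotp_smul_right, hzero,
      mul_zero, add_zero, dotp_pair hpq]
  rw [psiFun, pact_swap hpq, Pmap_add, P_L, Pmap_smul, hc]


theorem partA (hn : 2 ≤ n) :
    ∃ ψ : Equiv.Perm (Fin (2 * n + 2)) →*
        ((Fin (2 * n) → ZMod 2) ≃ₗ[ZMod 2] (Fin (2 * n) → ZMod 2)),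
      Function.Injective ψ ∧
      ∀ τ : Equiv.Perm (Fin (2 * n + 2)), τ.IsSwap →
        ∃ v : Fin (2 * n) → ZMod 2, v ≠ 0 ∧
          ∀ w, (ψ τ) w = w + sympForm n w v • v := by
  refine ⟨psiH n, psiH_inj n hn, ?_⟩
  rintro τ ⟨p, q, hpq, rfl⟩
  exact ⟨Pmap n (iv {p, q}), Pmap_pair_ne_zero n hn hpq,
    fun w => transvection n p q hpq w⟩

-- bilinearity of sympForm
lemma sympForm_comm (x y : Fin (2*n) → ZMod 2) : sympForm n x y = sympForm n y x :=
  Finset.sum_congr rfl fun i _ => by ring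

lemma sympForm_self (x : Fin (2*n) → ZMod 2) : sympForm n x x = 0 := by
  rw [sympForm, Finset.sum_congr rfl (fun i _ => show _ = (0:ZMod 2) by
    rw [mul_comm]; exact z2add _)]
  exact Finset.sum_const_zero

lemma sympForm_zero_right (x : Fin (2*n) → ZMod 2) : sympForm n x 0 = 0 := by
  rw [sympForm]
  simp

lemma sympForm_add_right (x y z : Fin (2*n) → ZMod 2) :
    sympForm n x (y + z) = sympForm n x y + sympForm n x z := by
  rw [sympForm, sympForm, sympForm, ← Finset.sum_add_distrib]
  refine Finset.sum_congr rfl fun i _ => ?_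
  simp only [Pi.add_apply]
  ring

lemma sympForm_smul_right (c : ZMod 2) (x y : Fin (2*n) → ZMod 2) :
    sympForm n x (c • y) = c * sympForm n x y := by
  rw [sympForm, sympForm, Finset.mul_sum]
  refine Finset.sum_congr rfl fun i _ => ?_
  simp only [Pi.smul_apply, smul_eq_mul]
  ring

lemma sympForm_add_left (x y z : Fin (2*n) → ZMod 2) :
    sympForm n (x + y) z = sympForm n x z + sympForm n y z := by
  rw [sympForm_comm, sympForm_add_right, sympForm_comm n z x, sympForm_comm n z y]

lemma sympForm_smul_left (c : ZMod 2) (x y : Fin (2*n) → ZMod 2) :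
    sympForm n (c • x) y = c * sympForm n x y := by
  rw [sympForm_comm, sympForm_smul_right, sympForm_comm n y x]

lemma sympForm_sum_right {ι : Type*} (x : Fin (2*n) → ZMod 2) (s : Finset ι)
    (v : ι → Fin (2*n) → ZMod 2) :
    sympForm n x (∑ i ∈ s, v i) = ∑ i ∈ s, sympForm n x (v i) := by
  classical
  induction s using Finset.induction_on with
  | empty => simp [sympForm_zero_right]
  | insert _ _ h ih => rw [Finset.sum_insert h, Finset.sum_insert h, sympForm_add_right, ih]

theorem partB (hn : 2 ≤ n) :
    ¬ (∃ ψ : Equiv.Perm (Fin (2 * n + 3)) →*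
        ((Fin (2 * n) → ZMod 2) ≃ₗ[ZMod 2] (Fin (2 * n) → ZMod 2)),
      Function.Injective ψ ∧
      ∀ τ : Equiv.Perm (Fin (2 * n + 3)), τ.IsSwap →
        ∃ v : Fin (2 * n) → ZMod 2, v ≠ 0 ∧
          ∀ w, (ψ τ) w = w + sympForm n w v • v) := by
  rintro ⟨ψ, hinj, htr⟩
  set pt : Fin (2*n+2) → Fin (2*n+3) := fun i => ⟨i.1+1, by have := i.2; omega⟩ with hpt
  have pt_ne0 : ∀ i, pt i ≠ 0 := by
    intro i h
    have := congrArg Fin.val h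
    simp [hpt] at this
  have pt_inj : ∀ i j, pt i = pt j → i = j := by
    intro i j h
    have := congrArg Fin.val h
    simp only [hpt] at this
    exact Fin.ext (by omega)
  set s : Fin (2*n+2) → Equiv.Perm (Fin (2*n+3)) := fun i => Equiv.swap 0 (pt i) with hs
  have hswap : ∀ i, (s i).IsSwap := fun i => ⟨0, pt i, Ne.symm (pt_ne0 i), rfl⟩
  choose u hune huf using fun i => htr (s i) (hswap i)
  -- step 1: pairwise form equal to 1
  have key1 : ∀ i j : Fin (2*n+2), i ≠ j → sympForm n (u i) (u j) = 1 := by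
    intro i j hij
    by_contra hB1
    have hB0 : sympForm n (u i) (u j) = 0 := (z2cases _).resolve_right hB1
    have hB0' : sympForm n (u j) (u i) = 0 := by rw [sympForm_comm]; exact hB0
    have hval : ∀ w, (ψ (s i)) ((ψ (s j)) ((ψ (s i)) ((ψ (s j)) w))) = w := by
      intro w
      rw [huf j w, huf i _, huf j _, huf i _]
      simp only [sympForm_add_left, sympForm_smul_left, hB0, hB0', sympForm_self,
        mul_zero, add_zero, zero_mul]
      set ca := sympForm n w (u i)
      set cb := sympForm n w (u j)
      have : w + cb • u j + ca • u i + cb • u j + ca • u i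
          = w + (cb • u j + cb • u j) + (ca • u i + ca • u i) := by abel
      rw [this, smul2, smul2, add_zero, add_zero]
    have hperm : s i * (s j * (s i * s j)) = 1 := by
      apply hinj
      rw [map_one, map_mul, map_mul, map_mul]
      apply LinearEquiv.toLinearMap_injective
      apply LinearMap.ext
      intro w
      exact hval w
    have this : (s i * (s j * (s i * s j))) (pt i)
        = (1 : Equiv.Perm (Fin (2*n+3))) (pt i) := by rw [hperm]
    simp only [Equiv.Perm.mul_apply, Equiv.Perm.one_apply] at this
    rw [hs] at this
    rw [Equiv.swap_apply_of_ne_of_ne (pt_ne0 i) (fun h => hij (pt_inj i j h)),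
      Equiv.swap_apply_right, Equiv.swap_apply_left,
      Equiv.swap_apply_of_ne_of_ne (pt_ne0 j) (fun h => hij (pt_inj i j h.symm))] at this
    exact hij (pt_inj j i this).symm
  -- step 2: impossibility
  set w' : Fin (2*n+1) → (Fin (2*n) → ZMod 2) := fun k => u ⟨k.1, by have := k.2; omega⟩
    with hw'
  have hnli : ¬ LinearIndependent (ZMod 2) w' := by
    intro hli
    have hle := hli.fintype_card_le_finrank
    rw [Fintype.card_fin, Module.finrank_fintype_fun_eq_card, Fintype.card_fin] at hle
    omega
  obtain ⟨g, hgsum, i₀, hgi₀⟩ := Fintype.not_linearIndependent_iff.mp hnli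
  set Sf := univ.filter (fun k : Fin (2*n+1) => g k ≠ 0) with hSf
  have hi₀ : i₀ ∈ Sf := Finset.mem_filter.mpr ⟨Finset.mem_univ _, hgi₀⟩
  have hsum1 : ∑ k ∈ Sf, w' k = 0 := by
    have h1 : ∑ k ∈ Sf, w' k = ∑ k ∈ Sf, g k • w' k := by
      refine Finset.sum_congr rfl fun k hk => ?_
      rcases z2cases (g k) with h | h
      · exact absurd h (Finset.mem_filter.mp hk).2
      · rw [h, one_smul]
    have h2 : ∑ k ∈ Sf, g k • w' k = ∑ k, g k • w' k := by
      apply Finset.sum_filter_of_ne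
      intro x _ hfx hgx
      exact hfx (by rw [hgx, zero_smul])
    rw [h1, h2, hgsum]
  set cst : Fin (2*n+1) → Fin (2*n+2) := fun k => ⟨k.1, by have := k.2; omega⟩ with hcst
  set T := Sf.image cst with hT
  have hinjon : Set.InjOn cst Sf := by
    intro x _ y _ h
    have := congrArg Fin.val h
    simp only [hcst] at this
    exact Fin.ext this
  have hTsum : ∑ t ∈ T, u t = 0 := by
    rw [hT, Finset.sum_image hinjon]
    exact hsum1
  have hTcard : T.card = Sf.card := Finset.card_image_of_injOn hinjon
  set lastE : Fin (2*n+2) := ⟨2*n+1, by omega⟩ with hlastE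
  have hlast_not : lastE ∉ T := by
    intro h
    obtain ⟨k, hk, he⟩ := Finset.mem_image.mp h
    have := congrArg Fin.val he
    simp only [hcst, hlastE] at this
    have := k.2
    omega
  have hBsum : ∀ j : Fin (2*n+2), ∑ t ∈ T, sympForm n (u j) (u t) = 0 := by
    intro j
    rw [← sympForm_sum_right, hTsum, sympForm_zero_right]
  -- T.card is even
  have heven : (T.card : ZMod 2) = 0 := by
    have h := hBsum lastE
    rw [Finset.sum_congr rfl (fun t ht => key1 lastE t
      (fun he => hlast_not (he ▸ ht)))] at h
    rw [Finset.sum_const, nsmul_eq_mul, mul_one] at h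
    exact h
  -- T.card - 1 is even
  set j₁ : Fin (2*n+2) := cst i₀ with hj₁
  have hj₁T : j₁ ∈ T := Finset.mem_image_of_mem cst hi₀
  have hodd : ((T.card - 1 : ℕ) : ZMod 2) = 0 := by
    have h := hBsum j₁
    rw [← Finset.add_sum_erase T _ hj₁T, sympForm_self, zero_add] at h
    rw [Finset.sum_congr rfl (fun t ht => key1 j₁ t
      (fun he => (Finset.mem_erase.mp ht).1 he.symm))] at h
    rw [Finset.sum_const, nsmul_eq_mul, mul_one, Finset.card_erase_of_mem hj₁T] at h
    exact h
  have hd1 : (2 : ℕ) ∣ T.card := by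
    rw [← ZMod.natCast_eq_zero_iff]
    exact heven
  have hd2 : (2 : ℕ) ∣ (T.card - 1) := by
    rw [← ZMod.natCast_eq_zero_iff]
    exact hodd
  have hpos : 1 ≤ T.card := Finset.card_pos.mpr ⟨j₁, hj₁T⟩
  omega

end Construction

end PhiSymp


/-- `φ(Sp_{2n}(2)) = 2n + 2` for `n ≥ 2`: the symmetric group `S (2n+2)`
embeds into `Sp_{2n}(2)` with all transpositions going to symplectic transvections, while
`S (2n+3)` does not. -/
theorem phi_symplectic (n : ℕ) (hn : 2 ≤ n) :
    (∃ ψ : Equiv.Perm (Fin (2 * n + 2)) →*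
        ((Fin (2 * n) → ZMod 2) ≃ₗ[ZMod 2] (Fin (2 * n) → ZMod 2)),
      Function.Injective ψ ∧
      ∀ τ : Equiv.Perm (Fin (2 * n + 2)), τ.IsSwap →
        ∃ v : Fin (2 * n) → ZMod 2, v ≠ 0 ∧
          ∀ w, (ψ τ) w = w + sympForm n w v • v) ∧
    ¬ (∃ ψ : Equiv.Perm (Fin (2 * n + 3)) →*
        ((Fin (2 * n) → ZMod 2) ≃ₗ[ZMod 2] (Fin (2 * n) → ZMod 2)),
      Function.Injective ψ ∧
      ∀ τ : Equiv.Perm (Fin (2 * n + 3)), τ.IsSwap →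
        ∃ v : Fin (2 * n) → ZMod 2, v ≠ 0 ∧
          ∀ w, (ψ τ) w = w + sympForm n w v • v) := by
  exact ⟨PhiSymp.partA n hn, PhiSymp.partB n hn⟩
end

section
/- Let n ≥ 5 be odd and let V = (Fin n → F₄), where F₄ = GaloisField 2 2 is the field with four elements, equipped with the Hermitian form B(x,y) = Σ_i x_i y_i². Then: (a) there exists an injective group homomorphism ψ from the symmetric group S_{n+1} to the group of linear automorphisms of V such that for every transposition τ ∈ S_{n+1}, ψ(τ) is a unitary transvection t_v for some nonzero singular vector v ∈ V; and (b) there is no injective group homomorphism from S_{n+2} to the linear automorphisms of V sending every transposition to a unitary transvection. (Equivalently, φ(U_n(2)) = n+1 for odd n ≥ 5.) -/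
/-- The field with four elements. -/
abbrev F4 : Type := GaloisField 2 2

/-- The standard Hermitian form on `F₄ⁿ`: `B x y = ∑ i, x i * (y i)²`
(conjugation in `F₄` is `a ↦ a²`). -/
noncomputable def hermForm (n : ℕ) (x y : Fin n → F4) : F4 :=
  ∑ i : Fin n, x i * (y i) ^ 2

noncomputable instance : Fintype F4 := Fintype.ofFinite F4

lemma F4card : Fintype.card F4 = 4 := by
  rw [← Nat.card_eq_fintype_card, GaloisField.card 2 2 (by norm_num)]; norm_num

lemma F4pow4 (a : F4) : a ^ 4 = a := by
  have := FiniteField.pow_card a; rwa [F4card] at this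

lemma F4pow3 {a : F4} (h : a ≠ 0) : a ^ 3 = 1 := by
  have := FiniteField.pow_card_sub_one_eq_one a h; rwa [F4card] at this

lemma F4two : (2 : F4) = 0 := by exact_mod_cast CharP.cast_eq_zero F4 2

lemma F4add (a : F4) : a + a = 0 := by
  have h := F4two; linear_combination a * h

lemma F4cast_even {m : ℕ} (h : Even m) : (m : F4) = 0 := by
  obtain ⟨k, rfl⟩ := h
  push_cast
  linear_combination (k : F4) * F4two

lemma F4cast_odd {m : ℕ} (h : Odd m) : (m : F4) = 1 := by
  obtain ⟨k, rfl⟩ := h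
  push_cast
  linear_combination (k : F4) * F4two

section herm
variable {n : ℕ}

lemma herm_def (x y : Fin n → F4) : hermForm n x y = ∑ i : Fin n, x i * (y i) ^ 2 := rfl

lemma herm_add_left (x x' y : Fin n → F4) :
    hermForm n (x + x') y = hermForm n x y + hermForm n x' y := by
  simp [hermForm, add_mul, Finset.sum_add_distrib]

lemma herm_smul_left (c : F4) (x y : Fin n → F4) :
    hermForm n (c • x) y = c * hermForm n x y := by
  simp [hermForm, Finset.mul_sum, mul_assoc]

lemma herm_add_right (x y y' : Fin n → F4) :
    hermForm n x (y + y') = hermForm n x y + hermForm n x y' := by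
  have h2 : ∀ a b : F4, (a + b) ^ 2 = a ^ 2 + b ^ 2 := CharTwo.add_sq
  simp only [hermForm, Pi.add_apply]
  rw [← Finset.sum_add_distrib]
  exact Finset.sum_congr rfl fun i _ => by rw [h2]; ring

lemma herm_smul_right (c : F4) (x y : Fin n → F4) :
    hermForm n x (c • y) = c ^ 2 * hermForm n x y := by
  simp only [hermForm, Pi.smul_apply, smul_eq_mul, mul_pow, Finset.mul_sum]
  exact Finset.sum_congr rfl fun i _ => by ring

lemma herm_conj (x y : Fin n → F4) : hermForm n y x = (hermForm n x y) ^ 2 := by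
  rw [hermForm, hermForm, CharTwo.sum_sq]
  exact Finset.sum_congr rfl fun i _ => by
    rw [mul_pow, ← pow_mul, show 2 * 2 = 4 from rfl, F4pow4]
    ring

lemma herm_zero_left (y : Fin n → F4) : hermForm n 0 y = 0 := by simp [hermForm]

lemma herm_zero_right (x : Fin n → F4) : hermForm n x 0 = 0 := by simp [hermForm]

lemma herm_single_left (i : Fin n) (y : Fin n → F4) :
    hermForm n (Pi.single i 1) y = (y i) ^ 2 := by
  simp [hermForm, Pi.single_apply, Finset.sum_ite_eq']

lemma herm_sum_left {m : ℕ} (g : Fin m → F4) (w : Fin m → Fin n → F4) (y : Fin n → F4) :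
    hermForm n (∑ k, g k • w k) y = ∑ k, g k * hermForm n (w k) y := by
  simp only [hermForm, Finset.sum_apply, Pi.smul_apply, smul_eq_mul, Finset.sum_mul,
    Finset.mul_sum]
  rw [Finset.sum_comm]
  exact Finset.sum_congr rfl fun i _ => Finset.sum_congr rfl fun k _ => by ring

end herm

section partA
open Finset
variable {n : ℕ}

/-- all-ones vector -/
noncomputable def jvec (m : ℕ) : Fin m → F4 := fun _ => 1

noncomputable def Lfun (w : Fin n → F4) : Fin (n+1) → F4 :=
  fun l => if h : l = Fin.last n then 0 else w (l.castPred h) + ∑ i, w i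

noncomputable def Rfun (x : Fin (n+1) → F4) : Fin n → F4 :=
  fun k => x k.castSucc + ∑ l : Fin n, x l.castSucc

lemma Lfun_castSucc (w : Fin n → F4) (k : Fin n) :
    Lfun w k.castSucc = w k + ∑ i, w i := by
  rw [Lfun, dif_neg (Fin.castSucc_lt_last k).ne]
  simp

lemma Lfun_last (w : Fin n → F4) : Lfun w (Fin.last n) = 0 := by
  rw [Lfun, dif_pos rfl]

lemma sum_Lfun (hn1 : (n : F4) = 1) (w : Fin n → F4) :
    ∑ l, Lfun w l = 0 := by
  rw [Fin.sum_univ_castSucc]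
  simp only [Lfun_last, add_zero]
  simp only [Lfun_castSucc]
  rw [Finset.sum_add_distrib, Finset.sum_const]
  simp only [card_univ, Fintype.card_fin, nsmul_eq_mul, hn1, one_mul]
  exact F4add _

lemma sum_Rfun (hn1 : (n : F4) = 1) (x : Fin (n+1) → F4) :
    ∑ k, Rfun x k = 0 := by
  simp only [Rfun]
  rw [Finset.sum_add_distrib, Finset.sum_const]
  simp only [card_univ, Fintype.card_fin, nsmul_eq_mul, hn1, one_mul]
  exact F4add _

lemma Rfun_add (x y : Fin (n+1) → F4) : Rfun (x + y) = Rfun x + Rfun y := by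
  funext k
  simp [Rfun, Finset.sum_add_distrib]
  ring

lemma Rfun_smul (c : F4) (x : Fin (n+1) → F4) : Rfun (c • x) = c • Rfun x := by
  funext k
  simp [Rfun, Finset.mul_sum, mul_add]

lemma Rfun_const (hn1 : (n : F4) = 1) : Rfun (jvec (n+1)) = 0 := by
  funext k
  simp only [Rfun, jvec, Finset.sum_const, card_univ, Fintype.card_fin, nsmul_eq_mul, hn1, one_mul,
    Pi.zero_apply]
  exact F4add _

/-- the representation map, as a bare function -/
noncomputable def Afun (σ : Equiv.Perm (Fin (n+1))) (w : Fin n → F4) : Fin n → F4 :=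
  Rfun (fun l => Lfun w (σ⁻¹ l)) + (∑ i, w i) • jvec n

lemma sum_Afun (hn1 : (n : F4) = 1) (σ : Equiv.Perm (Fin (n+1))) (w : Fin n → F4) :
    ∑ k, Afun σ w k = ∑ i, w i := by
  simp only [Afun, Pi.add_apply, Finset.sum_add_distrib, sum_Rfun hn1, Pi.smul_apply,
    jvec, smul_eq_mul, mul_one, Finset.sum_const, card_univ, Fintype.card_fin, zero_add,
    nsmul_eq_mul]
  rw [hn1, one_mul]

lemma Lfun_Rfun (hn1 : (n : F4) = 1) (x : Fin (n+1) → F4) (hx : ∑ l, x l = 0) (t : F4) :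
    Lfun (Rfun x + t • jvec n) = x + (∑ l : Fin n, x l.castSucc) • jvec (n+1) := by
  have hlast : x (Fin.last n) = ∑ l : Fin n, x l.castSucc := by
    have := hx
    rw [Fin.sum_univ_castSucc] at this
    have h4 := F4add (x (Fin.last n))
    linear_combination h4 - this
  funext l
  rcases eq_or_ne l (Fin.last n) with rfl | hl
  · rw [Lfun_last]
    simp only [Pi.add_apply, Pi.smul_apply, jvec, smul_eq_mul, mul_one, hlast]
    exact (F4add _).symm
  · obtain ⟨k, rfl⟩ := Fin.exists_castSucc_eq.mpr hl
    rw [Lfun_castSucc]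
    have hsum : ∑ i, (Rfun x + t • jvec n) i = t := by
      simp only [Pi.add_apply, Finset.sum_add_distrib, sum_Rfun hn1, Pi.smul_apply, jvec,
        smul_eq_mul, mul_one, Finset.sum_const, card_univ, Fintype.card_fin, zero_add,
        nsmul_eq_mul, hn1, one_mul]
    rw [hsum]
    simp only [Pi.add_apply, Pi.smul_apply, jvec, smul_eq_mul, mul_one, Rfun]
    have h4 := F4add t
    linear_combination h4

lemma Afun_one (hn1 : (n : F4) = 1) (w : Fin n → F4) : Afun 1 w = w := by
  funext k
  simp only [Afun, inv_one, Equiv.Perm.one_apply, Pi.add_apply, Rfun, Lfun_castSucc,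
    Pi.smul_apply, jvec, smul_eq_mul, mul_one]
  rw [Finset.sum_add_distrib, Finset.sum_const]
  simp only [card_univ, Fintype.card_fin, nsmul_eq_mul, hn1, one_mul]
  have h4 := F4add (∑ i, w i)
  linear_combination (2:F4) * h4

lemma Afun_mul (hn1 : (n : F4) = 1) (σ ρ : Equiv.Perm (Fin (n+1))) (w : Fin n → F4) :
    Afun σ (Afun ρ w) = Afun (σ * ρ) w := by
  set x : Fin (n+1) → F4 := fun l => Lfun w (ρ⁻¹ l) with hxdef
  have hTx : ∑ l, x l = 0 := by
    rw [hxdef]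
    rw [Equiv.sum_comp ρ⁻¹ (Lfun w)]
    exact sum_Lfun hn1 w
  have hL : Lfun (Afun ρ w) = x + (∑ l : Fin n, x l.castSucc) • jvec (n+1) := by
    rw [Afun, Lfun_Rfun hn1 x hTx]
  rw [Afun, hL]
  have hcomp : ∀ l, (x + (∑ l : Fin n, x l.castSucc) • jvec (n+1)) ((σ⁻¹ : Equiv.Perm (Fin (n+1))) l)
      = (fun l => Lfun w ((σ * ρ)⁻¹ l)) l + ((∑ l : Fin n, x l.castSucc) • jvec (n+1)) l := by
    intro l
    have hperm : ((σ * ρ)⁻¹ : Equiv.Perm (Fin (n+1))) l = ρ⁻¹ (σ⁻¹ l) := by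
      simp [mul_inv_rev]
    simp only [Pi.add_apply, Pi.smul_apply, hxdef, hperm, jvec]
  have : (fun l => (x + (∑ l : Fin n, x l.castSucc) • jvec (n+1)) (σ⁻¹ l))
      = (fun l => Lfun w ((σ * ρ)⁻¹ l)) + (∑ l : Fin n, x l.castSucc) • jvec (n+1) := by
    funext l; exact hcomp l
  rw [this, Rfun_add, Rfun_smul, Rfun_const hn1]
  rw [sum_Afun hn1, smul_zero, add_zero, Afun]

end partA

section partA2
open Finset
variable {n : ℕ}

lemma Lfun_add (w w' : Fin n → F4) : Lfun (w + w') = Lfun w + Lfun w' := by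
  funext l
  rcases eq_or_ne l (Fin.last n) with rfl | hl
  · simp [Lfun_last]
  · obtain ⟨k, rfl⟩ := Fin.exists_castSucc_eq.mpr hl
    simp only [Lfun_castSucc, Pi.add_apply, Finset.sum_add_distrib]
    ring

lemma Lfun_smul (c : F4) (w : Fin n → F4) : Lfun (c • w) = c • Lfun w := by
  funext l
  rcases eq_or_ne l (Fin.last n) with rfl | hl
  · simp [Lfun_last]
  · obtain ⟨k, rfl⟩ := Fin.exists_castSucc_eq.mpr hl
    simp only [Lfun_castSucc, Pi.smul_apply, smul_eq_mul, Finset.mul_sum, mul_add]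

lemma Afun_add (σ : Equiv.Perm (Fin (n+1))) (w w' : Fin n → F4) :
    Afun σ (w + w') = Afun σ w + Afun σ w' := by
  simp only [Afun]
  have h1 : (fun l => Lfun (w + w') (σ⁻¹ l))
      = (fun l => Lfun w (σ⁻¹ l)) + (fun l => Lfun w' (σ⁻¹ l)) := by
    funext l; rw [Lfun_add]; rfl
  rw [h1, Rfun_add]
  have h2 : ∑ i, (w + w') i = (∑ i, w i) + (∑ i, w' i) := by
    simp [Finset.sum_add_distrib]
  rw [h2, add_smul]
  abel

lemma Afun_smul (σ : Equiv.Perm (Fin (n+1))) (c : F4) (w : Fin n → F4) :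
    Afun σ (c • w) = c • Afun σ w := by
  simp only [Afun]
  have h1 : (fun l => Lfun (c • w) (σ⁻¹ l)) = c • (fun l => Lfun w (σ⁻¹ l)) := by
    funext l; rw [Lfun_smul]; rfl
  rw [h1, Rfun_smul]
  have h2 : ∑ i, (c • w) i = c * ∑ i, w i := by
    simp [Finset.mul_sum]
  rw [h2, smul_add, mul_smul]

/-- indicator-pair vector -/
noncomputable def pvec {m : ℕ} (a b : Fin m) : Fin m → F4 :=
  fun l => (if l = a then 1 else 0) + (if l = b then 1 else 0)

lemma pvec_sq {m : ℕ} {a b : Fin m} (hab : a ≠ b) (k : Fin m) :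
    (pvec a b k) ^ 2 = pvec a b k := by
  rcases eq_or_ne k a with rfl | ha
  · simp [pvec, if_neg (hab)]
  · rcases eq_or_ne k b with rfl | hb
    · simp [pvec, if_neg ha]
    · simp [pvec, if_neg ha, if_neg hb]

lemma herm_pvec_right {a b : Fin n} (hab : a ≠ b) (w : Fin n → F4) :
    hermForm n w (pvec a b) = w a + w b := by
  simp only [hermForm]
  rw [Finset.sum_congr rfl fun k _ => by rw [pvec_sq hab]]
  simp only [pvec, mul_add, Finset.sum_add_distrib, mul_ite, mul_one, mul_zero]
  rw [Finset.sum_ite_eq' univ a w, Finset.sum_ite_eq' univ b w]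
  simp

lemma pvec_ne_zero {m : ℕ} {a b : Fin m} (hab : a ≠ b) : pvec a b ≠ 0 := by
  intro h
  have := congrFun h a
  simp [pvec, if_neg (hab)] at this

lemma herm_pvec_self {a b : Fin n} (hab : a ≠ b) : hermForm n (pvec a b) (pvec a b) = 0 := by
  rw [herm_pvec_right hab]
  have h1 : pvec a b a = 1 := by simp [pvec, if_neg hab]
  have h2 : pvec a b b = 1 := by simp [pvec, if_neg (Ne.symm hab)]
  rw [h1, h2]
  exact F4add 1

/-- complement-indicator vector -/
noncomputable def wvec {m : ℕ} (a : Fin m) : Fin m → F4 :=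
  fun k => (if k = a then 1 else 0) + 1

lemma wvec_sq {m : ℕ} (a : Fin m) (k : Fin m) : (wvec a k) ^ 2 = wvec a k := by
  rcases eq_or_ne k a with rfl | h
  · simp [wvec]
    rw [F4add 1]
    ring
  · simp [wvec, if_neg h]

lemma herm_wvec_right (a : Fin n) (w : Fin n → F4) :
    hermForm n w (wvec a) = (∑ k, w k) + w a := by
  simp only [hermForm]
  rw [Finset.sum_congr rfl fun k _ => by rw [wvec_sq]]
  simp only [wvec, mul_add, Finset.sum_add_distrib, mul_ite, mul_one, mul_zero]
  rw [Finset.sum_ite_eq' univ a w]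
  simp [add_comm]

lemma herm_wvec_self (hn1 : (n : F4) = 1) (a : Fin n) :
    hermForm n (wvec a) (wvec a) = 0 := by
  rw [herm_wvec_right]
  have h1 : ∑ k, wvec a k = (1 : F4) + (n : F4) := by
    simp only [wvec, Finset.sum_add_distrib, Finset.sum_ite_eq' univ a (fun _ => (1:F4))]
    simp [card_univ]
  rw [h1, hn1]
  simp [wvec]
  rw [F4add 1]
  simp

lemma exists_not_mem3 (hn : 5 ≤ n) (x y z : Fin n) : ∃ k : Fin n, k ≠ x ∧ k ≠ y ∧ k ≠ z := by
  have h3 : ({x, y, z} : Finset (Fin n)).card ≤ 3 := by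
    apply le_trans (Finset.card_insert_le _ _)
    apply Nat.succ_le_succ
    apply le_trans (Finset.card_insert_le _ _)
    apply Nat.succ_le_succ
    simp
  have hns : ¬ ((univ : Finset (Fin n)) ⊆ {x, y, z}) := by
    intro hsub
    have := Finset.card_le_card hsub
    rw [card_univ, Fintype.card_fin] at this
    omega
  obtain ⟨k, -, hk⟩ := Finset.not_subset.mp hns
  refine ⟨k, ?_, ?_, ?_⟩ <;> simp only [Finset.mem_insert, Finset.mem_singleton, not_or] at hk <;> tauto

lemma wvec_ne_zero (hn : 5 ≤ n) (a : Fin n) : wvec a ≠ (0 : Fin n → F4) := by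
  obtain ⟨k, hk, -, -⟩ := exists_not_mem3 hn a a a
  intro h
  have := congrFun h k
  simp [wvec, if_neg hk] at this

lemma sum_ind (p : Fin (n+1)) :
    ∑ l : Fin n, (if l.castSucc = p then (1:F4) else 0) = if p = Fin.last n then 0 else 1 := by
  rcases eq_or_ne p (Fin.last n) with rfl | hp
  · rw [if_pos rfl]
    apply Finset.sum_eq_zero
    intro l _
    rw [if_neg (Fin.castSucc_lt_last l).ne]
  · obtain ⟨a, rfl⟩ := Fin.exists_castSucc_eq.mpr hp
    rw [if_neg hp]
    have : ∀ l : Fin n, (if l.castSucc = a.castSucc then (1:F4) else 0) = if l = a then 1 else 0 := by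
      intro l
      simp [Fin.castSucc_inj]
    rw [Finset.sum_congr rfl fun l _ => this l]
    simp [Finset.sum_ite_eq']

lemma Rfun_pvec_ne {p q : Fin (n+1)} (hp : p ≠ Fin.last n) (hq : q ≠ Fin.last n) :
    Rfun (pvec p q) = pvec (p.castPred hp) (q.castPred hq) := by
  funext k
  simp only [Rfun, pvec, Finset.sum_add_distrib, sum_ind, if_neg hp, if_neg hq]
  have e1 : (k.castSucc = p) ↔ (k = p.castPred hp) := by
    constructor
    · rintro rfl; simp
    · rintro rfl; simp
  have e2 : (k.castSucc = q) ↔ (k = q.castPred hq) := by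
    constructor
    · rintro rfl; simp
    · rintro rfl; simp
  rw [if_congr e1 rfl rfl, if_congr e2 rfl rfl]
  have h4 := F4add (1:F4)
  linear_combination h4

lemma Rfun_pvec_last {p : Fin (n+1)} (hp : p ≠ Fin.last n) :
    Rfun (pvec p (Fin.last n)) = wvec (p.castPred hp) := by
  funext k
  simp only [Rfun, pvec, wvec, Finset.sum_add_distrib, sum_ind, if_neg hp, if_pos rfl]
  have e1 : (k.castSucc = p) ↔ (k = p.castPred hp) := by
    constructor
    · rintro rfl; simp
    · rintro rfl; simp
  rw [if_congr e1 rfl rfl, if_neg (Fin.castSucc_lt_last k).ne]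
  simp

end partA2

section partA3
open Finset
variable {n : ℕ}

lemma pvec_comm {m : ℕ} (a b : Fin m) : pvec a b = pvec b a := by
  funext l; simp [pvec, add_comm]

lemma RfunLfun (hn1 : (n : F4) = 1) (w : Fin n → F4) :
    Rfun (Lfun w) + (∑ i, w i) • jvec n = w := by
  funext k
  simp only [Pi.add_apply, Rfun, Lfun_castSucc, Pi.smul_apply, jvec, smul_eq_mul, mul_one]
  rw [Finset.sum_add_distrib, Finset.sum_const]
  simp only [card_univ, Fintype.card_fin, nsmul_eq_mul, hn1, one_mul]
  have h4 := F4add (∑ i, w i)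
  linear_combination (2:F4) * h4

lemma swap_action {p q : Fin (n+1)} (hpq : p ≠ q) (x : Fin (n+1) → F4) :
    (fun l => x ((Equiv.swap p q)⁻¹ l)) = x + (x p + x q) • pvec p q := by
  funext l
  rw [Equiv.swap_inv]
  rcases eq_or_ne l p with rfl | hlp
  · rw [Equiv.swap_apply_left]
    have hv : pvec l q l = 1 := by simp [pvec, if_neg hpq]
    simp only [Pi.add_apply, Pi.smul_apply, smul_eq_mul, hv, mul_one]
    linear_combination -F4add (x l)
  · rcases eq_or_ne l q with rfl | hlq
    · rw [Equiv.swap_apply_right]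
      have hv : pvec p l l = 1 := by simp [pvec, if_neg (Ne.symm hpq)]
      simp only [Pi.add_apply, Pi.smul_apply, smul_eq_mul, hv, mul_one]
      linear_combination -F4add (x l)
    · rw [Equiv.swap_apply_of_ne_of_ne hlp hlq]
      have hv : pvec p q l = 0 := by simp [pvec, if_neg hlp, if_neg hlq]
      simp only [Pi.add_apply, Pi.smul_apply, smul_eq_mul, hv, mul_zero, add_zero]

lemma Afun_swap_eq (hn1 : (n : F4) = 1) {p q : Fin (n+1)} (hpq : p ≠ q) (w : Fin n → F4) :
    Afun (Equiv.swap p q) w = w + (Lfun w p + Lfun w q) • Rfun (pvec p q) := by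
  rw [Afun, swap_action hpq (Lfun w), Rfun_add, Rfun_smul]
  have := RfunLfun hn1 w
  calc Rfun (Lfun w) + (Lfun w p + Lfun w q) • Rfun (pvec p q) + (∑ i, w i) • jvec n
      = (Rfun (Lfun w) + (∑ i, w i) • jvec n) + (Lfun w p + Lfun w q) • Rfun (pvec p q) := by abel
    _ = w + (Lfun w p + Lfun w q) • Rfun (pvec p q) := by rw [this]

lemma castPred_ne {p q : Fin (n+1)} (hpq : p ≠ q) (hp : p ≠ Fin.last n) (hq : q ≠ Fin.last n) :
    p.castPred hp ≠ q.castPred hq := by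
  intro h
  apply hpq
  rw [← Fin.castSucc_castPred p hp, ← Fin.castSucc_castPred q hq, h]

lemma Afun_swap_transvection (hn1 : (n : F4) = 1) (hn : 5 ≤ n)
    {p q : Fin (n+1)} (hpq : p ≠ q) :
    ∃ v : Fin n → F4, v ≠ 0 ∧ hermForm n v v = 0 ∧
      ∀ w, Afun (Equiv.swap p q) w = w + hermForm n w v • v := by
  suffices main : ∀ p q : Fin (n+1), p ≠ q → p ≠ Fin.last n →
      ∃ v : Fin n → F4, v ≠ 0 ∧ hermForm n v v = 0 ∧
        ∀ w, Afun (Equiv.swap p q) w = w + hermForm n w v • v by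
    rcases eq_or_ne p (Fin.last n) with rfl | hp
    · have hq : q ≠ Fin.last n := hpq.symm
      obtain ⟨v, h1, h2, h3⟩ := main q (Fin.last n) hpq.symm hq
      exact ⟨v, h1, h2, fun w => by rw [Equiv.swap_comm]; exact h3 w⟩
    · exact main p q hpq hp
  intro p q hpq hp
  rcases eq_or_ne q (Fin.last n) with rfl | hq
  · refine ⟨wvec (p.castPred hp), wvec_ne_zero hn _, herm_wvec_self hn1 _, fun w => ?_⟩
    rw [Afun_swap_eq hn1 hpq, Rfun_pvec_last hp]
    have hc : Lfun w p + Lfun w (Fin.last n) = hermForm n w (wvec (p.castPred hp)) := by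
      rw [Lfun_last, herm_wvec_right, add_zero]
      conv_lhs => rw [← Fin.castSucc_castPred p hp]
      rw [Lfun_castSucc]
      ring
    rw [hc]
  · have hpq' := castPred_ne hpq hp hq
    refine ⟨pvec (p.castPred hp) (q.castPred hq), pvec_ne_zero hpq', herm_pvec_self hpq',
      fun w => ?_⟩
    rw [Afun_swap_eq hn1 hpq, Rfun_pvec_ne hp hq]
    have hc : Lfun w p + Lfun w q
        = hermForm n w (pvec (p.castPred hp) (q.castPred hq)) := by
      rw [herm_pvec_right hpq']
      conv_lhs => rw [← Fin.castSucc_castPred p hp, ← Fin.castSucc_castPred q hq]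
      rw [Lfun_castSucc, Lfun_castSucc]
      linear_combination F4add (∑ i, w i)
    rw [hc]

lemma Afun_injective (hn1 : (n : F4) = 1) (hn : 5 ≤ n) (σ : Equiv.Perm (Fin (n+1)))
    (hσ : ∀ w, Afun σ w = w) : σ = 1 := by
  have key : ∀ a b : Fin n, a ≠ b →
      σ a.castSucc = a.castSucc ∨ σ a.castSucc = b.castSucc := by
    intro a b hab
    have hS : ∑ i, pvec a b i = 0 := by
      simp only [pvec, Finset.sum_add_distrib]
      rw [Finset.sum_ite_eq' univ a fun _ => (1:F4), Finset.sum_ite_eq' univ b fun _ => (1:F4)]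
      simp only [Finset.mem_univ, if_true]
      exact F4add 1
    have hL : Lfun (pvec a b) = pvec a.castSucc b.castSucc := by
      funext l
      rcases eq_or_ne l (Fin.last n) with rfl | hl
      · rw [Lfun_last]
        simp [pvec, if_neg (Fin.castSucc_lt_last a).ne', if_neg (Fin.castSucc_lt_last b).ne']
      · obtain ⟨k, rfl⟩ := Fin.exists_castSucc_eq.mpr hl
        rw [Lfun_castSucc, hS, add_zero]
        simp only [pvec]
        rw [if_congr Fin.castSucc_inj rfl rfl, if_congr Fin.castSucc_inj rfl rfl]
    have heq := hσ (pvec a b)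
    rw [Afun, hS, zero_smul, add_zero, hL] at heq
    have hcomp : (fun l => pvec a.castSucc b.castSucc (σ⁻¹ l))
        = pvec (σ a.castSucc) (σ b.castSucc) := by
      funext l
      simp only [pvec]
      have e1 : (σ⁻¹ l = a.castSucc) ↔ (l = σ a.castSucc) := by
        constructor
        · intro h; rw [← h]; simp
        · intro h; rw [h]; simp
      have e2 : (σ⁻¹ l = b.castSucc) ↔ (l = σ b.castSucc) := by
        constructor
        · intro h; rw [← h]; simp
        · intro h; rw [h]; simp
      rw [if_congr e1 rfl rfl, if_congr e2 rfl rfl]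
    rw [hcomp] at heq
    have hPQ : σ a.castSucc ≠ σ b.castSucc := by
      intro h
      exact hab (Fin.castSucc_inj.mp (σ.injective h))
    rcases eq_or_ne (σ a.castSucc) (Fin.last n) with hP | hP
    · exfalso
      have hQ : σ b.castSucc ≠ Fin.last n := fun h => hPQ (hP.trans h.symm)
      rw [hP, pvec_comm, Rfun_pvec_last hQ] at heq
      obtain ⟨k, h1, h2, h3⟩ := exists_not_mem3 hn ((σ b.castSucc).castPred hQ) a b
      have hk := congrFun heq k
      simp only [wvec, pvec, if_neg h1, if_neg h2, if_neg h3, zero_add, add_zero] at hk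
      exact one_ne_zero hk
    rcases eq_or_ne (σ b.castSucc) (Fin.last n) with hQ | hQ
    · exfalso
      rw [hQ, Rfun_pvec_last hP] at heq
      obtain ⟨k, h1, h2, h3⟩ := exists_not_mem3 hn ((σ a.castSucc).castPred hP) a b
      have hk := congrFun heq k
      simp only [wvec, pvec, if_neg h1, if_neg h2, if_neg h3, zero_add, add_zero] at hk
      exact one_ne_zero hk
    · rw [Rfun_pvec_ne hP hQ] at heq
      have hPQ' := castPred_ne hPQ hP hQ
      have hk := congrFun heq ((σ a.castSucc).castPred hP)
      rcases eq_or_ne ((σ a.castSucc).castPred hP) a with h | h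
      · left; rw [← Fin.castSucc_castPred (σ a.castSucc) hP, h]
      rcases eq_or_ne ((σ a.castSucc).castPred hP) b with h' | h'
      · right; rw [← Fin.castSucc_castPred (σ a.castSucc) hP, h']
      exfalso
      simp only [pvec, if_pos rfl, if_neg hPQ', if_neg h, if_neg h', add_zero, zero_add] at hk
      exact one_ne_zero hk
  have fix : ∀ a : Fin n, σ a.castSucc = a.castSucc := by
    intro a
    obtain ⟨b, hba, -, -⟩ := exists_not_mem3 hn a a a
    obtain ⟨c, hca, hcb, -⟩ := exists_not_mem3 hn a b b
    rcases key a b (Ne.symm hba) with h | h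
    · exact h
    rcases key a c (Ne.symm hca) with h' | h'
    · exact h'
    exfalso
    exact hcb (Fin.castSucc_inj.mp (h'.symm.trans h))
  have flast : σ (Fin.last n) = Fin.last n := by
    by_contra h
    obtain ⟨k, hk⟩ := Fin.exists_castSucc_eq.mpr h
    have h2 : σ (Fin.last n) = σ k.castSucc := by rw [fix k, hk]
    exact (Fin.castSucc_lt_last k).ne' (σ.injective h2)
  apply Equiv.ext
  intro l
  rcases eq_or_ne l (Fin.last n) with rfl | hl
  · simpa using flast
  · obtain ⟨k, rfl⟩ := Fin.exists_castSucc_eq.mpr hl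
    simpa using fix k

end partA3

section partA4
open Finset
variable {n : ℕ}

noncomputable def AfunLin (σ : Equiv.Perm (Fin (n+1))) :
    (Fin n → F4) →ₗ[F4] (Fin n → F4) where
  toFun := Afun σ
  map_add' := Afun_add σ
  map_smul' := Afun_smul σ

lemma AfunLin_apply (σ : Equiv.Perm (Fin (n+1))) (w : Fin n → F4) :
    AfunLin σ w = Afun σ w := rfl

noncomputable def psiEquiv (hn1 : (n : F4) = 1) (σ : Equiv.Perm (Fin (n+1))) :
    (Fin n → F4) ≃ₗ[F4] (Fin n → F4) :=
  LinearEquiv.ofLinear (AfunLin σ) (AfunLin σ⁻¹)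
    (by
      apply LinearMap.ext
      intro w
      simp only [LinearMap.comp_apply, AfunLin_apply, LinearMap.id_apply]
      rw [Afun_mul hn1, mul_inv_cancel, Afun_one hn1])
    (by
      apply LinearMap.ext
      intro w
      simp only [LinearMap.comp_apply, AfunLin_apply, LinearMap.id_apply]
      rw [Afun_mul hn1, inv_mul_cancel, Afun_one hn1])

lemma psiEquiv_apply (hn1 : (n : F4) = 1) (σ : Equiv.Perm (Fin (n+1))) (w : Fin n → F4) :
    psiEquiv hn1 σ w = Afun σ w := rfl

noncomputable def psiHom (hn1 : (n : F4) = 1) :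
    Equiv.Perm (Fin (n+1)) →* ((Fin n → F4) ≃ₗ[F4] (Fin n → F4)) :=
  MonoidHom.mk' (fun σ => psiEquiv hn1 σ) (by
    intro σ ρ
    apply LinearEquiv.ext
    intro w
    show Afun (σ * ρ) w = psiEquiv hn1 σ (psiEquiv hn1 ρ w)
    rw [psiEquiv_apply, psiEquiv_apply, Afun_mul hn1])

lemma partA (hn : 5 ≤ n) (hodd : Odd n) :
    ∃ ψ : Equiv.Perm (Fin (n + 1)) →* ((Fin n → F4) ≃ₗ[F4] (Fin n → F4)),
      Function.Injective ψ ∧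
      ∀ τ : Equiv.Perm (Fin (n + 1)), τ.IsSwap →
        ∃ v : Fin n → F4, v ≠ 0 ∧ hermForm n v v = 0 ∧
          ∀ w, (ψ τ) w = w + hermForm n w v • v := by
  have hn1 : (n : F4) = 1 := F4cast_odd hodd
  refine ⟨psiHom hn1, ?_, ?_⟩
  · rw [injective_iff_map_eq_one]
    intro σ hσ
    apply Afun_injective hn1 hn
    intro w
    have h2 : psiHom hn1 σ w = w := by rw [hσ]; rfl
    exact h2
  · rintro τ ⟨p, q, hpq, rfl⟩
    obtain ⟨v, h1, h2, h3⟩ := Afun_swap_transvection hn1 hn hpq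
    exact ⟨v, h1, h2, fun w => h3 w⟩

end partA4

section partB
open Finset
variable {n : ℕ}

lemma herm_exists_ne {v : Fin n → F4} (hv : v ≠ 0) :
    ∃ w : Fin n → F4, hermForm n w v ≠ 0 := by
  obtain ⟨i, hi⟩ := Function.ne_iff.mp hv
  refine ⟨Pi.single i 1, ?_⟩
  rw [herm_single_left]
  exact pow_ne_zero _ hi

lemma same_line {v : Fin n → F4} {μ : F4} (hμ : μ ≠ 0) (w : Fin n → F4) :
    w + hermForm n w (μ • v) • (μ • v) = w + hermForm n w v • v := by
  rw [herm_smul_right, smul_smul, mul_comm, ← mul_assoc, ← pow_succ']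
  rw [F4pow3 hμ, one_mul]

lemma trans_invol {v : Fin n → F4} (hvv : hermForm n v v = 0) (w : Fin n → F4) :
    (w + hermForm n w v • v) + hermForm n (w + hermForm n w v • v) v • v = w := by
  rw [herm_add_left, herm_smul_left, hvv, mul_zero, add_zero]
  funext i
  simp only [Pi.add_apply, Pi.smul_apply, smul_eq_mul]
  linear_combination (hermForm n w v * v i) * F4two

lemma comm_of_orth {v v' : Fin n → F4} (h : hermForm n v' v = 0) (h' : hermForm n v v' = 0)
    (w : Fin n → F4) :
    (w + hermForm n w v' • v') + hermForm n (w + hermForm n w v' • v') v • v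
      = (w + hermForm n w v • v) + hermForm n (w + hermForm n w v • v) v' • v' := by
  rw [herm_add_left, herm_smul_left, herm_add_left, herm_smul_left, h, h', mul_zero, mul_zero,
    add_zero, add_zero]
  funext i
  simp only [Pi.add_apply, Pi.smul_apply, smul_eq_mul]
  ring

lemma orth_or_line {v v' : Fin n → F4} (hv : v ≠ 0)
    (hcomm : ∀ w : Fin n → F4,
      (w + hermForm n w v' • v') + hermForm n (w + hermForm n w v' • v') v • v
        = (w + hermForm n w v • v) + hermForm n (w + hermForm n w v • v) v' • v') :
    hermForm n v v' = 0 ∨ ∃ μ : F4, μ ≠ 0 ∧ v' = μ • v := by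
  by_cases hc : hermForm n v v' = 0
  · exact Or.inl hc
  right
  obtain ⟨w0, hw0⟩ := herm_exists_ne hv
  have h := hcomm w0
  rw [herm_add_left, herm_smul_left, herm_add_left, herm_smul_left] at h
  set B := hermForm n w0 v with hB
  set B' := hermForm n w0 v' with hB'
  set C := hermForm n v v' with hC
  set C' := hermForm n v' v with hC'
  have hBC : B * C ≠ 0 := mul_ne_zero hw0 hc
  have key : ∀ i, (B' * C') * v i = (B * C) * v' i := by
    intro i
    have hi := congrFun h i
    simp only [Pi.add_apply, Pi.smul_apply, smul_eq_mul] at hi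
    linear_combination hi
  refine ⟨(B * C)⁻¹ * (B' * C'), ?_, ?_⟩
  · intro hz
    have hB'C' : B' * C' = 0 := by
      rcases mul_eq_zero.mp hz with h1 | h1
      · exact absurd h1 (inv_ne_zero hBC)
      · exact h1
    have hv'0 : v' = 0 := by
      funext i
      have hk := key i
      rw [hB'C', zero_mul] at hk
      rcases mul_eq_zero.mp hk.symm with h1 | h1
      · exact absurd h1 hBC
      · simpa using h1
    exact absurd (by rw [hC, hv'0, herm_zero_right]) hc
  · funext i
    have := key i
    simp only [Pi.smul_apply, smul_eq_mul]
    rw [mul_assoc, this, ← mul_assoc, inv_mul_cancel₀ hBC, one_mul]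

end partB

section partBmain
open Finset
variable {n : ℕ}

lemma mulap (e f : (Fin n → F4) ≃ₗ[F4] (Fin n → F4)) (x : Fin n → F4) :
    (e * f) x = e (f x) := rfl

lemma partB (hn : 5 ≤ n) (hodd : Odd n) :
    ¬ (∃ ψ : Equiv.Perm (Fin (n + 2)) →* ((Fin n → F4) ≃ₗ[F4] (Fin n → F4)),
      Function.Injective ψ ∧
      ∀ τ : Equiv.Perm (Fin (n + 2)), τ.IsSwap →
        ∃ v : Fin n → F4, v ≠ 0 ∧ hermForm n v v = 0 ∧
          ∀ w, (ψ τ) w = w + hermForm n w v • v) := by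
  rintro ⟨ψ, hinj, hsw⟩
  set τ : Fin (n+1) → Equiv.Perm (Fin (n+2)) := fun k => Equiv.swap 0 k.succ with hτdef
  have hτsw : ∀ k, (τ k).IsSwap := fun k => ⟨0, k.succ, (Fin.succ_ne_zero k).symm, rfl⟩
  choose u hu0 hus hform using fun k => hsw (τ k) (hτsw k)
  have hinvol : ∀ k w, ψ (τ k) (ψ (τ k) w) = w := by
    intro k w
    rw [hform, hform]
    exact trans_invol (hus k) w
  -- step 1 : non-orthogonality of u 0 with u k
  have nonorth : ∀ k : Fin (n+1), k ≠ 0 → hermForm n (u 0) (u k) ≠ 0 := by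
    intro k hk hzero
    have hzero' : hermForm n (u k) (u 0) = 0 := by rw [herm_conj, hzero]; ring
    have hcom : ∀ w, ψ (τ 0) (ψ (τ k) w) = ψ (τ k) (ψ (τ 0) w) := by
      intro w
      rw [hform, hform, hform, hform]
      exact comm_of_orth hzero' hzero w
    have hsq : ψ ((τ 0 * τ k)^2) = 1 := by
      apply LinearEquiv.ext
      intro w
      rw [sq, map_mul, map_mul, mulap, mulap, mulap, hcom, hinvol, hinvol]
      rfl
    have h2 : (τ 0 * τ k)^2 = 1 := hinj (by rw [hsq, map_one])
    have e0 : (τ 0 * τ k) 0 = k.succ := by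
      simp only [hτdef, Equiv.Perm.mul_apply]
      rw [Equiv.swap_apply_left,
        Equiv.swap_apply_of_ne_of_ne (Fin.succ_ne_zero k)
          (fun h => hk (Fin.succ_inj.mp h))]
    have e1 : (τ 0 * τ k) k.succ = (0 : Fin (n+1)).succ := by
      simp only [hτdef, Equiv.Perm.mul_apply]
      rw [Equiv.swap_apply_right, Equiv.swap_apply_left]
    have e2 : ((τ 0 * τ k)^2) 0 = (0 : Fin (n+1)).succ := by
      rw [sq, Equiv.Perm.mul_apply, e0, e1]
    rw [h2] at e2
    simp only [Equiv.Perm.one_apply] at e2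
    exact Fin.succ_ne_zero 0 e2.symm
  -- braid formula
  have braid : ∀ k : Fin (n+1), ∀ w,
      ψ (τ 0 * τ k * τ 0) w
        = w + hermForm n w (u k + hermForm n (u k) (u 0) • u 0) •
            (u k + hermForm n (u k) (u 0) • u 0) := by
    intro k w
    have hc2 : hermForm n (u 0) (u k) = (hermForm n (u k) (u 0))^2 := herm_conj _ _
    rw [map_mul, map_mul, mulap, mulap, hform, hform, hform]
    simp only [herm_add_left, herm_smul_left, herm_add_right, herm_smul_right, hus, hc2]
    funext i
    simp only [Pi.add_apply, Pi.smul_apply, smul_eq_mul]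
    ring_nf
    linear_combination (hermForm n w (u 0) * u 0 i) * F4two
  -- step 2 : the product relation
  have step2 : ∀ k j : Fin (n+1), k ≠ 0 → j ≠ 0 → j ≠ k →
      hermForm n (u k) (u j) = hermForm n (u k) (u 0) * hermForm n (u 0) (u j) := by
    intro k j hk hj hjk
    set c := hermForm n (u k) (u 0) with hcdef
    have hcne : c ≠ 0 := by
      rw [hcdef, herm_conj]
      exact pow_ne_zero _ (nonorth k hk)
    set z := u k + c • u 0 with hzdef
    have hzne : z ≠ 0 := by
      intro h0
      have hz0 : hermForm n z (u 0) = 0 := by rw [h0]; exact herm_zero_left _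
      rw [hzdef, herm_add_left, herm_smul_left, hus, mul_zero, add_zero] at hz0
      exact hcne hz0
    have hfix : ∀ x : Fin (n+2), x ≠ (0:Fin (n+1)).succ → x ≠ k.succ →
        (τ 0 * τ k * τ 0) x = x := by
      intro x h1 hks
      rcases eq_or_ne x 0 with rfl | hx0
      · simp only [hτdef, Equiv.Perm.mul_apply]
        rw [Equiv.swap_apply_left,
          Equiv.swap_apply_of_ne_of_ne (Fin.succ_ne_zero 0)
            (fun h => hk (Fin.succ_inj.mp h).symm),
          Equiv.swap_apply_right]
      · simp only [hτdef, Equiv.Perm.mul_apply]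
        rw [Equiv.swap_apply_of_ne_of_ne hx0 h1,
          Equiv.swap_apply_of_ne_of_ne hx0 hks,
          Equiv.swap_apply_of_ne_of_ne hx0 h1]
    have hdisj : (τ 0 * τ k * τ 0).Disjoint (τ j) := by
      intro x
      rcases eq_or_ne x 0 with rfl | hx0
      · exact Or.inl (hfix 0 (Fin.succ_ne_zero 0).symm (Fin.succ_ne_zero k).symm)
      rcases eq_or_ne x j.succ with rfl | hxj
      · refine Or.inl (hfix j.succ (fun h => hj (Fin.succ_inj.mp h)) (fun h => hjk (Fin.succ_inj.mp h)))
      · exact Or.inr (Equiv.swap_apply_of_ne_of_ne hx0 hxj)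
    have hcomm' : (τ 0 * τ k * τ 0) * τ j = τ j * (τ 0 * τ k * τ 0) := hdisj.commute.eq
    have horth := orth_or_line (v := z) (v' := u j) hzne (by
      intro w
      have h1 : ψ (τ 0 * τ k * τ 0) (ψ (τ j) w) = ψ (τ j) (ψ (τ 0 * τ k * τ 0) w) := by
        rw [← mulap, ← mulap, ← map_mul, ← map_mul, hcomm']
      rw [braid k, hform, braid k, hform] at h1
      exact h1)
    rcases horth with horth | ⟨μ, hμ, hline⟩
    · rw [hzdef, herm_add_left, herm_smul_left] at horth
      linear_combination horth - F4add (c * hermForm n (u 0) (u j))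
    · exfalso
      have hψeq : ψ (τ j) = ψ (τ 0 * τ k * τ 0) := by
        apply LinearEquiv.ext
        intro w
        rw [hform, braid k, hline]
        exact same_line hμ w
      have heq := hinj hψeq
      have h0 : (τ 0 * τ k * τ 0) 0 = 0 :=
        hfix 0 (Fin.succ_ne_zero 0).symm (Fin.succ_ne_zero k).symm
      have hj0 : τ j 0 = j.succ := Equiv.swap_apply_left _ _
      rw [heq, h0] at hj0
      exact Fin.succ_ne_zero j hj0.symm
  -- scaled family with Gram matrix J - I
  set W : Fin (n+1) → (Fin n → F4) :=
    fun k => if k = 0 then u 0 else hermForm n (u 0) (u k) • u k with hWdef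
  have hdiag : ∀ k, hermForm n (W k) (W k) = 0 := by
    intro k
    rcases eq_or_ne k 0 with rfl | hk
    · simp only [hWdef, if_pos rfl]
      exact hus 0
    · simp only [hWdef, if_neg hk]
      rw [herm_smul_left, herm_smul_right, hus, mul_zero, mul_zero]
  have hoff : ∀ k l, k ≠ l → hermForm n (W k) (W l) = 1 := by
    intro k l hkl
    rcases eq_or_ne k 0 with rfl | hk
    · have hl : l ≠ 0 := hkl.symm
      simp only [hWdef, if_pos rfl, if_neg hl]
      rw [herm_smul_right, ← pow_succ]
      exact F4pow3 (nonorth l hl)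
    · rcases eq_or_ne l 0 with rfl | hl
      · simp only [hWdef, if_pos rfl, if_neg hk]
        rw [herm_smul_left, herm_conj, ← pow_succ]
        exact F4pow3 (by rw [herm_conj]; exact pow_ne_zero _ (nonorth k hk))
      · simp only [hWdef, if_neg hk, if_neg hl]
        rw [herm_smul_left, herm_smul_right, step2 k l hk hl (Ne.symm hkl),
          herm_conj (u 0) (u k)]
        have hak := F4pow3 (nonorth k hk)
        have hal := F4pow3 (nonorth l hl)
        rw [show hermForm n (u 0) (u k) * (hermForm n (u 0) (u l) ^ 2 *
            (hermForm n (u 0) (u k) ^ 2 * hermForm n (u 0) (u l)))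
          = (hermForm n (u 0) (u k))^3 * (hermForm n (u 0) (u l))^3 from by ring, hak, hal,
          one_mul]
  have hindep : LinearIndependent F4 W := by
    rw [Fintype.linearIndependent_iff]
    intro g hg
    have hall : ∀ l, g l = ∑ k, g k := by
      intro l
      have h0 : hermForm n (∑ k, g k • W k) (W l) = 0 := by
        rw [hg, herm_zero_left]
      rw [herm_sum_left] at h0
      have hsplit : ∀ k, g k * hermForm n (W k) (W l) = g k + (if k = l then g k else 0) := by
        intro k
        rcases eq_or_ne k l with rfl | h
        · rw [hdiag, mul_zero, if_pos rfl]
          exact (F4add _).symm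
        · rw [hoff k l h, mul_one, if_neg h, add_zero]
      rw [Finset.sum_congr rfl (fun k _ => hsplit k), Finset.sum_add_distrib,
        Finset.sum_ite_eq' univ l g] at h0
      simp only [Finset.mem_univ, if_true] at h0
      linear_combination h0 - F4add (∑ k, g k)
    have hS : ∑ k, g k = 0 := by
      have h1 : ∑ k, g k = ∑ _k : Fin (n+1), ∑ k, g k :=
        Finset.sum_congr rfl (fun l _ => hall l)
      rw [Finset.sum_const, card_univ, Fintype.card_fin, nsmul_eq_mul] at h1
      have h2 : ((n+1 : ℕ) : F4) = 0 := F4cast_even (Odd.add_one hodd)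
      rw [h2, zero_mul] at h1
      exact h1
    intro l
    rw [hall l, hS]
  have hle := hindep.fintype_card_le_finrank
  rw [Fintype.card_fin] at hle
  have hfr : Module.finrank F4 (Fin n → F4) = n := by simp [Module.finrank_pi]
  omega


/-- `φ(U_n(2)) = n + 1` for odd `n ≥ 5`: the symmetric group `S (n+1)`
embeds into `U_n(2)` with all transpositions going to unitary transvections (in nonzero
singular vectors), while `S (n+2)` does not. -/
theorem phi_unitary_odd (n : ℕ) (hn : 5 ≤ n) (hodd : Odd n) :
    (∃ ψ : Equiv.Perm (Fin (n + 1)) →* ((Fin n → F4) ≃ₗ[F4] (Fin n → F4)),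
      Function.Injective ψ ∧
      ∀ τ : Equiv.Perm (Fin (n + 1)), τ.IsSwap →
        ∃ v : Fin n → F4, v ≠ 0 ∧ hermForm n v v = 0 ∧
          ∀ w, (ψ τ) w = w + hermForm n w v • v) ∧
    ¬ (∃ ψ : Equiv.Perm (Fin (n + 2)) →* ((Fin n → F4) ≃ₗ[F4] (Fin n → F4)),
      Function.Injective ψ ∧
      ∀ τ : Equiv.Perm (Fin (n + 2)), τ.IsSwap →
        ∃ v : Fin n → F4, v ≠ 0 ∧ hermForm n v v = 0 ∧
          ∀ w, (ψ τ) w = w + hermForm n w v • v) :=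
  ⟨partA hn hodd, partB hn hodd⟩
end partBmain
end
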